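/- arXiv:2004.09962 — 10 statements merged into one kernel-verified Lean document; each statement's English description precedes it below -/
import Mathlib

section
/- The set of isometry classes of nonempty compact totally disconnected metric spaces that admit a loose embedding into the real line is residual (comeager) in the space M_0, where M_0 is the subset of the Gromov–Hausdorff space consisting of classes of totally disconnected compact metric spaces, equipped with the subspace topology. -/
open Set Metric GromovHausdorff

namespace LooseAux

/-- Solution set of a nondegenerate linear equation is finite. -/
lemma finite_lin {A B : ℝ} (hB : B ≠ 0) : {s : ℝ | A + s * B = 0}.Finite := by
  apply Set.Subsingleton.finite
  intro x hx y hy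
  have hx' : A + x * B = 0 := hx
  have hy' : A + y * B = 0 := hy
  have : x * B = y * B := by linarith
  exact mul_right_cancel₀ hB this

lemma pow3_strictMono : StrictMono (fun n : ℕ => (3:ℝ)^n) :=
  fun _ _ h => pow_lt_pow_right₀ (by norm_num) h

lemma pow3_inj : Function.Injective (fun n : ℕ => (3:ℝ)^n) := pow3_strictMono.injective

lemma pow3_aux {i j k l : ℕ} (hji : j < i) (hlk : l < k)
    (h : (3:ℝ)^i - 3^j = 3^k - 3^l) : i = k ∧ j = l := by
  have key : ∀ a b c d : ℕ, b < a → d < c → a < c → ¬ ((3:ℝ)^a - 3^b = 3^c - 3^d) := by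
    intro a b c d hba hdc hac heq
    have h1 : (3:ℝ)^a - 3^b < 3^a := by
      have : (0:ℝ) < 3^b := by positivity
      linarith
    have h2 : (3:ℝ)^a ≤ 3^(c-1) := by
      apply pow_le_pow_right₀ (by norm_num); omega
    have h3' : (3:ℝ)^d ≤ 3^(c-1) := by
      apply pow_le_pow_right₀ (by norm_num); omega
    have h4 : (3:ℝ)^c = 3 * 3^(c-1) := by
      rw [← pow_succ']; congr 1; omega
    have : (0:ℝ) < 3^(c-1) := by positivity
    linarith
  have hik : i = k := by
    rcases lt_trichotomy i k with hc | hc | hc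
    · exact absurd h (key i j k l hji hlk hc)
    · exact hc
    · exact absurd h.symm (key k l i j hlk hji hc)
  refine ⟨hik, pow3_inj ?_⟩
  subst hik
  simp only
  linarith

lemma pow3_sub_eq {i j k l : ℕ} (hij : i ≠ j) (hkl : k ≠ l)
    (h : (3:ℝ)^i - 3^j = 3^k - 3^l) : i = k ∧ j = l := by
  rcases lt_or_gt_of_ne hij with hij' | hij'
  · -- i < j : LHS < 0
    have hlhs : (3:ℝ)^i - 3^j < 0 := by
      have := pow3_strictMono hij'; simpa [sub_neg] using this
    rcases lt_or_gt_of_ne hkl with hkl' | hkl'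
    · -- k < l : RHS < 0; negate and use aux
      have h' : (3:ℝ)^j - 3^i = 3^l - 3^k := by linarith
      have := pow3_aux hij' hkl' h'
      exact ⟨this.2, this.1⟩
    · -- k > l: RHS > 0 contradiction
      have : (3:ℝ)^k - 3^l > 0 := by
        have := pow3_strictMono hkl'; simpa [sub_pos] using this
      linarith
  · rcases lt_or_gt_of_ne hkl with hkl' | hkl'
    · have h1 : (3:ℝ)^i - 3^j > 0 := by
        have := pow3_strictMono hij'; simpa [sub_pos] using this
      have h2 : (3:ℝ)^k - 3^l < 0 := by
        have := pow3_strictMono hkl'; simpa [sub_neg] using this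
      linarith
    · exact pow3_aux hij' hkl' h

/-- sums of two distinct powers of three determine the unordered pair of exponents. -/
lemma pow3_add_eq {i j k l : ℕ} (hij : i ≠ j) (hkl : k ≠ l)
    (h : (3:ℝ)^i + 3^j = 3^k + 3^l) : (i = k ∧ j = l) ∨ (i = l ∧ j = k) := by
  by_cases hik : i = k
  · subst hik
    have : (3:ℝ)^j = 3^l := by linarith
    exact Or.inl ⟨rfl, pow3_inj this⟩
  · have h' : (3:ℝ)^i - 3^l = 3^k - 3^j := by linarith
    by_cases hil : i = l
    · subst hil
      have : (3:ℝ)^k = 3^j := by linarith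
      exact Or.inr ⟨rfl, (pow3_inj this).symm⟩
    · by_cases hkj : k = j
      · subst hkj
        have : (3:ℝ)^i = 3^l := by linarith
        exact absurd (pow3_inj this) hil
      · exact absurd (pow3_sub_eq hil hkj h').1 hik

/-- Pick a point of an interval avoiding a finite set. -/
lemma exists_avoid {B : Set ℝ} (hB : B.Finite) {r : ℝ} (hr : 0 < r) :
    ∃ s : ℝ, s ∈ Ioo 0 r ∧ s ∉ B := by
  have : (Ioo (0:ℝ) r \ B).Infinite := (Set.Ioo_infinite hr).diff hB
  obtain ⟨s, hs⟩ := this.nonempty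
  exact ⟨s, hs.1, hs.2⟩

/-- Generic values lemma: values near prescribed targets with all pairwise
distances distinct. -/
lemma exists_generic_values (m : ℕ) (t : Fin m → ℝ) {ε : ℝ} (hε : 0 < ε) :
    ∃ a : Fin m → ℝ, (∀ i, |a i - t i| ≤ ε) ∧ (∀ i j, i ≠ j → a i ≠ a j) ∧
      (∀ i j k l : Fin m, i ≠ j → k ≠ l → ¬(i = k ∧ j = l) → ¬(i = l ∧ j = k) →
        |a i - a j| ≠ |a k - a l|) := by
  classical
  set c : Fin m → ℝ := fun i => (3:ℝ)^(i : ℕ) with hc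
  have hcinj : ∀ i j : Fin m, i ≠ j → c i - c j ≠ 0 := by
    intro i j hij h
    exact hij (Fin.val_injective (pow3_inj (by simp only [hc] at h ⊢; linarith)))
  have hcsub : ∀ i j k l : Fin m, i ≠ j → k ≠ l → ¬(i = k ∧ j = l) →
      (c i - c j) - (c k - c l) ≠ 0 := by
    intro i j k l hij hkl hne h
    have : (3:ℝ)^(i:ℕ) - 3^(j:ℕ) = 3^(k:ℕ) - 3^(l:ℕ) := by
      simp only [hc] at h; linarith
    have := pow3_sub_eq (fun hv => hij (Fin.val_injective hv))
      (fun hv => hkl (Fin.val_injective hv)) this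
    exact hne ⟨Fin.val_injective this.1, Fin.val_injective this.2⟩
  have hcadd : ∀ i j k l : Fin m, i ≠ j → k ≠ l → ¬(i = l ∧ j = k) →
      (c i - c j) + (c k - c l) ≠ 0 := by
    intro i j k l hij hkl hne2 h
    have heq : (3:ℝ)^(i:ℕ) - 3^(j:ℕ) = 3^(l:ℕ) - 3^(k:ℕ) := by
      simp only [hc] at h; linarith
    have := pow3_sub_eq (fun hv => hij (Fin.val_injective hv))
      (fun hv => hkl (Fin.val_injective hv).symm) heq
    exact hne2 ⟨Fin.val_injective this.1, Fin.val_injective this.2⟩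
  -- the bad set
  let B : Set ℝ :=
    (⋃ (p : Fin m × Fin m), {s | p.1 ≠ p.2 ∧ (t p.1 - t p.2) + s * (c p.1 - c p.2) = 0}) ∪
    (⋃ (p : Fin m × Fin m × Fin m × Fin m),
      {s | (p.1 ≠ p.2.1 ∧ p.2.2.1 ≠ p.2.2.2 ∧ ¬(p.1 = p.2.2.1 ∧ p.2.1 = p.2.2.2)) ∧
        ((t p.1 - t p.2.1) - (t p.2.2.1 - t p.2.2.2)) +
          s * ((c p.1 - c p.2.1) - (c p.2.2.1 - c p.2.2.2)) = 0}) ∪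
    (⋃ (p : Fin m × Fin m × Fin m × Fin m),
      {s | (p.1 ≠ p.2.1 ∧ p.2.2.1 ≠ p.2.2.2 ∧ ¬(p.1 = p.2.2.2 ∧ p.2.1 = p.2.2.1)) ∧
        ((t p.1 - t p.2.1) + (t p.2.2.1 - t p.2.2.2)) +
          s * ((c p.1 - c p.2.1) + (c p.2.2.1 - c p.2.2.2)) = 0})
  have hBfin : B.Finite := by
    refine (Set.Finite.union (Set.Finite.union ?_ ?_) ?_)
    · apply Set.finite_iUnion
      rintro ⟨i, j⟩
      by_cases hij : i = j
      · convert Set.finite_empty using 1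
        ext s; simp [hij]
      · exact (finite_lin (hcinj i j hij)).subset (fun s hs => hs.2)
    · apply Set.finite_iUnion
      rintro ⟨i, j, k, l⟩
      by_cases hcond : i ≠ j ∧ k ≠ l ∧ ¬(i = k ∧ j = l)
      · exact (finite_lin (hcsub i j k l hcond.1 hcond.2.1 hcond.2.2)).subset
          (fun s hs => hs.2)
      · convert Set.finite_empty using 1
        ext s; simp only [mem_setOf_eq, mem_empty_iff_false, iff_false]
        tauto
    · apply Set.finite_iUnion
      rintro ⟨i, j, k, l⟩
      by_cases hcond : i ≠ j ∧ k ≠ l ∧ ¬(i = l ∧ j = k)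
      · exact (finite_lin (hcadd i j k l hcond.1 hcond.2.1 hcond.2.2)).subset
          (fun s hs => hs.2)
      · convert Set.finite_empty using 1
        ext s; simp only [mem_setOf_eq, mem_empty_iff_false, iff_false]
        tauto
  have h3m : (0:ℝ) < ε / (3:ℝ)^m := by positivity
  obtain ⟨s, hs, hsB⟩ := exists_avoid hBfin h3m
  refine ⟨fun i => t i + s * c i, ?_, ?_, ?_⟩
  · intro i
    dsimp only
    have h1 : (0:ℝ) < c i := by positivity
    have h2 : c i ≤ 3^m := by
      simp only [hc]
      exact pow_le_pow_right₀ (by norm_num) (le_of_lt i.isLt)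
    have : s * c i ≤ (ε / 3^m) * 3^m := by
      apply mul_le_mul (le_of_lt hs.2) h2 (le_of_lt h1) (le_of_lt h3m)
    have h3 : (ε / (3:ℝ)^m) * 3^m = ε := by field_simp
    have h4 : 0 ≤ s * c i := le_of_lt (mul_pos hs.1 h1)
    rw [abs_of_nonneg (by linarith)]
    linarith
  · intro i j hij heq
    dsimp only at heq
    apply hsB
    left; left
    refine mem_iUnion.2 ⟨(i, j), hij, ?_⟩
    dsimp only
    linarith
  · intro i j k l hij hkl hne1 hne2 heq
    dsimp only at heq
    rcases abs_eq_abs.1 heq with h | h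
    · apply hsB
      left; right
      refine mem_iUnion.2 ⟨(i, j, k, l), ⟨hij, hkl, hne1⟩, ?_⟩
      dsimp only
      linarith
    · apply hsB
      right
      refine mem_iUnion.2 ⟨(i, j, k, l), ⟨hij, hkl, hne2⟩, ?_⟩
      dsimp only
      linarith

/-- Every compact totally disconnected metric space admits finite clopen partitions
of arbitrarily small mesh. -/
lemma exists_clopen_partition (X : Type*) [MetricSpace X] [CompactSpace X]
    [TotallyDisconnectedSpace X] {ε : ℝ} (hε : 0 < ε) :
    ∃ (m : ℕ) (C : Fin m → Set X), (∀ i, IsClopen (C i)) ∧ (∀ x : X, ∃ i, x ∈ C i) ∧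
      (∀ i j, i ≠ j → Disjoint (C i) (C j)) ∧
      (∀ i, ∀ x ∈ C i, ∀ y ∈ C i, dist x y < ε) := by
  classical
  have hhalf : 0 < ε / 2 := by linarith
  have hV : ∀ x : X, ∃ V : Set X, IsClopen V ∧ x ∈ V ∧ V ⊆ ball x (ε / 2) := fun x =>
    compact_exists_isClopen_in_isOpen isOpen_ball (mem_ball_self hhalf)
  choose V hVclopen hVmem hVsub using hV
  obtain ⟨t, ht⟩ := isCompact_univ.elim_finite_subcover V (fun x => (hVclopen x).isOpen)
    (fun x _ => mem_iUnion.2 ⟨x, hVmem x⟩)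
  set m := Fintype.card {x // x ∈ t} with hm
  have e : Fin m ≃ {x // x ∈ t} := (Fintype.equivFin {x // x ∈ t}).symm
  set k : Fin m → X := fun i => (e i : X) with hk
  set W : ℕ → Set X := fun n => if h : n < m then V (k ⟨n, h⟩) else ∅ with hW
  have hWclopen : ∀ n, IsClopen (W n) := by
    intro n
    by_cases h : n < m
    · simp only [hW, dif_pos h]; exact hVclopen _
    · simp only [hW, dif_neg h]; exact isClopen_empty
  have hpartial : ∀ n, IsClopen (partialSups W n) := by
    intro n
    induction n with
    | zero => simpa [partialSups_zero] using hWclopen 0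
    | succ n ih =>
      rw [show n + 1 = Order.succ n from rfl, partialSups_succ]
      exact ih.union (hWclopen (n + 1))
  refine ⟨m, fun i => disjointed W i, ?_, ?_, ?_, ?_⟩
  · intro i
    dsimp only
    rcases Nat.eq_zero_or_eq_succ_pred (i : ℕ) with h0 | hsucc
    · rw [h0, disjointed_zero]; exact hWclopen 0
    · rw [hsucc, Nat.succ_eq_add_one, disjointed_add_one]
      exact (hWclopen _).diff (hpartial _)
  · intro x
    have hx : x ∈ ⋃ n, W n := by
      have := ht (mem_univ x)
      rcases mem_iUnion₂.1 this with ⟨y, hyt, hyV⟩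
      refine mem_iUnion.2 ⟨(e.symm ⟨y, hyt⟩ : Fin m), ?_⟩
      have hlt : ((e.symm ⟨y, hyt⟩ : Fin m) : ℕ) < m := (e.symm ⟨y, hyt⟩).isLt
      simp only [hW, dif_pos hlt]
      have : k ⟨((e.symm ⟨y, hyt⟩ : Fin m) : ℕ), hlt⟩ = y := by
        simp only [hk]
        congr 1
        rw [show (⟨((e.symm ⟨y, hyt⟩ : Fin m) : ℕ), hlt⟩ : Fin m) = e.symm ⟨y, hyt⟩ from
          Fin.ext rfl, Equiv.apply_symm_apply]
      rw [this]
      exact hyV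
    have hx2 : x ∈ ⋃ n, disjointed W n := by
      rwa [iUnion_disjointed]
    rcases mem_iUnion.1 hx2 with ⟨n, hn⟩
    have hnm : n < m := by
      by_contra h
      have : disjointed W n ⊆ W n := disjointed_le W n
      have : x ∈ W n := this hn
      simp only [hW, dif_neg h] at this
      exact this
    exact ⟨⟨n, hnm⟩, hn⟩
  · intro i j hij
    exact disjoint_disjointed W (fun h => hij (Fin.ext h))
  · intro i x hx y hy
    have hsub : disjointed W (i : ℕ) ⊆ ball (k i) (ε / 2) := by
      refine (disjointed_le W (i : ℕ)).trans ?_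
      simp only [hW, dif_pos i.isLt]
      have : (⟨(i : ℕ), i.isLt⟩ : Fin m) = i := Fin.ext rfl
      rw [this]
      exact hVsub (k i)
    have h1 := hsub hx
    have h2 := hsub hy
    rw [mem_ball] at h1 h2
    calc dist x y ≤ dist x (k i) + dist (k i) y := dist_triangle _ _ _
      _ < ε / 2 + ε / 2 := by rw [dist_comm (k i) y]; exact add_lt_add h1 h2
      _ = ε := by ring

lemma exists_pos_forall_le {Y : Type*} [TopologicalSpace Y] {K : Set Y} (hK : IsCompact K)
    {F : Y → ℝ} (hF : Continuous F) (hpos : ∀ w ∈ K, 0 < F w) :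
    ∃ m > 0, ∀ w ∈ K, m ≤ F w := by
  rcases K.eq_empty_or_nonempty with h | h
  · exact ⟨1, one_pos, by simp [h]⟩
  · obtain ⟨w₀, hw₀, hmin⟩ := hK.exists_isMinOn h hF.continuousOn
    exact ⟨F w₀, hpos w₀ hw₀, fun w hw => isMinOn_iff.1 hmin w hw⟩

/-- A compact metric space has "distinct distances" if equal distances only occur for
trivial reasons. -/
def DistinctDists (X : Type*) [MetricSpace X] : Prop :=
  ∀ x x' z z' : X, dist x x' = dist z z' →
    (x = z ∧ x' = z') ∨ (x = z' ∧ x' = z) ∨ (x = x' ∧ z = z')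

section PartA

variable {X : Type*} [MetricSpace X] [CompactSpace X] [TotallyDisconnectedSpace X] [Nonempty X]

lemma exists_looseEmbedding (hX : DistinctDists X) :
    ∃ f : X → ℝ, Function.Injective f ∧ Continuous f ∧
      ∀ x x' z z' : X, dist (f x) (f x') = dist (f z) (f z') ↔ dist x x' = dist z z' := by
  classical
  -- quadruples at scale 1/(n+1)
  set K : ℕ → Set (X × X × X × X) := fun n =>
    {w | 1/((n:ℝ)+1) ≤ dist w.1 w.2.1 ∧ 1/((n:ℝ)+1) ≤ dist w.2.2.1 w.2.2.2 ∧
      1/((n:ℝ)+1) ≤ max (dist w.1 w.2.2.1) (dist w.2.1 w.2.2.2) ∧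
      1/((n:ℝ)+1) ≤ max (dist w.1 w.2.2.2) (dist w.2.1 w.2.2.1)} with hK
  set J : ℕ → Set (X × X) := fun n => {v | 1/((n:ℝ)+1) ≤ dist v.1 v.2} with hJ
  set G : ℕ → Set C(X, ℝ) := fun n =>
    {g | (∀ w ∈ K n, |g w.1 - g w.2.1| ≠ |g w.2.2.1 - g w.2.2.2|) ∧
      (∀ v ∈ J n, g v.1 ≠ g v.2)} with hG
  have c1 : Continuous fun w : X × X × X × X => w.1 := continuous_fst
  have c2 : Continuous fun w : X × X × X × X => w.2.1 := continuous_snd.fst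
  have c3 : Continuous fun w : X × X × X × X => w.2.2.1 := continuous_snd.snd.fst
  have c4 : Continuous fun w : X × X × X × X => w.2.2.2 := continuous_snd.snd.snd
  have hKcompact : ∀ n, IsCompact (K n) := by
    intro n
    apply IsClosed.isCompact
    apply IsClosed.inter
    · exact isClosed_le continuous_const (c1.dist c2)
    apply IsClosed.inter
    · exact isClosed_le continuous_const (c3.dist c4)
    apply IsClosed.inter
    · exact isClosed_le continuous_const ((c1.dist c3).max (c2.dist c4))
    · exact isClosed_le continuous_const ((c1.dist c4).max (c2.dist c3))
  have hJcompact : ∀ n, IsCompact (J n) := by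
    intro n
    exact IsClosed.isCompact (isClosed_le continuous_const
      (continuous_fst.dist continuous_snd))
  -- openness
  have hGopen : ∀ n, IsOpen (G n) := by
    intro n
    rw [Metric.isOpen_iff]
    rintro g ⟨hg1, hg2⟩
    obtain ⟨m₁, hm₁pos, hm₁⟩ := exists_pos_forall_le (hKcompact n)
      (F := fun w : X × X × X × X => |(|g w.1 - g w.2.1|) - (|g w.2.2.1 - g w.2.2.2|)|)
      ((((g.continuous.comp c1).sub (g.continuous.comp c2)).abs.sub
        ((g.continuous.comp c3).sub (g.continuous.comp c4)).abs).abs)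
      (fun w hw => abs_pos.2 (sub_ne_zero.2 (hg1 w hw)))
    obtain ⟨m₂, hm₂pos, hm₂⟩ := exists_pos_forall_le (hJcompact n)
      (F := fun v : X × X => |g v.1 - g v.2|)
      (((g.continuous.comp continuous_fst).sub (g.continuous.comp continuous_snd)).abs)
      (fun v hv => abs_pos.2 (sub_ne_zero.2 (hg2 v hv)))
    refine ⟨min m₁ m₂ / 5, by positivity, ?_⟩
    intro g' hg'
    rw [mem_ball] at hg'
    have hd : ∀ x : X, |g' x - g x| ≤ dist g' g := by
      intro x
      rw [← Real.dist_eq]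
      exact ContinuousMap.dist_apply_le_dist x
    have hdd : ∀ x y : X, |(|g' x - g' y|) - (|g x - g y|)| ≤ 2 * dist g' g := by
      intro x y
      calc |(|g' x - g' y|) - (|g x - g y|)| ≤ |(g' x - g' y) - (g x - g y)| :=
            abs_abs_sub_abs_le_abs_sub _ _
        _ = |(g' x - g x) - (g' y - g y)| := by ring_nf
        _ ≤ |g' x - g x| + |g' y - g y| := abs_sub _ _
        _ ≤ 2 * dist g' g := by have := hd x; have := hd y; linarith
    have hdist5 : dist g' g < min m₁ m₂ / 5 := hg'
    have hm1le : min m₁ m₂ ≤ m₁ := min_le_left _ _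
    have hm2le : min m₁ m₂ ≤ m₂ := min_le_right _ _
    constructor
    · intro w hw heq
      have e1 := hdd w.1 w.2.1
      have e2 := hdd w.2.2.1 w.2.2.2
      have e3 := hm₁ w hw
      rcases le_abs.1 e3 with h | h
      · rcases abs_le.1 e1 with ⟨e1a, e1b⟩
        rcases abs_le.1 e2 with ⟨e2a, e2b⟩
        linarith
      · rcases abs_le.1 e1 with ⟨e1a, e1b⟩
        rcases abs_le.1 e2 with ⟨e2a, e2b⟩
        linarith
    · intro v hv heq
      have e1 := hdd v.1 v.2
      have e3 := hm₂ v hv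
      have heq' : |g' v.1 - g' v.2| = 0 := by rw [heq]; simp
      rw [heq', zero_sub, abs_neg, abs_abs] at e1
      linarith
  -- density
  have hGdense : ∀ n, Dense (G n) := by
    intro n
    rw [Metric.dense_iff]
    intro g₀ r hr
    obtain ⟨ρ₀, hρ₀, hunif⟩ := Metric.uniformContinuous_iff.1
      (CompactSpace.uniformContinuous_of_continuous g₀.continuous) (r/4) (by positivity)
    have hnpos : (0:ℝ) < 1/(2*((n:ℝ)+1)) := by positivity
    set ρ := min ρ₀ (1/(2*((n:ℝ)+1))) with hρ
    have hρpos : 0 < ρ := lt_min hρ₀ hnpos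
    obtain ⟨m, C, hCclopen, hCcover, hCdisj, hCdiam⟩ := exists_clopen_partition X hρpos
    choose idx hidx using hCcover
    have huniq : ∀ (x : X) (i : Fin m), x ∈ C i → idx x = i := by
      intro x i hx
      by_contra hne
      exact (hCdisj _ _ hne).ne_of_mem (hidx x) hx rfl
    set t : Fin m → ℝ := fun i => if h : (C i).Nonempty then g₀ h.some else 0 with ht
    obtain ⟨a, ha_close, ha_inj, ha_quad⟩ := exists_generic_values m t
      (show (0:ℝ) < r/4 by positivity)
    have hcont : Continuous fun x => a (idx x) := by
      rw [continuous_iff_continuousAt]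
      intro x
      have hev : (fun y => a (idx y)) =ᶠ[nhds x] fun _ => a (idx x) := by
        filter_upwards [(hCclopen (idx x)).isOpen.mem_nhds (hidx x)] with y hy
        rw [huniq y (idx x) hy]
      exact hev.continuousAt
    set g' : C(X, ℝ) := ⟨fun x => a (idx x), hcont⟩ with hg'
    -- separation of indices
    have hsep : ∀ x y : X, 1/((n:ℝ)+1) ≤ dist x y → idx x ≠ idx y := by
      intro x y h hxy
      have h1 : y ∈ C (idx x) := hxy ▸ hidx y
      have h2 := hCdiam (idx x) x (hidx x) y h1
      have h3 : ρ ≤ 1/(2*((n:ℝ)+1)) := min_le_right _ _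
      have h4 : 1/(2*((n:ℝ)+1)) < 1/((n:ℝ)+1) := by
        rw [div_lt_div_iff₀ (by positivity) (by positivity)]
        ring_nf
        nlinarith [Nat.cast_nonneg (α := ℝ) n]
      linarith
    have hg'mem : g' ∈ G n := by
      constructor
      · rintro ⟨x, x', z, z'⟩ ⟨h1, h2, h3, h4⟩ heq
        have hii' : idx x ≠ idx x' := hsep _ _ h1
        have hjj' : idx z ≠ idx z' := hsep _ _ h2
        have hc1 : ¬(idx x = idx z ∧ idx x' = idx z') := by
          rcases le_max_iff.1 h3 with h | h
          · exact fun hc => hsep _ _ h hc.1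
          · exact fun hc => hsep _ _ h hc.2
        have hc2 : ¬(idx x = idx z' ∧ idx x' = idx z) := by
          rcases le_max_iff.1 h4 with h | h
          · exact fun hc => hsep _ _ h hc.1
          · exact fun hc => hsep _ _ h hc.2
        exact ha_quad _ _ _ _ hii' hjj' hc1 hc2 heq
      · rintro ⟨x, x'⟩ h heq
        exact ha_inj _ _ (hsep _ _ h) heq
    have hg'close : dist g' g₀ ≤ r/2 := by
      rw [ContinuousMap.dist_le (by positivity)]
      intro x
      have hne : (C (idx x)).Nonempty := ⟨x, hidx x⟩
      have htx : t (idx x) = g₀ hne.some := by rw [ht]; simp only [dif_pos hne]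
      have hmem := hne.some_mem
      have hdx : dist x hne.some < ρ₀ :=
        lt_of_lt_of_le (hCdiam (idx x) x (hidx x) hne.some hmem) (min_le_left _ _)
      have h1 : dist (g₀ x) (g₀ hne.some) < r/4 := hunif hdx
      have h2 : |a (idx x) - t (idx x)| ≤ r/4 := ha_close (idx x)
      rw [Real.dist_eq] at h1
      rw [htx] at h2
      rw [Real.dist_eq]
      show |a (idx x) - g₀ x| ≤ r/2
      calc |a (idx x) - g₀ x| = |(a (idx x) - g₀ hne.some) - (g₀ x - g₀ hne.some)| := by
            ring_nf
        _ ≤ |a (idx x) - g₀ hne.some| + |g₀ x - g₀ hne.some| := abs_sub _ _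
        _ ≤ r/4 + r/4 := add_le_add h2 (le_of_lt h1)
        _ = r/2 := by ring
    exact ⟨g', mem_inter (mem_ball.2 (lt_of_le_of_lt hg'close (by linarith))) hg'mem⟩
  have hBaire : Dense (⋂ n, G n) := dense_iInter_of_isOpen hGopen hGdense
  obtain ⟨g, hg⟩ := hBaire.nonempty
  have hgn : ∀ n, g ∈ G n := fun n => mem_iInter.1 hg n
  -- injectivity
  have hinj : Function.Injective g := by
    intro x x' heq
    by_contra hne
    have hpos : 0 < dist x x' := dist_pos.2 hne
    obtain ⟨n, hn⟩ := exists_nat_one_div_lt hpos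
    exact (hgn n).2 (x, x') (le_of_lt hn) heq
  refine ⟨g, hinj, g.continuous, ?_⟩
  intro x x' z z'
  constructor
  · -- equal image distances → equal distances
    intro h
    by_contra hne
    -- cases on degeneracy
    by_cases hxx : x = x'
    · subst hxx
      rw [dist_self] at hne h
      have hz : z = z' := hinj (dist_eq_zero.1 h.symm)
      exact hne (by rw [hz, dist_self])
    · by_cases hzz : z = z'
      · subst hzz
        rw [dist_self] at h
        exact hxx (hinj (dist_eq_zero.1 h))
      · -- main case
        have hd1 : 0 < dist x x' := dist_pos.2 hxx
        have hd2 : 0 < dist z z' := dist_pos.2 hzz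
        have hm1 : 0 < max (dist x z) (dist x' z') := by
          rcases eq_or_ne x z with hxz | hxz
          · rcases eq_or_ne x' z' with hxz' | hxz'
            · exact absurd (hxz ▸ hxz' ▸ rfl) hne
            · exact lt_max_of_lt_right (dist_pos.2 hxz')
          · exact lt_max_of_lt_left (dist_pos.2 hxz)
        have hm2 : 0 < max (dist x z') (dist x' z) := by
          rcases eq_or_ne x z' with hxz | hxz
          · rcases eq_or_ne x' z with hxz' | hxz'
            · exact absurd (by rw [hxz, hxz', dist_comm]) hne
            · exact lt_max_of_lt_right (dist_pos.2 hxz')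
          · exact lt_max_of_lt_left (dist_pos.2 hxz)
        have hall : 0 < min (min (dist x x') (dist z z'))
            (min (max (dist x z) (dist x' z')) (max (dist x z') (dist x' z))) := by
          simp only [lt_min_iff]
          exact ⟨⟨hd1, hd2⟩, hm1, hm2⟩
        obtain ⟨n, hn⟩ := exists_nat_one_div_lt hall
        simp only [lt_min_iff] at hn
        have hw : (x, x', z, z') ∈ K n :=
          ⟨le_of_lt hn.1.1, le_of_lt hn.1.2, le_of_lt hn.2.1, le_of_lt hn.2.2⟩
        have := (hgn n).1 (x, x', z, z') hw
        rw [Real.dist_eq, Real.dist_eq] at h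
        exact this h
  · -- equal distances → equal image distances
    intro h
    rcases hX x x' z z' h with ⟨h1, h2⟩ | ⟨h1, h2⟩ | ⟨h1, h2⟩
    · rw [h1, h2]
    · rw [h1, h2, dist_comm]
    · rw [h1, h2, dist_self, dist_self]

end PartA

section PartB

/-- A wrapper type used to carry a perturbed metric. -/
structure PCopy (α : Type u) : Type u where pt : α

lemma PCopy.pt_injective {α : Type u} : Function.Injective (PCopy.pt (α := α)) :=
  fun a b h => by cases a; cases b; cases h; rfl

/-- All quadruples of points forming two distinct nondegenerate pairs have distances
separated by at least `γ`. -/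
def Gap (γ : ℝ) (Y : Type*) [MetricSpace Y] : Prop :=
  ∀ x x' z z' : Y, x ≠ x' → z ≠ z' → ¬(x = z ∧ x' = z') → ¬(x = z' ∧ x' = z) →
    γ ≤ |dist x x' - dist z z'|

lemma gap_of_isometryEquiv {Y Z : Type*} [MetricSpace Y] [MetricSpace Z] (e : Y ≃ᵢ Z)
    {γ : ℝ} (h : Gap γ Z) : Gap γ Y := by
  intro x x' z z' h1 h2 h3 h4
  have := h (e x) (e x') (e z) (e z') (fun hc => h1 (e.injective hc))
    (fun hc => h2 (e.injective hc))
    (fun hc => h3 ⟨e.injective hc.1, e.injective hc.2⟩)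
    (fun hc => h4 ⟨e.injective hc.1, e.injective hc.2⟩)
  rwa [e.dist_eq, e.dist_eq] at this

lemma tds_of_isometryEquiv {Y Z : Type*} [MetricSpace Y] [MetricSpace Z] (e : Y ≃ᵢ Z)
    [TotallyDisconnectedSpace Z] : TotallyDisconnectedSpace Y := by
  rw [totallyDisconnectedSpace_iff]
  exact e.isometry.isEmbedding.isTotallyDisconnected
    (isTotallyDisconnected_of_totallyDisconnectedSpace _)

/-- Perturbing a finite metric space to have all distinct distances, close in the
Gromov–Hausdorff distance. -/
lemma exists_pert (α : Type*) [MetricSpace α] [Fintype α] [Nonempty α] {δ : ℝ} (hδ : 0 < δ) :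
    ∃ q : GromovHausdorff.GHSpace, dist (toGHSpace α) q ≤ δ ∧
      TotallyDisconnectedSpace q.Rep ∧ ∃ γ > 0, Gap γ q.Rep := by
  classical
  set N := Fintype.card α with hN
  set eα := Fintype.equivFin α with heα
  set c : α → ℝ := fun x => (3:ℝ)^((eα x : ℕ)) with hc
  have hcpos : ∀ x, 0 < c x := fun x => by positivity
  have hcbound : ∀ x, c x ≤ 3^N := fun x =>
    pow_le_pow_right₀ (by norm_num) (le_of_lt (eα x).isLt)
  set ψ : α → α → ℝ := fun x y => c x + c y with hψ
  have hψsymm : ∀ x y, ψ x y = ψ y x := fun x y => by simp only [hψ]; ring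
  have hψpos : ∀ x y, 0 < ψ x y := fun x y => by positivity
  have hψbound : ∀ x y, ψ x y ≤ 2 * 3^N := fun x y => by
    have := hcbound x; have := hcbound y; simp only [hψ]; linarith
  have hvalne : ∀ x y : α, x ≠ y → (eα x : ℕ) ≠ (eα y : ℕ) := by
    intro x y hxy h
    exact hxy (eα.injective (Fin.val_injective h))
  have hψinj : ∀ x y z w : α, x ≠ y → z ≠ w → ¬(x = z ∧ y = w) → ¬(x = w ∧ y = z) →
      ψ x y ≠ ψ z w := by
    intro x y z w hxy hzw h1 h2 heq
    have heq' : (3:ℝ)^((eα x : ℕ)) + 3^((eα y : ℕ)) = 3^((eα z : ℕ)) + 3^((eα w : ℕ)) := heq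
    rcases pow3_add_eq (hvalne x y hxy) (hvalne z w hzw) heq' with hcase | hcase
    · exact h1 ⟨eα.injective (Fin.val_injective hcase.1),
        eα.injective (Fin.val_injective hcase.2)⟩
    · exact h2 ⟨eα.injective (Fin.val_injective hcase.1),
        eα.injective (Fin.val_injective hcase.2)⟩
  -- bad parameter set
  set B : Set ℝ := ⋃ (p : α × α × α × α),
    {s | (p.1 ≠ p.2.1 ∧ p.2.2.1 ≠ p.2.2.2 ∧ ¬(p.1 = p.2.2.1 ∧ p.2.1 = p.2.2.2) ∧
      ¬(p.1 = p.2.2.2 ∧ p.2.1 = p.2.2.1)) ∧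
      (dist p.1 p.2.1 - dist p.2.2.1 p.2.2.2) +
        s * (ψ p.1 p.2.1 - ψ p.2.2.1 p.2.2.2) = 0} with hB
  have hBfin : B.Finite := by
    apply Set.finite_iUnion
    rintro ⟨x, y, z, w⟩
    by_cases hcond : x ≠ y ∧ z ≠ w ∧ ¬(x = z ∧ y = w) ∧ ¬(x = w ∧ y = z)
    · refine (finite_lin (sub_ne_zero.2 (hψinj x y z w hcond.1 hcond.2.1 hcond.2.2.1
        hcond.2.2.2))).subset (fun s hs => hs.2)
    · convert Set.finite_empty using 1
      ext s; simp only [mem_setOf_eq, mem_empty_iff_false, iff_false]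
      tauto
  have hrpos : (0:ℝ) < δ / (2 * 3^N + 1) := by positivity
  obtain ⟨s, hs, hsB⟩ := exists_avoid hBfin hrpos
  have hsψ : ∀ x y : α, 0 < s * ψ x y ∧ s * ψ x y < δ := by
    intro x y
    constructor
    · exact mul_pos hs.1 (hψpos x y)
    · calc s * ψ x y ≤ s * (2 * 3^N) :=
            mul_le_mul_of_nonneg_left (hψbound x y) (le_of_lt hs.1)
        _ < (δ / (2 * 3^N + 1)) * (2 * 3^N) := by
            apply mul_lt_mul_of_pos_right hs.2
            positivity
        _ ≤ δ := by
            rw [div_mul_eq_mul_div, div_le_iff₀ (by positivity)]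
            nlinarith [pow_pos (show (0:ℝ) < 3 by norm_num) N]
  set d' : α → α → ℝ := fun x y => if x = y then 0 else dist x y + δ + s * ψ x y with hd'
  have hd'lb : ∀ x y, x ≠ y → dist x y + δ < d' x y := by
    intro x y h
    simp only [hd', if_neg h]
    have := (hsψ x y).1
    linarith
  have hd'ub : ∀ x y, x ≠ y → d' x y < dist x y + 2 * δ := by
    intro x y h
    simp only [hd', if_neg h]
    have := (hsψ x y).2
    linarith
  have hd'nonneg : ∀ x y, 0 ≤ d' x y := by
    intro x y
    by_cases h : x = y
    · simp [hd', h]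
    · have := hd'lb x y h
      have := dist_nonneg (x := x) (y := y)
      linarith
  have hd'inj : ∀ x y z w : α, x ≠ y → z ≠ w → ¬(x = z ∧ y = w) → ¬(x = w ∧ y = z) →
      d' x y ≠ d' z w := by
    intro x y z w h1 h2 h3 h4 heq
    apply hsB
    refine mem_iUnion.2 ⟨(x, y, z, w), ⟨h1, h2, h3, h4⟩, ?_⟩
    simp only [hd', if_neg h1, if_neg h2] at heq
    dsimp only
    linarith
  -- the perturbed metric space
  letI MP : MetricSpace (PCopy α) :=
    { dist := fun a b => d' a.pt b.pt
      dist_self := fun a => by show d' a.pt a.pt = 0; simp [hd']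
      dist_comm := fun a b => by
        show d' a.pt b.pt = d' b.pt a.pt
        by_cases h : a.pt = b.pt
        · simp [hd', h, eq_comm]
        · simp only [hd', if_neg h, if_neg (Ne.symm h)]
          rw [dist_comm, hψsymm]
      dist_triangle := fun a b c' => by
        show d' a.pt c'.pt ≤ d' a.pt b.pt + d' b.pt c'.pt
        by_cases hac : a.pt = c'.pt
        · have e0 : d' a.pt c'.pt = 0 := by simp [hd', hac]
          have h1 := hd'nonneg a.pt b.pt
          have h2 := hd'nonneg b.pt c'.pt
          linarith
        · by_cases hab : a.pt = b.pt
          · have e1 : d' a.pt b.pt = 0 := by simp [hd', hab]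
            have e2 : d' a.pt c'.pt = d' b.pt c'.pt := by rw [hab]
            linarith
          · by_cases hbc : b.pt = c'.pt
            · have e1 : d' b.pt c'.pt = 0 := by simp [hd', hbc]
              have e2 : d' a.pt c'.pt = d' a.pt b.pt := by rw [hbc]
              linarith
            · have l1 := hd'ub a.pt c'.pt hac
              have l2 := hd'lb a.pt b.pt hab
              have l3 := hd'lb b.pt c'.pt hbc
              have := dist_triangle a.pt b.pt c'.pt
              linarith
      eq_of_dist_eq_zero := fun {a b} h => by
        by_contra hne
        have hne' : a.pt ≠ b.pt := fun hc => hne (PCopy.pt_injective hc)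
        have h' : d' a.pt b.pt = 0 := h
        have := hd'lb a.pt b.pt hne'
        have := dist_nonneg (x := a.pt) (y := b.pt)
        linarith }
  letI : Fintype (PCopy α) := Fintype.ofEquiv α ⟨PCopy.mk, PCopy.pt, fun _ => rfl, fun _ => rfl⟩
  haveI : Nonempty (PCopy α) := ⟨⟨Classical.arbitrary α⟩⟩
  haveI : CompactSpace (PCopy α) := Finite.compactSpace
  haveI : TotallyDisconnectedSpace (PCopy α) := by infer_instance
  -- GH distance bound via approximate isometry
  have H2 : ∀ x y : (Set.univ : Set α),
      |dist (x : α) (y : α) - dist (PCopy.mk (x : α)) (PCopy.mk (y : α))| ≤ 2 * δ := by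
    intro x y
    show |dist (x : α) (y : α) - d' (x : α) (y : α)| ≤ 2 * δ
    by_cases h : (x : α) = (y : α)
    · rw [h]; simp [hd']; positivity
    · have := hd'lb (x : α) (y : α) h
      have := hd'ub (x : α) (y : α) h
      rw [abs_le]
      constructor <;> linarith
  have key := ghDist_le_of_approx_subsets (X := α) (Y := PCopy α) (s := Set.univ)
    (Φ := fun x => PCopy.mk (x : α)) (ε₁ := 0) (ε₂ := 2 * δ) (ε₃ := 0)
    (fun x => ⟨x, mem_univ x, by simp⟩)
    (fun y => ⟨⟨y.pt, mem_univ _⟩, le_of_eq (dist_self y)⟩)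
    H2
  have hgh : ghDist α (PCopy α) ≤ δ := by linarith
  -- gap on the perturbed space
  obtain ⟨γ, hγpos, hγgap⟩ : ∃ γ > 0, Gap γ (PCopy α) := by
    set Q : Finset (PCopy α × PCopy α × PCopy α × PCopy α) :=
      Finset.univ.filter (fun p => p.1 ≠ p.2.1 ∧ p.2.2.1 ≠ p.2.2.2 ∧
        ¬(p.1 = p.2.2.1 ∧ p.2.1 = p.2.2.2) ∧ ¬(p.1 = p.2.2.2 ∧ p.2.1 = p.2.2.1)) with hQ
    set F : PCopy α × PCopy α × PCopy α × PCopy α → ℝ :=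
      fun p => |dist p.1 p.2.1 - dist p.2.2.1 p.2.2.2| with hF
    have hFpos : ∀ p ∈ Q, 0 < F p := by
      rintro ⟨x, y, z, w⟩ hp
      simp only [hQ, Finset.mem_filter] at hp
      obtain ⟨-, h1, h2, h3, h4⟩ := hp
      apply abs_pos.2
      apply sub_ne_zero.2
      show d' x.pt y.pt ≠ d' z.pt w.pt
      apply hd'inj
      · exact fun hc => h1 (PCopy.pt_injective hc)
      · exact fun hc => h2 (PCopy.pt_injective hc)
      · exact fun hc => h3 ⟨PCopy.pt_injective hc.1, PCopy.pt_injective hc.2⟩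
      · exact fun hc => h4 ⟨PCopy.pt_injective hc.1, PCopy.pt_injective hc.2⟩
    by_cases hQne : Q.Nonempty
    · refine ⟨(Q.image F).min' (hQne.image F), ?_, ?_⟩
      · obtain ⟨p, hp, hpeq⟩ := Finset.mem_image.1 ((Q.image F).min'_mem (hQne.image F))
        rw [← hpeq]
        exact hFpos p hp
      · intro x x' z z' h1 h2 h3 h4
        have hm : F (x, x', z, z') ∈ Q.image F := by
          apply Finset.mem_image_of_mem
          simp only [hQ, Finset.mem_filter]
          exact ⟨Finset.mem_univ _, h1, h2, h3, h4⟩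
        exact Finset.min'_le _ _ hm
    · refine ⟨1, one_pos, ?_⟩
      intro x x' z z' h1 h2 h3 h4
      exact absurd (Finset.mem_filter.2 ⟨Finset.mem_univ ((x, x', z, z')), h1, h2, h3, h4⟩)
        (fun hc => hQne ⟨_, hc⟩)
  -- conclude, transporting along the isometry with the representative
  refine ⟨toGHSpace (PCopy α), hgh, ?_, γ, hγpos, ?_⟩
  · have heq : toGHSpace ((toGHSpace (PCopy α)).Rep) = toGHSpace (PCopy α) :=
      (toGHSpace (PCopy α)).toGHSpace_rep
    obtain ⟨e⟩ := (toGHSpace_eq_toGHSpace_iff_isometryEquiv).1 heq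
    exact tds_of_isometryEquiv e
  · have heq : toGHSpace ((toGHSpace (PCopy α)).Rep) = toGHSpace (PCopy α) :=
      (toGHSpace (PCopy α)).toGHSpace_rep
    obtain ⟨e⟩ := (toGHSpace_eq_toGHSpace_iff_isometryEquiv).1 heq
    exact gap_of_isometryEquiv e hγgap

end PartB

/-- Any point of the Gromov–Hausdorff space can be approximated by totally disconnected
spaces with uniformly separated distinct distances. -/
lemma exists_dense_approx (p : GromovHausdorff.GHSpace) {ε : ℝ} (hε : 0 < ε) :
    ∃ q : GromovHausdorff.GHSpace, dist p q < ε ∧ TotallyDisconnectedSpace q.Rep ∧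
      ∃ γ > 0, Gap γ q.Rep := by
  classical
  have hε4 : (0:ℝ) < ε/4 := by linarith
  obtain ⟨t, -, htfin, htcover⟩ :=
    finite_cover_balls_of_compact (X := p.Rep) isCompact_univ hε4
  obtain ⟨x₀⟩ : Nonempty p.Rep := inferInstance
  obtain ⟨y₀, hy₀t, -⟩ := mem_iUnion₂.1 (htcover (mem_univ x₀))
  letI : Fintype ↥t := htfin.fintype
  haveI : Nonempty ↥t := ⟨⟨y₀, hy₀t⟩⟩
  have hnet : ghDist p.Rep ↥t ≤ ε/4 + 0/2 + 0 := by
    apply ghDist_le_of_approx_subsets (X := p.Rep) (Y := ↥t) (s := t)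
      (Φ := fun x => x)
    · intro x
      obtain ⟨y, hyt, hyd⟩ := mem_iUnion₂.1 (htcover (mem_univ x))
      exact ⟨y, hyt, le_of_lt hyd⟩
    · intro x
      exact ⟨x, le_of_eq (dist_self x)⟩
    · intro x y
      have : dist (x : ↥t) (y : ↥t) = dist (x : p.Rep) (y : p.Rep) := Subtype.dist_eq x y
      rw [this]
      simp
  obtain ⟨q, hq1, hq2, γ, hγ, hgap⟩ := exists_pert ↥t hε4
  refine ⟨q, ?_, hq2, γ, hγ, hgap⟩
  have h1 : dist p (toGHSpace ↥t) ≤ ε/4 := by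
    have h2 : ghDist p.Rep ↥t ≤ ε/4 := by linarith
    have h3 : ghDist p.Rep ↥t = dist (toGHSpace p.Rep) (toGHSpace ↥t) := rfl
    rw [h3, p.toGHSpace_rep] at h2
    exact h2
  calc dist p q ≤ dist p (toGHSpace ↥t) + dist (toGHSpace ↥t) q := dist_triangle _ _ _
    _ ≤ ε/4 + ε/4 := add_le_add h1 hq1
    _ < ε := by linarith

/-- From Gromov–Hausdorff closeness, extract an approximate-isometry map between
representatives. -/
lemma exists_approx_map (p q : GromovHausdorff.GHSpace) {δ : ℝ} (h : dist p q < δ) :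
    ∃ i : p.Rep → q.Rep, ∀ x x' : p.Rep, |dist x x' - dist (i x) (i x')| < 2 * δ := by
  set L := optimalGHInjl p.Rep q.Rep with hL
  set R := optimalGHInjr p.Rep q.Rep with hR
  have hH : hausdorffDist (range L) (range R) < δ := by
    rw [hL, hR, hausdorffDist_optimal, ← dist_ghDist]
    exact h
  have hfin : EMetric.hausdorffEdist (range L) (range R) ≠ ⊤ :=
    hausdorffEdist_ne_top_of_nonempty_of_bounded (range_nonempty _) (range_nonempty _)
      (isCompact_range (isometry_optimalGHInjl p.Rep q.Rep).continuous).isBounded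
      (isCompact_range (isometry_optimalGHInjr p.Rep q.Rep).continuous).isBounded
  have hex : ∀ x : p.Rep, ∃ y : q.Rep, dist (L x) (R y) < δ := by
    intro x
    obtain ⟨z, hz, hzd⟩ := exists_dist_lt_of_hausdorffDist_lt (mem_range_self x) hH hfin
    obtain ⟨y, rfl⟩ := hz
    exact ⟨y, hzd⟩
  choose i hi using hex
  refine ⟨i, fun x x' => ?_⟩
  have e1 : dist x x' = dist (L x) (L x') :=
    ((isometry_optimalGHInjl p.Rep q.Rep).dist_eq x x').symm
  have e2 : dist (i x) (i x') = dist (R (i x)) (R (i x')) :=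
    ((isometry_optimalGHInjr p.Rep q.Rep).dist_eq (i x) (i x')).symm
  rw [e1, e2]
  have e3 := dist_dist_dist_le (L x) (L x') (R (i x)) (R (i x'))
  rw [Real.dist_eq] at e3
  have := hi x
  have := hi x'
  calc |dist (L x) (L x') - dist (R (i x)) (R (i x'))| ≤
      dist (L x) (R (i x)) + dist (L x') (R (i x')) := e3
    _ < δ + δ := add_lt_add (hi x) (hi x')
    _ = 2 * δ := by ring

end LooseAux

/-- A loose embedding between metric spaces: an injective continuous map preserving
equalities and inequalities of distances. -/
def IsLooseEmbedding {X Y : Type*} [MetricSpace X] [MetricSpace Y] (f : X → Y) : Prop :=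
  Function.Injective f ∧ Continuous f ∧
    ∀ x x' z z' : X, dist (f x) (f x') = dist (f z) (f z') ↔ dist x x' = dist z z'

open LooseAux in
/-- The set of isometry classes in `M₀` (the subspace of the Gromov–Hausdorff space consisting
of classes of totally disconnected compact metric spaces) of those spaces that admit a loose
embedding into the real line is residual (comeager) in `M₀`. -/
theorem looselyEmbeddable_residual_in_M0 :
    {p : {q : GromovHausdorff.GHSpace // TotallyDisconnectedSpace q.Rep} |
        ∃ f : p.val.Rep → ℝ, IsLooseEmbedding f} ∈
      residual {q : GromovHausdorff.GHSpace // TotallyDisconnectedSpace q.Rep} := by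
  classical
  set M := {q : GromovHausdorff.GHSpace // TotallyDisconnectedSpace q.Rep} with hM
  -- the open sets in the Gromov–Hausdorff space
  set U : ℕ → Set GromovHausdorff.GHSpace := fun n =>
    {p | ∃ (q : GromovHausdorff.GHSpace) (γ δ : ℝ), 0 < δ ∧ dist p q < δ ∧ 4*δ < γ ∧
      2*δ < 1/((n:ℝ)+1) ∧ Gap γ q.Rep} with hU
  have hUopen : ∀ n, IsOpen (U n) := by
    intro n
    rw [Metric.isOpen_iff]
    rintro p ⟨q, γ, δ, h0, h1, h2, h3, h4⟩
    refine ⟨δ - dist p q, by linarith, ?_⟩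
    intro p' hp'
    rw [mem_ball] at hp'
    refine ⟨q, γ, δ, h0, ?_, h2, h3, h4⟩
    calc dist p' q ≤ dist p' p + dist p q := dist_triangle _ _ _
      _ < (δ - dist p q) + dist p q := by linarith
      _ = δ := by ring
  set V : ℕ → Set M := fun n => Subtype.val ⁻¹' (U n) with hV
  have hVopen : ∀ n, IsOpen (V n) := fun n => (hUopen n).preimage continuous_subtype_val
  have hVdense : ∀ n, Dense (V n) := by
    intro n
    rw [Metric.dense_iff]
    intro x r hr
    obtain ⟨q, hq1, hq2, γ, hγ, hgap⟩ := exists_dense_approx x.val hr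
    have hn1 : (0:ℝ) < 1/((n:ℝ)+1) := by positivity
    set δ₀ : ℝ := min (γ/8) (1/(4*((n:ℝ)+1))) with hδ₀
    have hδ₀pos : 0 < δ₀ := lt_min (by linarith) (by positivity)
    refine ⟨⟨q, hq2⟩, ?_, ?_⟩
    · rw [mem_ball]
      have : dist (⟨q, hq2⟩ : M) x = dist q x.val := Subtype.dist_eq _ _
      rw [this, dist_comm]
      exact hq1
    · refine ⟨q, γ, δ₀, hδ₀pos, ?_, ?_, ?_, hgap⟩
      · rw [dist_self]; exact hδ₀pos
      · have : δ₀ ≤ γ/8 := min_le_left _ _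
        linarith
      · have h1 : δ₀ ≤ 1/(4*((n:ℝ)+1)) := min_le_right _ _
        have h2 : 2 * (1/(4*((n:ℝ)+1))) < 1/((n:ℝ)+1) := by
          rw [mul_one_div, div_lt_div_iff₀ (by positivity) (by positivity)]
          nlinarith [Nat.cast_nonneg (α := ℝ) n]
        linarith
  -- conclude via the characterization of residual sets
  rw [mem_residual_iff]
  refine ⟨Set.range V, ?_, ?_, countable_range V, ?_⟩
  · rintro t ⟨n, rfl⟩; exact hVopen n
  · rintro t ⟨n, rfl⟩; exact hVdense n
  rintro p hp
  have hpV : ∀ n : ℕ, p ∈ V n := fun n => hp (V n) ⟨n, rfl⟩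
  -- the distinct-distances property for the representative
  have hdd : DistinctDists p.val.Rep := by
    intro x x' z z' heq
    by_contra hcon
    have hc1 : ¬(x = z ∧ x' = z') := fun hc => hcon (Or.inl hc)
    have hc2 : ¬(x = z' ∧ x' = z) := fun hc => hcon (Or.inr (Or.inl hc))
    have hc3 : ¬(x = x' ∧ z = z') := fun hc => hcon (Or.inr (Or.inr hc))
    by_cases hx : x = x'
    · subst hx
      rw [dist_self] at heq
      exact hc3 ⟨rfl, dist_eq_zero.1 heq.symm⟩
    by_cases hz : z = z'
    · subst hz
      rw [dist_self] at heq
      exact hx (dist_eq_zero.1 heq)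
    have hd1 : 0 < dist x x' := dist_pos.2 hx
    have hd2 : 0 < dist z z' := dist_pos.2 hz
    have hm1 : 0 < max (dist x z) (dist x' z') := by
      rcases eq_or_ne x z with h | h
      · rcases eq_or_ne x' z' with h' | h'
        · exact absurd ⟨h, h'⟩ hc1
        · exact lt_max_of_lt_right (dist_pos.2 h')
      · exact lt_max_of_lt_left (dist_pos.2 h)
    have hm2 : 0 < max (dist x z') (dist x' z) := by
      rcases eq_or_ne x z' with h | h
      · rcases eq_or_ne x' z with h' | h'
        · exact absurd ⟨h, h'⟩ hc2
        · exact lt_max_of_lt_right (dist_pos.2 h')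
      · exact lt_max_of_lt_left (dist_pos.2 h)
    have hall : 0 < min (min (dist x x') (dist z z'))
        (min (max (dist x z) (dist x' z')) (max (dist x z') (dist x' z))) := by
      simp only [lt_min_iff]
      exact ⟨⟨hd1, hd2⟩, hm1, hm2⟩
    obtain ⟨n, hn⟩ := exists_nat_one_div_lt hall
    simp only [lt_min_iff] at hn
    obtain ⟨q, γ, δ, h0, h1, h2, h3, hgap⟩ := hpV n
    obtain ⟨i, hi⟩ := exists_approx_map p.val q h1
    have hsep : ∀ a b : p.val.Rep, 1/((n:ℝ)+1) ≤ dist a b → i a ≠ i b := by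
      intro a b hab hiab
      have := hi a b
      rw [hiab, dist_self, sub_zero] at this
      rw [abs_of_nonneg dist_nonneg] at this
      linarith
    have hix : i x ≠ i x' := hsep x x' (le_of_lt hn.1.1)
    have hiz : i z ≠ i z' := hsep z z' (le_of_lt hn.1.2)
    have hnm1 : ¬(i x = i z ∧ i x' = i z') := by
      rcases le_max_iff.1 (le_of_lt hn.2.1) with h | h
      · exact fun hc => hsep x z h hc.1
      · exact fun hc => hsep x' z' h hc.2
    have hnm2 : ¬(i x = i z' ∧ i x' = i z) := by
      rcases le_max_iff.1 (le_of_lt hn.2.2) with h | h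
      · exact fun hc => hsep x z' h hc.1
      · exact fun hc => hsep x' z h hc.2
    have hgg := hgap (i x) (i x') (i z) (i z') hix hiz hnm1 hnm2
    have e1 := hi x x'
    have e2 := hi z z'
    rw [abs_lt] at e1 e2
    rcases le_abs.1 hgg with h | h
    · rw [heq] at e1
      linarith
    · rw [heq] at e1
      linarith
  haveI : TotallyDisconnectedSpace p.val.Rep := p.property
  obtain ⟨f, hf1, hf2, hf3⟩ := exists_looseEmbedding hdd
  exact ⟨f, hf1, hf2, hf3⟩
end

section
/- The set of isometry classes of nonempty compact totally disconnected metric spaces whose distance function is injective is residual (comeager) in the space M_0, where M_0 is the subset of the Gromov–Hausdorff space consisting of classes of totally disconnected compact metric spaces, equipped with the subspace topology. -/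
open GromovHausdorff Metric Set Topology

/-- The distance function of a metric space is injective: it is one-to-one on unordered pairs of
distinct points, i.e. whenever `x ≠ y`, `x' ≠ y'` and `dist x y = dist x' y'`, the unordered
pairs `{x, y}` and `{x', y'}` coincide. -/
def InjectiveDist (X : Type*) [MetricSpace X] : Prop :=
  ∀ x y x' y' : X, x ≠ y → x' ≠ y' → dist x y = dist x' y' → ({x, y} : Set X) = {x', y'}

namespace InjDistAux

/-- The set of classes admitting an `1/(n+1)`-separated violation of distance injectivity. -/
def badSet (n : ℕ) : Set GHSpace :=
  {q | ∃ x y x' y' : q.Rep, dist x y = dist x' y' ∧ 1/(n+1 : ℝ) ≤ dist x y ∧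
    1/(n+1 : ℝ) ≤ dist x' x ∧ 1/(n+1 : ℝ) ≤ dist x' y}

lemma notMem_badSet_of_inj {q : GHSpace} (h : InjectiveDist q.Rep) (n : ℕ) :
    q ∉ badSet n := by
  rintro ⟨x, y, x', y', heq, h1, h2, h3⟩
  have hn : (0:ℝ) < 1/(n+1 : ℝ) := by positivity
  have hxy : x ≠ y := by
    intro hxy; rw [hxy, dist_self] at h1; linarith
  have hxy' : x' ≠ y' := by
    intro hxy'; rw [hxy', dist_self] at heq; linarith [heq ▸ h1]
  have hs := h x y x' y' hxy hxy' heq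
  have : x' ∈ ({x, y} : Set q.Rep) := hs ▸ (by simp : x' ∈ ({x', y'} : Set q.Rep))
  rcases this with h' | h'
  · rw [h', dist_self] at h2; linarith
  · rw [h', dist_self] at h3; linarith

lemma exists_badSet_of_not_inj {q : GHSpace} (h : ¬ InjectiveDist q.Rep) :
    ∃ n, q ∈ badSet n := by
  simp only [InjectiveDist, not_forall] at h
  obtain ⟨x, y, x', y', hxy, hxy', heq, hne⟩ := h
  -- one of x', y' is not in {x, y}
  have key : x' ∉ ({x, y} : Set q.Rep) ∨ y' ∉ ({x, y} : Set q.Rep) := by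
    by_contra hc
    push_neg at hc
    apply hne
    apply Set.eq_of_subset_of_subset ?_ ?_
    · -- {x,y} ⊆ {x',y'} : since {x',y'} ⊆ {x,y} and both pairs distinct
      intro z hz
      by_contra hz'
      simp only [mem_insert_iff, mem_singleton_iff, not_or] at hz' hz ⊢
      rcases hc.1 with h1 | h1 <;> rcases hc.2 with h2 | h2 <;>
        rcases hz with rfl | rfl <;> simp_all
    · rintro z (rfl | rfl)
      exacts [hc.1, hc.2]
  have main : ∀ a b a' b' : q.Rep, a ≠ b → dist a b = dist a' b' →
      a' ∉ ({a, b} : Set q.Rep) → ∃ n, q ∈ badSet n := by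
    intro a b a' b' hab hd ha'
    simp only [mem_insert_iff, mem_singleton_iff, not_or] at ha'
    have h1 : 0 < dist a b := dist_pos.2 hab
    have h2 : 0 < dist a' a := dist_pos.2 ha'.1
    have h3 : 0 < dist a' b := dist_pos.2 ha'.2
    set r := min (dist a b) (min (dist a' a) (dist a' b)) with hr
    have hr0 : 0 < r := lt_min h1 (lt_min h2 h3)
    obtain ⟨n, hn⟩ := exists_nat_one_div_lt hr0
    refine ⟨n, a, b, a', b', hd, ?_, ?_, ?_⟩
    · exact hn.le.trans (le_trans (min_le_left _ _) le_rfl)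
    · exact hn.le.trans ((min_le_right _ _).trans (min_le_left _ _))
    · exact hn.le.trans ((min_le_right _ _).trans (min_le_right _ _))
  rcases key with hk | hk
  · exact main x y x' y' hxy heq hk
  · refine main x y y' x' hxy (by rw [heq, dist_comm]) hk


lemma exists_approx (q q' : GHSpace) {ε : ℝ} (h : dist q q' < ε) :
    ∃ f : q'.Rep → q.Rep, ∀ a b : q'.Rep, |dist (f a) (f b) - dist a b| ≤ 2*ε := by
  obtain ⟨Φ, Ψ, hΦ, hΨ, hD⟩ := ghDist_eq_hausdorffDist q.Rep q'.Rep
  rw [← dist_ghDist] at hD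
  have hfin : EMetric.hausdorffEdist (range Φ) (range Ψ) ≠ ⊤ :=
    hausdorffEdist_ne_top_of_nonempty_of_bounded (range_nonempty _) (range_nonempty _)
      (isCompact_range hΦ.continuous).isBounded (isCompact_range hΨ.continuous).isBounded
  have key : ∀ a : q'.Rep, ∃ p : q.Rep, dist (Φ p) (Ψ a) < ε := by
    intro a
    obtain ⟨z, hz, hz'⟩ := exists_dist_lt_of_hausdorffDist_lt' (mem_range_self a)
      (by rw [← hD]; exact h) hfin
    obtain ⟨p, rfl⟩ := hz
    exact ⟨p, hz'⟩
  choose f hf using key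
  refine ⟨f, fun a b => ?_⟩
  have h1 : dist (f a) (f b) = dist (Φ (f a)) (Φ (f b)) := (hΦ.dist_eq _ _).symm
  have h2 : dist a b = dist (Ψ a) (Ψ b) := (hΨ.dist_eq _ _).symm
  have t1 : dist (Φ (f a)) (Φ (f b)) ≤ dist (Φ (f a)) (Ψ a) + dist (Ψ a) (Ψ b)
      + dist (Ψ b) (Φ (f b)) := dist_triangle4 _ _ _ _
  have t2 : dist (Ψ a) (Ψ b) ≤ dist (Ψ a) (Φ (f a)) + dist (Φ (f a)) (Φ (f b))
      + dist (Φ (f b)) (Ψ b) := dist_triangle4 _ _ _ _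
  have e1 := hf a
  have e2 := hf b
  rw [dist_comm (Ψ a) (Φ (f a))] at t2
  rw [dist_comm (Ψ b) (Φ (f b))] at t1
  rw [abs_le, h1, h2]
  constructor <;> linarith


lemma isClosed_badSet (n : ℕ) : IsClosed (badSet n) := by
  rw [← isOpen_compl_iff, Metric.isOpen_iff]
  intro q hq
  set c : ℝ := 1/(n+1 : ℝ) with hc
  set g : q.Rep × q.Rep × q.Rep × q.Rep → ℝ := fun z =>
    |dist z.1 z.2.1 - dist z.2.2.1 z.2.2.2| + max (c - dist z.1 z.2.1) 0
      + max (c - dist z.2.2.1 z.1) 0 + max (c - dist z.2.2.1 z.2.1) 0 with hg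
  have hcont : Continuous g := by
    have c1 : Continuous fun z : q.Rep × q.Rep × q.Rep × q.Rep => z.1 := continuous_fst
    have c2 : Continuous fun z : q.Rep × q.Rep × q.Rep × q.Rep => z.2.1 :=
      continuous_fst.comp continuous_snd
    have c3 : Continuous fun z : q.Rep × q.Rep × q.Rep × q.Rep => z.2.2.1 :=
      continuous_fst.comp (continuous_snd.comp continuous_snd)
    have c4 : Continuous fun z : q.Rep × q.Rep × q.Rep × q.Rep => z.2.2.2 :=
      continuous_snd.comp (continuous_snd.comp continuous_snd)
    exact ((((c1.dist c2).sub (c3.dist c4)).abs.add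
      ((continuous_const.sub (c1.dist c2)).max continuous_const)).add
      ((continuous_const.sub (c3.dist c1)).max continuous_const)).add
      ((continuous_const.sub (c3.dist c2)).max continuous_const)
  obtain ⟨z₀, -, hz₀⟩ := isCompact_univ.exists_isMinOn univ_nonempty hcont.continuousOn
  have hz₀' : ∀ z, g z₀ ≤ g z := fun z => hz₀ (mem_univ z)
  set δ : ℝ := g z₀ with hδ
  have habs : ∀ z : q.Rep × q.Rep × q.Rep × q.Rep, 0 ≤ |dist z.1 z.2.1 - dist z.2.2.1 z.2.2.2| :=
    fun z => abs_nonneg _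
  have hm1 : ∀ z : q.Rep × q.Rep × q.Rep × q.Rep, (0:ℝ) ≤ max (c - dist z.1 z.2.1) 0 :=
    fun z => le_max_right _ _
  have hm2 : ∀ z : q.Rep × q.Rep × q.Rep × q.Rep, (0:ℝ) ≤ max (c - dist z.2.2.1 z.1) 0 :=
    fun z => le_max_right _ _
  have hm3 : ∀ z : q.Rep × q.Rep × q.Rep × q.Rep, (0:ℝ) ≤ max (c - dist z.2.2.1 z.2.1) 0 :=
    fun z => le_max_right _ _
  have hδ0 : (0:ℝ) ≤ δ := by
    have := add_nonneg (add_nonneg (add_nonneg (habs z₀) (hm1 z₀)) (hm2 z₀)) (hm3 z₀)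
    simpa [hδ, hg] using this
  have hδpos : 0 < δ := by
    rcases lt_or_eq_of_le hδ0 with h' | h'
    · exact h'
    · exfalso
      apply hq
      obtain ⟨x, y, x', y'⟩ := z₀
      have h0 : |dist x y - dist x' y'| + max (c - dist x y) 0 + max (c - dist x' x) 0
          + max (c - dist x' y) 0 = 0 := by
        simpa [hg] using h'.symm
      have a1 := habs (x, y, x', y')
      have a2 := hm1 (x, y, x', y')
      have a3 := hm2 (x, y, x', y')
      have a4 := hm3 (x, y, x', y')
      simp only at a1 a2 a3 a4
      have e1 : |dist x y - dist x' y'| = 0 := by linarith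
      have e2 : max (c - dist x y) 0 = 0 := by linarith
      have e3 : max (c - dist x' x) 0 = 0 := by linarith
      have e4 : max (c - dist x' y) 0 = 0 := by linarith
      refine ⟨x, y, x', y', by linarith [abs_eq_zero.mp e1], ?_, ?_, ?_⟩
      · have := max_eq_right_iff.mp e2; linarith
      · have := max_eq_right_iff.mp e3; linarith
      · have := max_eq_right_iff.mp e4; linarith
  refine ⟨δ/11, by positivity, ?_⟩
  intro q' hq'
  simp only [mem_ball, mem_compl_iff] at hq' ⊢
  intro hbad
  obtain ⟨x, y, x', y', heq, h1, h2, h3⟩ := hbad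
  rw [dist_comm] at hq'
  obtain ⟨f, hf⟩ := exists_approx q q' hq'
  set ε : ℝ := δ/11 with hε
  have hεpos : 0 < ε := by positivity
  have key := hz₀' (f x, f y, f x', f y')
  simp only [hg] at key
  have b1 := hf x y
  have b2 := hf x' y'
  have b3 := hf x' x
  have b4 := hf x' y
  rw [abs_le] at b1 b2 b3 b4
  -- bound each summand
  have s1 : |dist (f x) (f y) - dist (f x') (f y')| ≤ 4*ε := by
    rw [abs_le]; constructor <;> linarith [b1.1, b1.2, b2.1, b2.2]
  have s2 : max (c - dist (f x) (f y)) 0 ≤ 2*ε :=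
    max_le (by linarith [b1.1]) (by linarith)
  have s3 : max (c - dist (f x') (f x)) 0 ≤ 2*ε :=
    max_le (by linarith [b3.1]) (by linarith)
  have s4 : max (c - dist (f x') (f y)) 0 ≤ 2*ε :=
    max_le (by linarith [b4.1]) (by linarith)
  have : δ ≤ 10*ε := le_trans key (by linarith)
  rw [hε] at this
  linarith


lemma nat_pair_inj {N a b a' b' : ℕ} (hb : b < N) (hb' : b' < N)
    (h : N*a+b = N*a'+b') : a = a' ∧ b = b' := by
  have ha : a = a' := by
    rcases Nat.lt_trichotomy a a' with h' | h' | h'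
    · exfalso
      have h2 : N*(a+1) ≤ N*a' := Nat.mul_le_mul_left _ h'
      have h3 : N*(a+1) = N*a + N := by ring
      omega
    · exact h'
    · exfalso
      have h2 : N*(a'+1) ≤ N*a := Nat.mul_le_mul_left _ h'
      have h3 : N*(a'+1) = N*a' + N := by ring
      omega
  subst ha
  omega

lemma pair_eq_minmax {α : Type*} [LinearOrder α] (i j : α) :
    ({i, j} : Set α) = {min i j, max i j} := by
  rcases le_total i j with h | h
  · rw [min_eq_left h, max_eq_right h]
  · rw [min_eq_right h, max_eq_left h, Set.pair_comm]

lemma injectiveDist_of_isometryEquiv {A B : Type*} [MetricSpace A] [MetricSpace B]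
    (F : A ≃ᵢ B) (h : InjectiveDist B) : InjectiveDist A := by
  intro x y x' y' hxy hxy' hd
  have hFd : dist (F x) (F y) = dist (F x') (F y') := by
    rw [F.dist_eq, F.dist_eq, hd]
  have key := h (F x) (F y) (F x') (F y') (fun hc => hxy (F.injective hc))
    (fun hc => hxy' (F.injective hc)) hFd
  have himg : F '' {x, y} = F '' {x', y'} := by
    rw [Set.image_pair, Set.image_pair, key]
  exact (Set.image_eq_image F.injective).mp himg

lemma exists_close_good (q : GHSpace) {ε : ℝ} (hε : 0 < ε) :
    ∃ q' : GHSpace, dist q q' ≤ 2*ε ∧ TotallyDisconnectedSpace q'.Rep ∧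
      InjectiveDist q'.Rep := by
  obtain ⟨t, -, htfin, htcov⟩ := finite_cover_balls_of_compact (X := q.Rep) isCompact_univ hε
  haveI := htfin.fintype
  have htne : t.Nonempty := by
    obtain ⟨x, -⟩ := (univ_nonempty : (univ : Set q.Rep).Nonempty)
    have hx := htcov (mem_univ x)
    simp only [mem_iUnion] at hx
    obtain ⟨y, hy, -⟩ := hx
    exact ⟨y, hy⟩
  haveI : Nonempty t := htne.to_subtype
  set N := Fintype.card t with hNdef
  have hN : 0 < N := Fintype.card_pos
  set e : Fin N ≃ t := (Fintype.equivFin t).symm with he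
  set d₀ : Fin N → Fin N → ℝ := fun i j => dist (e i : q.Rep) (e j : q.Rep) with hd₀
  set K : Fin N → Fin N → ℕ := fun i j => N * (min i j).val + (max i j).val with hK
  have hKsymm : ∀ i j, K i j = K j i := by
    intro i j; simp only [hK, min_comm, max_comm]
  have hKinj : ∀ i j i' j' : Fin N, K i j = K i' j' →
      min i j = min i' j' ∧ max i j = max i' j' := by
    intro i j i' j' hk
    obtain ⟨h1, h2⟩ := nat_pair_inj (max i j).isLt (max i' j').isLt hk
    exact ⟨Fin.ext h1, Fin.ext h2⟩
  have hKR : ∀ i j : Fin N, (K i j : ℝ) ≤ (N:ℝ) * N := by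
    intro i j
    have h1 : (min i j).val + 1 ≤ N := (min i j).isLt
    have h2 : (max i j).val < N := (max i j).isLt
    have : K i j < N * N := by
      calc N * (min i j).val + (max i j).val < N * (min i j).val + N := by omega
        _ = N * ((min i j).val + 1) := by ring
        _ ≤ N * N := Nat.mul_le_mul_left _ h1
    exact_mod_cast this.le
  -- choose a generic θ
  set f : (Fin N × Fin N) × Fin N × Fin N → ℝ := fun z =>
    (d₀ z.1.1 z.1.2 - d₀ z.2.1 z.2.2) /
      (ε * ((K z.2.1 z.2.2 : ℝ) - (K z.1.1 z.1.2 : ℝ))) with hf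
  have hIoo : (0:ℝ) < 1/((N:ℝ)*N+1) := by positivity
  obtain ⟨θ, ⟨hθ0, hθ1⟩, hθbad⟩ :=
    ((Set.Ioo_infinite hIoo).diff (Set.finite_range f)).nonempty
  have hθK : ∀ i j : Fin N, θ * (K i j : ℝ) < 1 := by
    intro i j
    have h1 := hKR i j
    have h2 : (0:ℝ) ≤ (K i j : ℝ) := Nat.cast_nonneg _
    have h3 : θ * ((N:ℝ)*N+1) < 1 := by
      have := mul_lt_mul_of_pos_right hθ1 (by positivity : (0:ℝ) < (N:ℝ)*N+1)
      rwa [one_div, inv_mul_cancel₀ (by positivity : ((N:ℝ)*N+1) ≠ 0)] at this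
    nlinarith
  -- the perturbed distance
  set D : Fin N → Fin N → ℝ := fun i j =>
    if i = j then 0 else d₀ i j + ε * (1 + θ * K i j) with hD
  have hDself : ∀ i, D i i = 0 := fun i => if_pos rfl
  have hDne : ∀ i j, i ≠ j → D i j = d₀ i j + ε * (1 + θ * K i j) := by
    intro i j h; simp only [hD, if_neg h]
  have hDlower : ∀ i j, i ≠ j → ε ≤ D i j := by
    intro i j h
    rw [hDne i j h]
    have h1 : (0:ℝ) ≤ d₀ i j := dist_nonneg
    have h2 : (0:ℝ) ≤ θ * K i j := mul_nonneg hθ0.le (Nat.cast_nonneg _)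
    nlinarith
  have hDupper : ∀ i j, i ≠ j → D i j ≤ d₀ i j + 2*ε := by
    intro i j h
    rw [hDne i j h]
    have := hθK i j
    nlinarith
  have hDnonneg : ∀ i j, 0 ≤ D i j := by
    intro i j
    by_cases h : i = j
    · rw [h, hDself]
    · linarith [hDlower i j h]
  have hDsymm : ∀ i j, D i j = D j i := by
    intro i j
    by_cases h : i = j
    · rw [h]
    · rw [hDne i j h, hDne j i (Ne.symm h), hKsymm]
      simp only [hd₀, dist_comm]
  have hDtri : ∀ i j l, D i l ≤ D i j + D j l := by
    intro i j l
    by_cases hil : i = l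
    · rw [hil, hDself]
      exact add_nonneg (hDnonneg _ _) (hDnonneg _ _)
    by_cases hij : i = j
    · rw [hij, hDself, zero_add]
    by_cases hjl : j = l
    · rw [hjl, hDself, add_zero]
    rw [hDne i l hil, hDne i j hij, hDne j l hjl]
    have htri : d₀ i l ≤ d₀ i j + d₀ j l := dist_triangle _ _ _
    have h1 := hθK i l
    have h2 : (0:ℝ) ≤ θ * K i j := mul_nonneg hθ0.le (Nat.cast_nonneg _)
    have h3 : (0:ℝ) ≤ θ * K j l := mul_nonneg hθ0.le (Nat.cast_nonneg _)
    nlinarith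
  have hDzero : ∀ i j, D i j = 0 → i = j := by
    intro i j h
    by_contra hne
    have := hDlower i j hne
    rw [h] at this
    linarith
  -- build the metric space
  letI : TopologicalSpace (Fin N) := ⊥
  letI mF : MetricSpace (Fin N) := MetricSpace.ofDistTopology D hDself hDsymm hDtri
    (fun s => ⟨fun _ x hx => ⟨ε, hε, fun y hy => by
        by_cases hne : x = y
        · rwa [← hne]
        · exact absurd hy (not_lt.2 (hDlower x y hne))⟩,
      fun _ => isOpen_discrete s⟩) hDzero
  haveI : Nonempty (Fin N) := ⟨⟨0, hN⟩⟩
  have hdistD : ∀ i j : Fin N, dist i j = D i j := fun i j => rfl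
  -- injectivity of the distance
  have hinjF : InjectiveDist (Fin N) := by
    intro i j i' j' hij hij' hd
    rw [hdistD, hdistD] at hd
    by_cases hKeq : K i j = K i' j'
    · obtain ⟨hmin, hmax⟩ := hKinj _ _ _ _ hKeq
      rw [pair_eq_minmax i j, pair_eq_minmax i' j', hmin, hmax]
    · exfalso
      apply hθbad
      refine ⟨((i, j), (i', j')), ?_⟩
      have hKcast : (K i j : ℝ) ≠ (K i' j' : ℝ) := fun hc => hKeq (Nat.cast_injective hc)
      have hKne : ((K i' j' : ℝ) - (K i j : ℝ)) ≠ 0 := sub_ne_zero.mpr (Ne.symm hKcast)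
      have heq : d₀ i j + ε * (1 + θ * K i j) = d₀ i' j' + ε * (1 + θ * K i' j') := by
        rw [← hDne i j hij, ← hDne i' j' hij', hd]
      simp only [hf]
      rw [div_eq_iff (mul_ne_zero (ne_of_gt hε) hKne)]
      linear_combination heq
  -- Gromov–Hausdorff estimate
  have hgh : ghDist q.Rep (Fin N) ≤ ε + (2*ε)/2 + 0 := by
    refine ghDist_le_of_approx_subsets (fun x : t => e.symm x) ?_ ?_ ?_
    · intro x
      have hx := htcov (mem_univ x)
      simp only [mem_iUnion] at hx
      obtain ⟨y, hy, hxy⟩ := hx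
      exact ⟨y, hy, (mem_ball.mp hxy).le⟩
    · intro x
      refine ⟨e x, ?_⟩
      simp only [Equiv.symm_apply_apply]
      rw [dist_self]
    · intro x y
      by_cases hxy : x = y
      · subst hxy
        rw [Subtype.dist_eq, dist_self, hdistD, hDself]
        simp only [sub_zero, abs_zero]
        positivity
      · have hne : e.symm x ≠ e.symm y := fun hc => hxy (by
          have h := congrArg e hc
          rwa [Equiv.apply_symm_apply, Equiv.apply_symm_apply] at h)
        have hxd : dist (x : q.Rep) (y : q.Rep) = d₀ (e.symm x) (e.symm y) := by
          simp only [hd₀, Equiv.apply_symm_apply]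
        have hDxy : dist (e.symm x) (e.symm y)
            = d₀ (e.symm x) (e.symm y) + ε*(1+θ*K (e.symm x) (e.symm y)) := by
          rw [hdistD, hDne _ _ hne]
        rw [Subtype.dist_eq, hxd, hDxy]
        have h1 := hθK (e.symm x) (e.symm y)
        have h2 : (0:ℝ) ≤ θ * K (e.symm x) (e.symm y) :=
          mul_nonneg hθ0.le (Nat.cast_nonneg _)
        rw [abs_le]
        constructor <;> nlinarith
  set q' := toGHSpace (Fin N) with hq'def
  have hiso : Nonempty (q'.Rep ≃ᵢ Fin N) := by
    rw [← toGHSpace_eq_toGHSpace_iff_isometryEquiv, q'.toGHSpace_rep]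
  obtain ⟨F⟩ := hiso
  haveI hTDF : TotallyDisconnectedSpace (Fin N) := inferInstance
  have hTD : TotallyDisconnectedSpace q'.Rep :=
    F.toHomeomorph.isEmbedding.isTotallyDisconnected_range.mp
      (isTotallyDisconnected_of_totallyDisconnectedSpace _)
  refine ⟨q', ?_, hTD, injectiveDist_of_isometryEquiv F hinjF⟩
  calc dist q q' = dist (toGHSpace q.Rep) (toGHSpace (Fin N)) := by rw [q.toGHSpace_rep]
    _ = ghDist q.Rep (Fin N) := rfl
    _ ≤ 2*ε := by linarith [hgh]


end InjDistAux

/-- The set of isometry classes in `M₀` (the subspace of the Gromov–Hausdorff space consisting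
of classes of totally disconnected compact metric spaces) of those spaces whose distance
function is injective is residual (comeager) in `M₀`. -/
theorem injectiveDist_residual_in_M0 :
    {p : {q : GromovHausdorff.GHSpace // TotallyDisconnectedSpace q.Rep} |
        InjectiveDist p.val.Rep} ∈
      residual {q : GromovHausdorff.GHSpace // TotallyDisconnectedSpace q.Rep} := by
  set S := {q : GHSpace // TotallyDisconnectedSpace q.Rep}
  have hsub : (⋂ n : ℕ, (Subtype.val ⁻¹' InjDistAux.badSet n : Set S)ᶜ) ⊆
      {p : S | InjectiveDist p.val.Rep} := by
    intro p hp
    simp only [mem_iInter, mem_compl_iff, mem_preimage] at hp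
    by_contra hc
    obtain ⟨n, hn⟩ := InjDistAux.exists_badSet_of_not_inj hc
    exact hp n hn
  refine Filter.mem_of_superset ?_ hsub
  refine (countable_iInter_mem).mpr fun n => residual_of_dense_open ?_ ?_
  · exact ((InjDistAux.isClosed_badSet n).preimage continuous_subtype_val).isOpen_compl
  · rw [Metric.dense_iff]
    intro p r hr
    obtain ⟨q', hd, hTD, hinj⟩ :=
      InjDistAux.exists_close_good p.val (show (0:ℝ) < r/3 by linarith)
    refine ⟨⟨q', hTD⟩, ?_, ?_⟩
    · rw [mem_ball, Subtype.dist_eq, dist_comm]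
      calc dist p.val q' ≤ 2*(r/3) := hd
        _ < r := by linarith
    · simp only [mem_compl_iff, mem_preimage]
      exact InjDistAux.notMem_badSet_of_inj hinj n
end

section
/- Every compact totally disconnected metric space whose distance function is injective admits a loose embedding into the real line ℝ. -/
open Set

/-! Auxiliary machinery: a "gap-counting" function with weights `4⁻¹ ^ n`. -/

noncomputable def gaux (q : ℕ → ℝ) (x : ℝ) : ℝ :=
  ∑' n, if q n < x then (4:ℝ)⁻¹ ^ n else 0

lemma summable_ite (P : ℕ → Prop) [DecidablePred P] :
    Summable (fun n => if P n then (4:ℝ)⁻¹ ^ n else 0) := by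
  refine Summable.of_nonneg_of_le (fun n => ?_) (fun n => ?_)
    (summable_geometric_of_lt_one (by norm_num) (by norm_num : (4:ℝ)⁻¹ < 1))
  · split <;> positivity
  · split
    · exact le_refl _
    · positivity

set_option maxHeartbeats 1000000 in
lemma tsum_ite_le (P : ℕ → Prop) [DecidablePred P] (N : ℕ) (h : ∀ n, P n → N ≤ n) :
    (∑' n, if P n then (4:ℝ)⁻¹ ^ n else 0) ≤ (4:ℝ)⁻¹ ^ N * (4/3) := by
  have hs : Summable (fun n => if N ≤ n then (4:ℝ)⁻¹ ^ n else 0) := summable_ite _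
  have h1 : (∑' n, if P n then (4:ℝ)⁻¹ ^ n else 0)
      ≤ ∑' n, if N ≤ n then (4:ℝ)⁻¹ ^ n else 0 := by
    refine Summable.tsum_le_tsum (fun n => ?_) (summable_ite _) hs
    by_cases hP : P n
    · rw [if_pos hP, if_pos (h n hP)]
    · rw [if_neg hP]; split <;> positivity
  have h2 : (∑' n, if N ≤ n then (4:ℝ)⁻¹ ^ n else 0) = (4:ℝ)⁻¹ ^ N * (4/3) := by
    rw [← Summable.sum_add_tsum_nat_add N hs]
    have e1 : (∑ i ∈ Finset.range N, if N ≤ i then (4:ℝ)⁻¹ ^ i else 0) = 0 :=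
      Finset.sum_eq_zero (fun i hi => if_neg (by simp only [Finset.mem_range] at hi; omega))
    have e2 : (∑' i : ℕ, if N ≤ i + N then (4:ℝ)⁻¹ ^ (i + N) else 0)
        = ∑' i : ℕ, (4:ℝ)⁻¹ ^ N * (4:ℝ)⁻¹ ^ i := by
      refine tsum_congr (fun i => ?_)
      rw [if_pos (Nat.le_add_left N i), pow_add, mul_comm]
    rw [e1, zero_add, e2, tsum_mul_left,
      tsum_geometric_of_lt_one (by norm_num) (by norm_num : (4:ℝ)⁻¹ < 1)]
    norm_num
  linarith

set_option maxHeartbeats 1000000 in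
lemma tsum_ite_lt (P Q : ℕ → Prop) [DecidablePred P] [DecidablePred Q] (n : ℕ)
    (hmin : ∀ m, m < n → (P m ↔ Q m)) (hP : P n) (hQ : ¬ Q n) :
    (∑' m, if Q m then (4:ℝ)⁻¹ ^ m else 0) < ∑' m, if P m then (4:ℝ)⁻¹ ^ m else 0 := by
  have hsP := summable_ite P
  have hsQ := summable_ite Q
  rw [← Summable.sum_add_tsum_nat_add (n+1) hsP, ← Summable.sum_add_tsum_nat_add (n+1) hsQ]
  have hheadP : (∑ i ∈ Finset.range (n+1), if P i then (4:ℝ)⁻¹ ^ i else 0)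
      = (∑ i ∈ Finset.range n, if Q i then (4:ℝ)⁻¹ ^ i else 0) + (4:ℝ)⁻¹ ^ n := by
    rw [Finset.sum_range_succ, if_pos hP]
    congr 1
    refine Finset.sum_congr rfl (fun i hi => ?_)
    have hiff := hmin i (Finset.mem_range.mp hi)
    by_cases h : Q i
    · rw [if_pos (hiff.mpr h), if_pos h]
    · rw [if_neg (fun hp => h (hiff.mp hp)), if_neg h]
  have hheadQ : (∑ i ∈ Finset.range (n+1), if Q i then (4:ℝ)⁻¹ ^ i else 0)
      = ∑ i ∈ Finset.range n, if Q i then (4:ℝ)⁻¹ ^ i else 0 := by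
    rw [Finset.sum_range_succ, if_neg hQ, add_zero]
  have htailP : (0:ℝ) ≤ ∑' i : ℕ, if P (i + (n+1)) then (4:ℝ)⁻¹ ^ (i + (n+1)) else 0 :=
    tsum_nonneg (fun i => by split <;> positivity)
  have htailQ : (∑' i : ℕ, if Q (i + (n+1)) then (4:ℝ)⁻¹ ^ (i + (n+1)) else 0)
      ≤ (4:ℝ)⁻¹ ^ (n+1) * (4/3) := by
    have hb : ∀ i : ℕ, (if Q (i + (n+1)) then (4:ℝ)⁻¹ ^ (i + (n+1)) else 0)
        ≤ (4:ℝ)⁻¹ ^ (n+1) * (4:ℝ)⁻¹ ^ i := by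
      intro i
      have he : (4:ℝ)⁻¹ ^ (n+1) * (4:ℝ)⁻¹ ^ i = (4:ℝ)⁻¹ ^ (i + (n+1)) := by
        rw [← pow_add, add_comm]
      rw [he]
      split
      · exact le_refl _
      · positivity
    calc (∑' i : ℕ, if Q (i + (n+1)) then (4:ℝ)⁻¹ ^ (i + (n+1)) else 0)
        ≤ ∑' i : ℕ, (4:ℝ)⁻¹ ^ (n+1) * (4:ℝ)⁻¹ ^ i := by
          refine Summable.tsum_le_tsum hb ?_ ?_
          · exact (summable_nat_add_iff (n+1)).mpr hsQ
          · exact (summable_geometric_of_lt_one (by norm_num)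
              (by norm_num : (4:ℝ)⁻¹ < 1)).mul_left _
      _ = (4:ℝ)⁻¹ ^ (n+1) * (4/3) := by
          rw [tsum_mul_left,
            tsum_geometric_of_lt_one (by norm_num) (by norm_num : (4:ℝ)⁻¹ < 1)]
          norm_num
  have hpow : (4:ℝ)⁻¹ ^ (n+1) * (4/3) < (4:ℝ)⁻¹ ^ n := by
    have h0 : (0:ℝ) < (4:ℝ)⁻¹ ^ n := by positivity
    rw [pow_succ]
    nlinarith
  rw [hheadP, hheadQ]
  linarith

lemma tsum_ite_inj {P Q : ℕ → Prop} [DecidablePred P] [DecidablePred Q]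
    (h : (∑' n, if P n then (4:ℝ)⁻¹ ^ n else 0) = ∑' n, if Q n then (4:ℝ)⁻¹ ^ n else 0) :
    ∀ n, P n ↔ Q n := by
  by_contra hc
  have hc' : ∃ n, ¬(P n ↔ Q n) := not_forall.mp hc
  have hnn := Nat.find_spec hc'
  have hmin : ∀ m, m < Nat.find hc' → (P m ↔ Q m) :=
    fun m hm => not_not.mp (Nat.find_min hc' hm)
  rcases Classical.em (P (Nat.find hc')) with hP | hP
  · have hQ : ¬ Q (Nat.find hc') := fun hq => hnn ⟨fun _ => hq, fun _ => hP⟩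
    exact absurd h (ne_of_gt (tsum_ite_lt P Q _ hmin hP hQ))
  · have hQ : Q (Nat.find hc') := by
      by_contra hq
      exact hnn ⟨fun hp => absurd hp hP, fun hq' => absurd hq' hq⟩
    have hmin' : ∀ m, m < Nat.find hc' → (Q m ↔ P m) := fun m hm => (hmin m hm).symm
    exact absurd h.symm (ne_of_gt (tsum_ite_lt Q P _ hmin' hQ hP))

lemma gdiff (q : ℕ → ℝ) {a b : ℝ} (hab : a ≤ b) (ha : ∀ n, q n ≠ a) :
    gaux q b = gaux q a + ∑' n, if a < q n ∧ q n < b then (4:ℝ)⁻¹ ^ n else 0 := by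
  rw [gaux, gaux, ← Summable.tsum_add (summable_ite _) (summable_ite _)]
  refine tsum_congr (fun n => ?_)
  by_cases h1 : q n < a
  · rw [if_pos h1, if_pos (lt_of_lt_of_le h1 hab),
      if_neg (fun hc : a < q n ∧ q n < b => absurd h1 (not_lt.mpr hc.1.le)), add_zero]
  · have h1' : a < q n := lt_of_le_of_ne (not_lt.mp h1) (Ne.symm (ha n))
    rw [if_neg h1, zero_add]
    by_cases h2 : q n < b
    · rw [if_pos h2, if_pos ⟨h1', h2⟩]
    · rw [if_neg h2, if_neg (fun hc : a < q n ∧ q n < b => h2 hc.2)]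

lemma gmono (q : ℕ → ℝ) {K : Set ℝ} (hqK : ∀ n, q n ∉ K)
    (hdense : ∀ a ∈ K, ∀ b ∈ K, a < b → ∃ n, a < q n ∧ q n < b)
    {a b : ℝ} (ha : a ∈ K) (hb : b ∈ K) (hab : a < b) : gaux q a < gaux q b := by
  have hqa : ∀ n, q n ≠ a := fun n hn => hqK n (hn ▸ ha)
  obtain ⟨n, hn⟩ := hdense a ha b hb hab
  have h1 := gdiff q hab.le hqa
  have h2 : (4:ℝ)⁻¹ ^ n ≤ ∑' m, if a < q m ∧ q m < b then (4:ℝ)⁻¹ ^ m else 0 := by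
    have hle := Summable.le_tsum (summable_ite (fun m => a < q m ∧ q m < b)) n
      (fun j _ => by split <;> positivity)
    rwa [if_pos hn] at hle
  have h3 : (0:ℝ) < (4:ℝ)⁻¹ ^ n := by positivity
  rw [h1]
  linarith

lemma gcont (q : ℕ → ℝ) {K : Set ℝ} (hqK : ∀ n, q n ∉ K) {a : ℝ} (ha : a ∈ K)
    {ε : ℝ} (hε : 0 < ε) :
    ∃ η > 0, ∀ b ∈ K, |b - a| < η → |gaux q b - gaux q a| < ε := by
  obtain ⟨N, hN⟩ : ∃ N : ℕ, (4:ℝ)⁻¹ ^ N * (4/3) < ε := by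
    obtain ⟨N, hN⟩ := exists_pow_lt_of_lt_one
      (show (0:ℝ) < ε * (3/4) by positivity) (show (4:ℝ)⁻¹ < 1 by norm_num)
    exact ⟨N, by nlinarith⟩
  have hqa : ∀ n, q n ≠ a := fun n hn => hqK n (hn ▸ ha)
  set s : Finset ℝ := insert 1 ((Finset.range N).image fun i => |q i - a|) with hs
  have hsne : s.Nonempty := ⟨1, Finset.mem_insert_self _ _⟩
  set η := s.min' hsne with hηdef
  have hηpos : 0 < η := by
    rw [hηdef]
    rw [Finset.lt_min'_iff]
    intro y hy
    rw [hs] at hy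
    rcases Finset.mem_insert.mp hy with h | h
    · rw [h]; norm_num
    · obtain ⟨i, _, rfl⟩ := Finset.mem_image.mp h
      exact abs_pos.mpr (sub_ne_zero.mpr (hqa i))
  have hle : ∀ i, i < N → η ≤ |q i - a| := by
    intro i hi
    refine Finset.min'_le _ _ ?_
    rw [hs]
    exact Finset.mem_insert_of_mem (Finset.mem_image.mpr ⟨i, Finset.mem_range.mpr hi, rfl⟩)
  refine ⟨η, hηpos, fun b hb hba => ?_⟩
  have hqb : ∀ n, q n ≠ b := fun n hn => hqK n (hn ▸ hb)
  have key : ∀ n, (a < q n ∧ q n < b) ∨ (b < q n ∧ q n < a) → N ≤ n := by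
    intro n hn
    by_contra hlt
    push_neg at hlt
    have h1 := hle n hlt
    rcases hn with ⟨h2, h3⟩ | ⟨h2, h3⟩
    · have e : |q n - a| = q n - a := abs_of_pos (by linarith)
      have hba' : b - a ≤ |b - a| := le_abs_self _
      rw [e] at h1
      linarith
    · have e : |q n - a| = -(q n - a) := abs_of_neg (by linarith)
      have hba' : -(b - a) ≤ |b - a| := neg_le_abs _
      rw [e] at h1
      linarith
  rcases le_or_gt a b with hab | hba'
  · have h1 := gdiff q hab hqa
    have h2 : (0:ℝ) ≤ ∑' n, if a < q n ∧ q n < b then (4:ℝ)⁻¹ ^ n else 0 :=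
      tsum_nonneg (fun i => by split <;> positivity)
    have h3 := tsum_ite_le (fun n => a < q n ∧ q n < b) N (fun n hn => key n (Or.inl hn))
    rw [h1, add_sub_cancel_left, abs_of_nonneg h2]
    linarith
  · have h1 := gdiff q hba'.le hqb
    have h2 : (0:ℝ) ≤ ∑' n, if b < q n ∧ q n < a then (4:ℝ)⁻¹ ^ n else 0 :=
      tsum_nonneg (fun i => by split <;> positivity)
    have h3 := tsum_ite_le (fun n => b < q n ∧ q n < a) N (fun n hn => key n (Or.inr hn))
    have he : gaux q b - gaux q a = -(∑' n, if b < q n ∧ q n < a then (4:ℝ)⁻¹ ^ n else 0) := by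
      rw [h1]; ring
    rw [he, abs_neg, abs_of_nonneg h2]
    linarith

lemma interval_unique (q : ℕ → ℝ) {K : Set ℝ}
    (hdense : ∀ a ∈ K, ∀ b ∈ K, a < b → ∃ n, a < q n ∧ q n < b)
    {a b c d : ℝ} (ha : a ∈ K) (hb : b ∈ K) (hc : c ∈ K) (hd : d ∈ K)
    (hab : a < b) (hcd : c < d)
    (h : ∀ n, (a < q n ∧ q n < b) ↔ (c < q n ∧ q n < d)) : a = c ∧ b = d := by
  have key : ∀ a b c d : ℝ, a ∈ K → b ∈ K → c ∈ K → d ∈ K → a < b → c < d →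
      (∀ n, (a < q n ∧ q n < b) ↔ (c < q n ∧ q n < d)) → c ≤ a := by
    intro a b c d ha hb hc hd hab hcd h
    by_contra hlt
    push_neg at hlt
    rcases lt_or_ge c b with hcb | hbc
    · obtain ⟨n, hn1, hn2⟩ := hdense a ha c hc hlt
      have h2 := (h n).mp ⟨hn1, lt_trans hn2 hcb⟩
      linarith [h2.1]
    · obtain ⟨n, hn1, hn2⟩ := hdense c hc d hd hcd
      have h2 := (h n).mpr ⟨hn1, hn2⟩
      linarith [h2.2]
  have hac : a = c := le_antisymm
    (key c d a b hc hd ha hb hcd hab (fun n => (h n).symm))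
    (key a b c d ha hb hc hd hab hcd h)
  subst hac
  have key2 : ∀ b d : ℝ, b ∈ K → d ∈ K → a < b → a < d →
      (∀ n, (a < q n ∧ q n < b) ↔ (a < q n ∧ q n < d)) → b ≤ d := by
    intro b d hb hd hab had h
    by_contra hlt
    push_neg at hlt
    obtain ⟨n, hn1, hn2⟩ := hdense d hd b hb hlt
    have h2 := (h n).mp ⟨lt_trans had hn1, hn2⟩
    linarith [h2.2]
  exact ⟨rfl, le_antisymm (key2 b d hb hd hab hcd h)
    (key2 d b hd hb hcd hab (fun n => (h n).symm))⟩

set_option maxHeartbeats 1000000 in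
/-- Every compact totally disconnected metric space with injective distance function admits
a loose embedding into the real line. -/
theorem looselyEmbeddable_of_injectiveDist (X : Type*) [MetricSpace X] [CompactSpace X]
    [TotallyDisconnectedSpace X] (hX : InjectiveDist X) :
    ∃ f : X → ℝ, IsLooseEmbedding f := by
  rcases isEmpty_or_nonempty X with hE | hNE
  · exact ⟨fun _ => 0, fun a => (hE.false a).elim, continuous_const,
      fun x => (hE.false x).elim⟩
  obtain ⟨x₀⟩ := hNE
  set f₀ : X → ℝ := fun y => dist x₀ y with hf₀
  have hf₀c : Continuous f₀ := continuous_const.dist continuous_id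
  have hf₀i : Function.Injective f₀ := by
    intro y y' h
    simp only [hf₀] at h
    by_cases hy : y = x₀
    · subst hy
      rw [dist_self] at h
      exact dist_eq_zero.mp h.symm
    by_cases hy' : y' = x₀
    · subst hy'
      rw [dist_self] at h
      exact (dist_eq_zero.mp h).symm
    · have hp := hX x₀ y x₀ y' (Ne.symm hy) (Ne.symm hy') h
      rcases Set.pair_eq_pair_iff.mp hp with ⟨_, h2⟩ | ⟨h1, h2⟩
      · exact h2
      · exact absurd h2 hy
  set K : Set ℝ := Set.range f₀ with hK
  have hmem : ∀ u : X, f₀ u ∈ K := fun u => ⟨u, rfl⟩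
  have hKtd : IsTotallyDisconnected K :=
    (hf₀c.isClosedEmbedding hf₀i).toIsEmbedding.isTotallyDisconnected_range.mpr ‹_›
  have hgap : ∀ a ∈ K, ∀ b ∈ K, a < b → ∃ t, t ∈ Ioo a b ∧ t ∉ K := by
    intro a ha b hb hab
    by_contra hcon
    push_neg at hcon
    have hIcc : Icc a b ⊆ K := by
      intro t ht
      rcases eq_or_lt_of_le ht.1 with h1 | h1
      · exact h1 ▸ ha
      rcases eq_or_lt_of_le ht.2 with h2 | h2
      · exact h2 ▸ hb
      · exact hcon t ⟨h1, h2⟩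
    have hsub := hKtd (Icc a b) hIcc isPreconnected_Icc
    exact hab.ne (hsub (left_mem_Icc.mpr hab.le) (right_mem_Icc.mpr hab.le))
  have hzK : ∃ z : ℝ, z ∉ K := by
    refine ⟨-1, ?_⟩
    rintro ⟨y, hy⟩
    have h1 : (0:ℝ) ≤ dist x₀ y := dist_nonneg
    have h2 : dist x₀ y = -1 := hy
    linarith
  obtain ⟨z₀, hz₀⟩ := hzK
  have pickex : ∀ p : ℚ × ℚ, ∃ x : ℝ, x ∉ K ∧
      ((∃ t, t ∈ Ioo ((p.1:ℝ)) ((p.2:ℝ)) ∧ t ∉ K) → x ∈ Ioo ((p.1:ℝ)) ((p.2:ℝ))) := by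
    intro p
    by_cases h : ∃ t, t ∈ Ioo ((p.1:ℝ)) ((p.2:ℝ)) ∧ t ∉ K
    · obtain ⟨t, ht1, ht2⟩ := h
      exact ⟨t, ht2, fun _ => ht1⟩
    · exact ⟨z₀, hz₀, fun hc => absurd hc h⟩
  choose pick hpick1 hpick2 using pickex
  obtain ⟨e, he⟩ : ∃ e : ℕ → ℚ × ℚ, Function.Surjective e :=
    exists_surjective_nat (ℚ × ℚ)
  set q : ℕ → ℝ := fun n => pick (e n) with hqdef
  have hqK : ∀ n, q n ∉ K := fun n => hpick1 _
  have hdense : ∀ a ∈ K, ∀ b ∈ K, a < b → ∃ n, a < q n ∧ q n < b := by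
    intro a ha b hb hab
    obtain ⟨t, ht, htK⟩ := hgap a ha b hb hab
    obtain ⟨r, hr1, hr2⟩ := exists_rat_btwn ht.1
    obtain ⟨s, hs1, hs2⟩ := exists_rat_btwn ht.2
    obtain ⟨n, hn⟩ := he (r, s)
    refine ⟨n, ?_⟩
    have heq : q n = pick (r, s) := by rw [hqdef]; simp only [hn]
    have hx := hpick2 (r, s) ⟨t, ⟨hr2, hs1⟩, htK⟩
    rw [heq]
    exact ⟨lt_trans hr1 hx.1, lt_trans hx.2 hs2⟩
  have hmono : ∀ u v : X, f₀ u < f₀ v → gaux q (f₀ u) < gaux q (f₀ v) :=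
    fun u v h => gmono q hqK hdense (hmem u) (hmem v) h
  have hFi : Function.Injective (fun y => gaux q (f₀ y)) := by
    intro u v h
    by_contra hne
    have hne' : f₀ u ≠ f₀ v := fun hc => hne (hf₀i hc)
    rcases lt_or_gt_of_ne hne' with h1 | h1
    · exact absurd h (ne_of_lt (hmono u v h1))
    · exact absurd h.symm (ne_of_lt (hmono v u h1))
  have hFc : Continuous (fun y => gaux q (f₀ y)) := by
    rw [Metric.continuous_iff]
    intro x ε hε
    obtain ⟨η, hη, hball⟩ := gcont q hqK (hmem x) hε
    obtain ⟨δ, hδ, hd⟩ := Metric.continuous_iff.mp hf₀c x η hη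
    refine ⟨δ, hδ, fun y hy => ?_⟩
    have h1 := hd y hy
    rw [Real.dist_eq] at h1
    have h2 := hball (f₀ y) (hmem y) h1
    rw [Real.dist_eq]
    exact h2
  have key : ∀ u v z w : X, f₀ u < f₀ v → f₀ z < f₀ w →
      gaux q (f₀ v) - gaux q (f₀ u) = gaux q (f₀ w) - gaux q (f₀ z) → u = z ∧ v = w := by
    intro u v z w huv hzw h
    have hqu : ∀ n, q n ≠ f₀ u := fun n hn => hqK n (hn ▸ hmem u)
    have hqz : ∀ n, q n ≠ f₀ z := fun n hn => hqK n (hn ▸ hmem z)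
    have h1 := gdiff q huv.le hqu
    have h2 := gdiff q hzw.le hqz
    have h3 : (∑' n, if f₀ u < q n ∧ q n < f₀ v then (4:ℝ)⁻¹ ^ n else 0)
        = ∑' n, if f₀ z < q n ∧ q n < f₀ w then (4:ℝ)⁻¹ ^ n else 0 := by
      rw [h1, h2] at h
      linarith
    have h4 := tsum_ite_inj h3
    obtain ⟨e1, e2⟩ := interval_unique q hdense (hmem u) (hmem v) (hmem z) (hmem w)
      huv hzw h4
    exact ⟨hf₀i e1, hf₀i e2⟩
  refine ⟨fun y => gaux q (f₀ y), hFi, hFc, ?_⟩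
  intro x x' z z'
  dsimp only
  constructor
  · intro h
    rw [Real.dist_eq, Real.dist_eq] at h
    by_cases hxx : x = x'
    · subst hxx
      rw [sub_self, abs_zero] at h
      have h0 : gaux q (f₀ z) - gaux q (f₀ z') = 0 := abs_eq_zero.mp h.symm
      have hz : z = z' := hFi (by linarith : gaux q (f₀ z) = gaux q (f₀ z'))
      rw [hz, dist_self, dist_self]
    · by_cases hzz : z = z'
      · subst hzz
        rw [sub_self, abs_zero] at h
        have h0 : gaux q (f₀ x) - gaux q (f₀ x') = 0 := abs_eq_zero.mp h
        exact absurd (hFi (by linarith : gaux q (f₀ x) = gaux q (f₀ x'))) hxx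
      · have hne1 : f₀ x ≠ f₀ x' := fun hc => hxx (hf₀i hc)
        have hne2 : f₀ z ≠ f₀ z' := fun hc => hzz (hf₀i hc)
        have habs : ∀ u v : X, f₀ u < f₀ v →
            |gaux q (f₀ u) - gaux q (f₀ v)| = gaux q (f₀ v) - gaux q (f₀ u) := by
          intro u v huv
          rw [abs_sub_comm, abs_of_nonneg (by linarith [hmono u v huv])]
        have habs' : ∀ u v : X, f₀ v < f₀ u →
            |gaux q (f₀ u) - gaux q (f₀ v)| = gaux q (f₀ u) - gaux q (f₀ v) := by
          intro u v huv
          rw [abs_of_nonneg (by linarith [hmono v u huv])]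
        rcases lt_or_gt_of_ne hne1 with ho1 | ho1 <;> rcases lt_or_gt_of_ne hne2 with ho2 | ho2
        · rw [habs x x' ho1, habs z z' ho2] at h
          obtain ⟨e1, e2⟩ := key x x' z z' ho1 ho2 h
          rw [e1, e2]
        · rw [habs x x' ho1, habs' z z' ho2] at h
          obtain ⟨e1, e2⟩ := key x x' z' z ho1 ho2 h
          rw [e1, e2]
          exact dist_comm z' z
        · rw [habs' x x' ho1, habs z z' ho2] at h
          obtain ⟨e1, e2⟩ := key x' x z z' ho1 ho2 h
          rw [e1, e2]
          exact dist_comm z' z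
        · rw [habs' x x' ho1, habs' z z' ho2] at h
          obtain ⟨e1, e2⟩ := key x' x z' z ho1 ho2 h
          rw [e1, e2]
  · intro h
    by_cases hxx : x = x'
    · subst hxx
      rw [dist_self] at h
      have hz : z = z' := dist_eq_zero.mp h.symm
      rw [hz, dist_self, dist_self]
    · have hzz : z ≠ z' := by
        intro hc
        subst hc
        rw [dist_self] at h
        exact hxx (dist_eq_zero.mp h)
      have hp := hX x x' z z' hxx hzz h
      rcases Set.pair_eq_pair_iff.mp hp with ⟨e1, e2⟩ | ⟨e1, e2⟩
      · rw [e1, e2]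
      · rw [e1, e2]
        exact dist_comm _ _
end

section
/- The subset M_0 of the Gromov–Hausdorff space, consisting of isometry classes of totally disconnected nonempty compact metric spaces, is a Gδ subset (a countable intersection of open sets) of the Gromov–Hausdorff space. -/
open Metric Set GromovHausdorff Bornology

/-- `X` admits a finite cover by sets of diameter at most `ε' < ε` which are pairwise
`δ`-separated for some `δ > 0`. -/
def GHPart (ε : ℝ) (X : Type*) [MetricSpace X] : Prop :=
  ∃ (n : ℕ) (A : Fin n → Set X) (ε' δ : ℝ), 0 ≤ ε' ∧ ε' < ε ∧ 0 < δ ∧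
    (⋃ i, A i) = univ ∧ (∀ i, Metric.diam (A i) ≤ ε') ∧
    ∀ i j, i ≠ j → ∀ x ∈ A i, ∀ y ∈ A j, δ ≤ dist x y

lemma ghPart_of_totallyDisconnected (X : Type*) [MetricSpace X] [CompactSpace X]
    [TotallyDisconnectedSpace X] {ε : ℝ} (hε : 0 < ε) : GHPart ε X := by
  classical
  have h : ∀ x : X, ∃ V : Set X, IsClopen V ∧ x ∈ V ∧ V ⊆ ball x (ε / 3) := fun x =>
    compact_exists_isClopen_in_isOpen isOpen_ball (mem_ball_self (by linarith))
  choose V hVc hxV hVb using h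
  obtain ⟨t, ht⟩ := isCompact_univ.elim_finite_subcover V (fun x => (hVc x).isOpen)
    (fun x _ => mem_iUnion.2 ⟨x, hxV x⟩)
  set n := t.card with hn
  set e := t.equivFin with he
  set W : Fin n → Set X := fun i => V ((e.symm i : X)) with hW
  have hWc : ∀ i, IsClopen (W i) := fun i => hVc _
  set A : Fin n → Set X := fun i =>
    W i \ ⋃ j ∈ Finset.univ.filter (· < i), W j with hA
  have hAc : ∀ i, IsClopen (A i) := fun i =>
    (hWc i).diff (isClopen_biUnion_finset fun j _ => hWc j)
  have hAW : ∀ i, A i ⊆ W i := fun i => diff_subset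
  have hdisj : ∀ i j, i ≠ j → ∀ x, x ∈ A i → x ∈ A j → False := by
    intro i j hij x hxi hxj
    rcases lt_or_gt_of_ne hij with hlt | hlt
    · exact hxj.2 (mem_biUnion (Finset.mem_filter.2 ⟨Finset.mem_univ _, hlt⟩) hxi.1)
    · exact hxi.2 (mem_biUnion (Finset.mem_filter.2 ⟨Finset.mem_univ _, hlt⟩) hxj.1)
  have hcover : (⋃ i, A i) = univ := by
    apply eq_univ_of_forall
    intro x
    have hx : ∃ i : Fin n, x ∈ W i := by
      rcases mem_iUnion₂.1 (ht (mem_univ x)) with ⟨y, hyt, hy⟩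
      exact ⟨e ⟨y, hyt⟩, by simpa [hW, Equiv.symm_apply_apply] using hy⟩
    set S := Finset.univ.filter (fun i => x ∈ W i) with hS
    have hSne : S.Nonempty := ⟨hx.choose, Finset.mem_filter.2 ⟨Finset.mem_univ _, hx.choose_spec⟩⟩
    set i₀ := S.min' hSne with hi₀
    refine mem_iUnion.2 ⟨i₀, ⟨(Finset.mem_filter.1 (S.min'_mem hSne)).2, ?_⟩⟩
    intro hxj
    rcases mem_iUnion₂.1 hxj with ⟨j, hj, hxWj⟩
    have hjS : j ∈ S := Finset.mem_filter.2 ⟨Finset.mem_univ _, hxWj⟩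
    exact absurd (S.min'_le j hjS) (not_le.2 (Finset.mem_filter.1 hj).2)
  have hdiam : ∀ i, Metric.diam (A i) ≤ 2 * (ε / 3) := by
    intro i
    have h1 : A i ⊆ ball ((e.symm i : X)) (ε / 3) := (hAW i).trans (hVb _)
    calc Metric.diam (A i) ≤ Metric.diam (ball ((e.symm i : X)) (ε / 3)) :=
          Metric.diam_mono h1 isBounded_ball
      _ ≤ 2 * (ε / 3) := diam_ball (by linarith)
  obtain ⟨δ, hδ, hball⟩ := lebesgue_number_lemma_of_metric isCompact_univ
    (fun i => (hAc i).isOpen) (hcover ▸ subset_rfl)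
  refine ⟨n, A, 2 * (ε / 3), δ, by linarith, by linarith, hδ, hcover, hdiam, ?_⟩
  intro i j hij x hxi y hyj
  by_contra hcon
  push_neg at hcon
  obtain ⟨k, hk⟩ := hball x (mem_univ x)
  have hxk : x ∈ A k := hk (mem_ball_self hδ)
  have hki : k = i := by
    by_contra hne
    exact hdisj k i hne x hxk hxi
  have hyk : y ∈ A k := hk (by rwa [mem_ball, dist_comm])
  rw [hki] at hyk
  exact hdisj i j hij y hyk hyj

lemma totallyDisconnected_of_ghPart (X : Type*) [MetricSpace X] [CompactSpace X]
    (h : ∀ ε : ℝ, 0 < ε → GHPart ε X) : TotallyDisconnectedSpace X := by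
  refine ⟨fun t _ ht x hx y hy => ?_⟩
  by_contra hxy
  have hd : 0 < dist x y := dist_pos.2 hxy
  obtain ⟨n, A, ε', δ, hε'0, hε'ε, hδ, hcover, hdiam, hsep⟩ := h (dist x y) hd
  have hAopen : ∀ i, IsOpen (A i) := by
    intro i
    rw [Metric.isOpen_iff]
    intro a ha
    refine ⟨δ, hδ, fun b hb => ?_⟩
    obtain ⟨j, hj⟩ := mem_iUnion.1 (hcover ▸ mem_univ b)
    rcases eq_or_ne j i with rfl | hne
    · exact hj
    · exact absurd (hsep i j hne.symm a ha b hj) (not_le.2 (by rwa [dist_comm, ← mem_ball]))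
  obtain ⟨i, hxi⟩ := mem_iUnion.1 (hcover ▸ mem_univ x)
  classical
  have htsub : t ⊆ A i := by
    refine IsPreconnected.subset_left_of_subset_union (v := ⋃ j ∈ Finset.univ.erase i, A j)
      (hAopen i)
      (isOpen_biUnion fun j _ => hAopen j) ?_ ?_ ⟨x, hx, hxi⟩ ht
    · rw [disjoint_left]
      rintro z hzi hzv
      obtain ⟨j, hjmem, hzj⟩ := mem_iUnion₂.1 hzv
      have hji : j ≠ i := (Finset.mem_erase.1 hjmem).1
      have := hsep i j (Ne.symm hji) z hzi z hzj
      simp at this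
      linarith
    · intro z _
      obtain ⟨j, hj⟩ := mem_iUnion.1 (hcover ▸ mem_univ z)
      rcases eq_or_ne j i with rfl | hne
      · exact Or.inl hj
      · exact Or.inr (mem_iUnion₂.2 ⟨j, Finset.mem_erase.2 ⟨hne, Finset.mem_univ _⟩, hj⟩)
  have hb : IsBounded (A i) := isCompact_univ.isBounded.subset (subset_univ _)
  have := Metric.dist_le_diam_of_mem hb (htsub hx) (htsub hy)
  linarith [hdiam i]

lemma isOpen_setOf_ghPart (ε : ℝ) : IsOpen {p : GromovHausdorff.GHSpace | GHPart ε p.Rep} := by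
  rw [Metric.isOpen_iff]
  rintro p ⟨n, A, ε', δ, hε'0, hε'ε, hδ, hcover, hdiam, hsep⟩
  set η := min ((ε - ε') / 4) (δ / 4) with hη
  have hη0 : 0 < η := lt_min (by linarith) (by linarith)
  have hη1 : η ≤ (ε - ε') / 4 := min_le_left _ _
  have hη2 : η ≤ δ / 4 := min_le_right _ _
  refine ⟨η, hη0, fun q hq => ?_⟩
  set Φ := optimalGHInjl p.Rep q.Rep with hΦdef
  set Ψ := optimalGHInjr p.Rep q.Rep with hΨdef
  have hΦ : Isometry Φ := isometry_optimalGHInjl p.Rep q.Rep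
  have hΨ : Isometry Ψ := isometry_optimalGHInjr p.Rep q.Rep
  have hdist : hausdorffDist (range Φ) (range Ψ) < η := by
    rw [hΦdef, hΨdef, hausdorffDist_optimal]
    calc ghDist p.Rep q.Rep = dist p q := (dist_ghDist p q).symm
      _ < η := by rw [dist_comm]; exact mem_ball.1 hq
  have hfin : EMetric.hausdorffEdist (range Φ) (range Ψ) ≠ ⊤ :=
    hausdorffEdist_ne_top_of_nonempty_of_bounded (range_nonempty _) (range_nonempty _)
      (isCompact_range hΦ.continuous).isBounded (isCompact_range hΨ.continuous).isBounded
  set B : Fin n → Set q.Rep := fun i => {y | ∃ x ∈ A i, dist (Φ x) (Ψ y) < η} with hB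
  have hAb : ∀ i, IsBounded (A i) := fun i => isCompact_univ.isBounded.subset (subset_univ _)
  refine ⟨n, B, ε' + 2 * η, δ - 2 * η, by linarith, by linarith, by linarith, ?_, ?_, ?_⟩
  · apply eq_univ_of_forall
    intro y
    obtain ⟨z, hz, hzy⟩ := exists_dist_lt_of_hausdorffDist_lt' (mem_range_self y) hdist hfin
    obtain ⟨x, rfl⟩ := hz
    obtain ⟨i, hxi⟩ := mem_iUnion.1 (hcover ▸ mem_univ x)
    exact mem_iUnion.2 ⟨i, ⟨x, hxi, hzy⟩⟩
  · intro i
    refine Metric.diam_le_of_forall_dist_le (by linarith) ?_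
    rintro y ⟨x, hx, hxy⟩ y' ⟨x', hx', hx'y'⟩
    have h1 : dist y y' = dist (Ψ y) (Ψ y') := (hΨ.dist_eq _ _).symm
    have h2 : dist (Ψ y) (Ψ y') ≤ dist (Ψ y) (Φ x) + dist (Φ x) (Φ x') + dist (Φ x') (Ψ y') :=
      dist_triangle4 _ _ _ _
    have h3 : dist (Φ x) (Φ x') = dist x x' := hΦ.dist_eq _ _
    have h4 : dist x x' ≤ ε' := (Metric.dist_le_diam_of_mem (hAb i) hx hx').trans (hdiam i)
    have h5 : dist (Ψ y) (Φ x) < η := by rwa [dist_comm]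
    linarith
  · rintro i j hij y ⟨x, hx, hxy⟩ y' ⟨x', hx', hx'y'⟩
    have h1 : δ ≤ dist x x' := hsep i j hij x hx x' hx'
    have h2 : dist (Φ x) (Φ x') = dist x x' := hΦ.dist_eq _ _
    have h3 : dist (Φ x) (Φ x') ≤ dist (Φ x) (Ψ y) + dist (Ψ y) (Ψ y') + dist (Ψ y') (Φ x') :=
      dist_triangle4 _ _ _ _
    have h4 : dist (Ψ y) (Ψ y') = dist y y' := hΨ.dist_eq _ _
    have h5 : dist (Ψ y') (Φ x') < η := by rwa [dist_comm]
    linarith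

/-- The subset `M₀` of the Gromov–Hausdorff space consisting of isometry classes of totally
disconnected nonempty compact metric spaces is a Gδ subset. -/
theorem isGδ_totallyDisconnected_GHSpace :
    IsGδ {p : GromovHausdorff.GHSpace | TotallyDisconnectedSpace p.Rep} := by
  have hset : {p : GromovHausdorff.GHSpace | TotallyDisconnectedSpace p.Rep} =
      ⋂ n : ℕ, {p : GromovHausdorff.GHSpace | GHPart (1 / (n + 1 : ℝ)) p.Rep} := by
    ext p
    simp only [mem_iInter, mem_setOf_eq]
    constructor
    · intro hp n
      exact ghPart_of_totallyDisconnected _ (by positivity)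
    · intro hp
      apply totallyDisconnected_of_ghPart
      intro ε hε
      obtain ⟨m, hm⟩ := exists_nat_one_div_lt hε
      obtain ⟨n, A, ε', δ, h1, h2, h3, h4, h5, h6⟩ := hp m
      exact ⟨n, A, ε', δ, h1, h2.trans hm, h3, h4, h5, h6⟩
  rw [hset]
  exact IsGδ.iInter fun n => (isOpen_setOf_ghPart _).isGδ
end

section
/- For every nonempty compact metric space X and every ε > 0, there exists a nonempty finite metric space F whose distance function is injective and whose Gromov–Hausdorff distance to X is less than ε. -/
lemma minmax_pairs {a b a' b' : ℕ} (h1 : min a b = min a' b') (h2 : max a b = max a' b') :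
    (a = a' ∧ b = b') ∨ (a = b' ∧ b = a') := by omega

set_option maxHeartbeats 1000000 in
/-- Perturbing a finite metric to make it injective, with sup-norm control `2 * c`. -/
lemma aux_metric (n : ℕ) (d0 : Fin n → Fin n → ℝ)
    (h0 : ∀ i, d0 i i = 0) (hsymm : ∀ i j, d0 i j = d0 j i)
    (htri : ∀ i j k, d0 i k ≤ d0 i j + d0 j k)
    (hnonneg : ∀ i j, 0 ≤ d0 i j)
    (hn : 0 < n)
    (c : ℝ) (hc : 0 < c)
    (hD : ∀ i j i' j', d0 i j ≠ d0 i' j' → c ≤ |d0 i j - d0 i' j'|) :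
    ∃ m : MetricSpace (Fin n),
      (∀ i j, |@dist _ m.toDist i j - d0 i j| ≤ 2 * c) ∧ @InjectiveDist (Fin n) m := by
  classical
  set k : Fin n → Fin n → ℕ := fun i j => Nat.pair (min i.val j.val) (max i.val j.val) with hk
  have hne : ((Finset.univ : Finset (Fin n × Fin n)).image fun p => k p.1 p.2).Nonempty := by
    refine Finset.image_nonempty.2 ?_
    exact ⟨(⟨0, hn⟩, ⟨0, hn⟩), Finset.mem_univ _⟩
  set M : ℕ := (((Finset.univ : Finset (Fin n × Fin n)).image fun p => k p.1 p.2).max' hne)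
    with hM
  have hkM : ∀ i j, k i j ≤ M := by
    intro i j
    refine Finset.le_max' _ _ ?_
    exact Finset.mem_image.2 ⟨(i, j), Finset.mem_univ _, rfl⟩
  have hMpos : (0 : ℝ) < (M : ℝ) + 1 := by positivity
  set δ : Fin n → Fin n → ℝ := fun i j => c * (1 + (k i j : ℝ) / ((M : ℝ) + 1)) with hδ
  have hδ1 : ∀ i j, c ≤ δ i j := by
    intro i j
    have h1 : (0:ℝ) ≤ (k i j : ℝ) / ((M : ℝ) + 1) := by positivity
    simp only [hδ]
    nlinarith
  have hδ2 : ∀ i j, δ i j < 2 * c := by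
    intro i j
    have h1 : (k i j : ℝ) < (M : ℝ) + 1 := by
      have := hkM i j
      exact_mod_cast Nat.lt_succ_of_le this
    have h2 : (k i j : ℝ) / ((M : ℝ) + 1) < 1 := (div_lt_one hMpos).2 h1
    simp only [hδ]
    nlinarith
  have hδsymm : ∀ i j, δ i j = δ j i := by
    intro i j
    simp only [hδ, hk, min_comm, max_comm]
  have hδdiff : ∀ i j i' j', |δ i j - δ i' j'| < c := by
    intro i j i' j'
    have e1 : δ i j - δ i' j' = c * (((k i j : ℝ) - (k i' j' : ℝ)) / ((M : ℝ) + 1)) := by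
      simp only [hδ]; ring
    have h1 : |(k i j : ℝ) - (k i' j' : ℝ)| < (M : ℝ) + 1 := by
      have a1 : (k i j : ℝ) ≤ (M : ℝ) := by exact_mod_cast hkM i j
      have a2 : (k i' j' : ℝ) ≤ (M : ℝ) := by exact_mod_cast hkM i' j'
      have b1 : (0:ℝ) ≤ (k i j : ℝ) := by positivity
      have b2 : (0:ℝ) ≤ (k i' j' : ℝ) := by positivity
      rw [abs_sub_lt_iff]; constructor <;> linarith
    rw [e1, abs_mul, abs_of_pos hc, abs_div, abs_of_pos hMpos]
    have h2 : |(k i j : ℝ) - (k i' j' : ℝ)| / ((M : ℝ) + 1) < 1 := (div_lt_one hMpos).2 h1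
    nlinarith
  have hδinj : ∀ i j i' j', δ i j = δ i' j' → k i j = k i' j' := by
    intro i j i' j' h
    simp only [hδ] at h
    have h2 := mul_left_cancel₀ (ne_of_gt hc) h
    have h4 : (k i j : ℝ) / ((M : ℝ) + 1) = (k i' j' : ℝ) / ((M : ℝ) + 1) := by linarith
    field_simp at h4
    exact_mod_cast h4
  set d : Fin n → Fin n → ℝ := fun i j => if i = j then 0 else d0 i j + δ i j with hd
  have hdnonneg : ∀ i j, 0 ≤ d i j := by
    intro i j
    simp only [hd]
    split
    · exact le_refl 0
    · have := hδ1 i j; have := hnonneg i j; linarith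
  refine ⟨{ dist := d
            dist_self := fun i => by simp [hd]
            dist_comm := fun i j => by
              by_cases h : i = j
              · simp [hd, h]
              · simp only [hd, if_neg h, if_neg (Ne.symm h)]
                rw [hsymm i j, hδsymm i j]
            dist_triangle := fun i j l => by
              by_cases hik : i = l
              · subst hik
                simp only [hd, if_pos rfl]
                have := hdnonneg i j; have := hdnonneg j i
                simp only [hd] at *
                positivity
              · by_cases hij : i = j
                · subst hij
                  simp only [hd, if_pos rfl]
                  linarith [le_refl (d i l)]
                · by_cases hjl : j = l
                  · subst hjl
                    simp only [hd, if_pos rfl, if_neg hik]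
                    linarith [le_refl (d i j)]
                  · simp only [hd, if_neg hik, if_neg hij, if_neg hjl]
                    have t1 := htri i j l
                    have t2 := hδ2 i l
                    have t3 := hδ1 i j
                    have t4 := hδ1 j l
                    linarith
            eq_of_dist_eq_zero := fun {i j} h => by
              by_contra hij
              simp only [hd, if_neg hij] at h
              have := hδ1 i j; have := hnonneg i j
              linarith }, ?_, ?_⟩
  · intro i j
    by_cases h : i = j
    · subst h
      show |d i i - d0 i i| ≤ 2 * c
      simp only [hd, if_pos rfl, h0 i, sub_zero, abs_zero, zero_sub, abs_neg, abs_zero]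
      positivity
    · show |d i j - d0 i j| ≤ 2 * c
      simp only [hd, if_neg h]
      have h1 := hδ1 i j
      have h2 := hδ2 i j
      rw [show d0 i j + δ i j - d0 i j = δ i j by ring, abs_of_pos (lt_of_lt_of_le hc h1)]
      linarith
  · intro x y x' y' hxy hx'y' hdd
    have hdd2 : d x y = d x' y' := hdd
    simp only [hd, if_neg hxy, if_neg hx'y'] at hdd2
    replace hdd := hdd2
    have hd0 : d0 x y = d0 x' y' := by
      by_contra h
      have h1 := hD x y x' y' h
      have h2 : |d0 x y - d0 x' y'| = |δ x' y' - δ x y| := by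
        congr 1; linarith
      have h3 := hδdiff x' y' x y
      rw [h2] at h1
      linarith
    have hδeq : δ x y = δ x' y' := by linarith
    have hkeq := hδinj _ _ _ _ hδeq
    simp only [hk] at hkeq
    rw [Nat.pair_eq_pair] at hkeq
    rcases minmax_pairs hkeq.1 hkeq.2 with ⟨h1, h2⟩ | ⟨h1, h2⟩
    · have : x = x' := Fin.ext h1
      have : y = y' := Fin.ext h2
      subst_vars; rfl
    · have e1 : x = y' := Fin.ext h1
      have e2 : y = x' := Fin.ext h2
      subst_vars
      exact Set.pair_comm _ _

/-- Every nonempty compact metric space is within Gromov–Hausdorff distance `ε` of a nonempty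
finite metric space with injective distance function, for any `ε > 0`. -/
theorem exists_finite_injectiveDist_ghDist_lt (X : Type) [MetricSpace X] [CompactSpace X]
    [Nonempty X] (ε : ℝ) (hε : 0 < ε) :
    ∃ (F : Type) (_ : MetricSpace F) (_ : Finite F) (_ : Nonempty F),
      InjectiveDist F ∧
      (letI : CompactSpace F := Finite.compactSpace
       GromovHausdorff.ghDist X F < ε) := by
  classical
  obtain ⟨t, -, tfin, tcov⟩ := finite_cover_balls_of_compact
    (isCompact_univ : IsCompact (Set.univ : Set X)) (show 0 < ε / 4 by linarith)
  obtain ⟨x0⟩ := ‹Nonempty X›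
  have tne : t.Nonempty := by
    have : x0 ∈ ⋃ x ∈ t, Metric.ball x (ε / 4) := tcov (Set.mem_univ x0)
    obtain ⟨y, hy, -⟩ := Set.mem_iUnion₂.1 this
    exact ⟨y, hy⟩
  haveI : Fintype t := tfin.fintype
  haveI : Nonempty t := tne.to_subtype
  set n := Fintype.card t with hn'
  have hn : 0 < n := Fintype.card_pos
  set eqt : t ≃ Fin n := Fintype.equivFin t with heqt
  set d0 : Fin n → Fin n → ℝ := fun i j => dist ((eqt.symm i : t) : X) ((eqt.symm j : t) : X)
    with hd0
  -- the minimal positive gap between distance values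
  set V : Finset ℝ := (Finset.univ : Finset (Fin n × Fin n)).image fun p => d0 p.1 p.2 with hV
  set G : Finset ℝ := ((V ×ˢ V).image fun p => |p.1 - p.2|).filter (0 < ·) with hG
  set D : ℝ := if h : G.Nonempty then G.min' h else 1 with hDdef
  have hDpos : 0 < D := by
    rw [hDdef]
    split_ifs with h
    · have hmem := G.min'_mem h
      have hpos : ∀ x ∈ G, 0 < x := by
        intro x hx
        rw [hG] at hx
        exact (Finset.mem_filter.1 hx).2
      exact hpos _ hmem
    · norm_num
  set c : ℝ := min (ε / 4) D with hcdef
  have hcpos : 0 < c := lt_min (by linarith) hDpos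
  have hcε : c ≤ ε / 4 := min_le_left _ _
  have hD : ∀ i j i' j', d0 i j ≠ d0 i' j' → c ≤ |d0 i j - d0 i' j'| := by
    intro i j i' j' h
    have hmem : |d0 i j - d0 i' j'| ∈ G := by
      rw [hG, Finset.mem_filter]
      constructor
      · exact Finset.mem_image.2 ⟨(d0 i j, d0 i' j'),
          Finset.mem_product.2 ⟨Finset.mem_image.2 ⟨(i, j), Finset.mem_univ _, rfl⟩,
            Finset.mem_image.2 ⟨(i', j'), Finset.mem_univ _, rfl⟩⟩, rfl⟩
      · exact abs_pos.2 (sub_ne_zero.2 h)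
    have hGne : G.Nonempty := ⟨_, hmem⟩
    have : D ≤ |d0 i j - d0 i' j'| := by
      rw [hDdef, dif_pos hGne]
      exact G.min'_le _ hmem
    exact le_trans (min_le_right _ _) this
  have h0' : ∀ i, d0 i i = 0 := fun i => by simp [hd0]
  have hsymm' : ∀ i j, d0 i j = d0 j i := fun i j => by simp [hd0, dist_comm]
  have htri' : ∀ i j l, d0 i l ≤ d0 i j + d0 j l := fun i j l =>
    dist_triangle ((eqt.symm i : t) : X) ((eqt.symm j : t) : X) ((eqt.symm l : t) : X)
  have hnn' : ∀ i j, 0 ≤ d0 i j := fun i j => dist_nonneg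
  obtain ⟨m, hspec, hinj⟩ := aux_metric n d0 h0' hsymm' htri' hnn' hn c hcpos hD
  refine ⟨Fin n, m, inferInstance, ⟨⟨0, hn⟩⟩, hinj, ?_⟩
  letI := m
  haveI : CompactSpace (Fin n) := Finite.compactSpace
  have key : GromovHausdorff.ghDist X (Fin n) ≤ ε / 4 + (2 * c) / 2 + 0 := by
    refine GromovHausdorff.ghDist_le_of_approx_subsets (s := t) (fun y => eqt y) ?_ ?_ ?_
    · intro x
      have : x ∈ ⋃ y ∈ t, Metric.ball y (ε / 4) := tcov (Set.mem_univ x)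
      obtain ⟨y, hy, hxy⟩ := Set.mem_iUnion₂.1 this
      exact ⟨y, hy, le_of_lt hxy⟩
    · intro i
      refine ⟨eqt.symm i, ?_⟩
      simp
    · intro p q
      have h1 := hspec (eqt p) (eqt q)
      have h2 : d0 (eqt p) (eqt q) = dist p q := by
        simp [hd0, Subtype.dist_eq]
      rw [h2] at h1
      rw [abs_sub_comm]
      exact h1
  calc GromovHausdorff.ghDist X (Fin n) ≤ ε / 4 + (2 * c) / 2 + 0 := key
    _ = ε / 4 + c := by ring
    _ < ε := by linarith
end

section
/- Fix positive integers N and M. Let 𝓜_{N,M} be the set of isometry classes in M_0 of compact totally disconnected metric spaces (X, d) admitting a finite partition into nonempty clopen subsets U_1, …, U_k such that each U_i has diameter less than 1/N, and such that for any indices with {i, j} ≠ {i', j'} as two-element sets (i ≠ j and i' ≠ j'), every x ∈ U_i, y ∈ U_j, x' ∈ U_{i'}, y' ∈ U_{j'} satisfy |d(x, y) − d(x', y')| > 1/M. Then 𝓜_{N,M} is an open subset of M_0 in the subspace topology inherited from the Gromov–Hausdorff space. -/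
open GromovHausdorff Metric Set


/-- `HasFinePartition X N M` means `X` admits a finite partition into nonempty clopen subsets,
each of diameter less than `1/N`, such that whenever `{i, j} ≠ {i', j'}` as two-element sets
(`i ≠ j`, `i' ≠ j'`), points `x ∈ Uᵢ`, `y ∈ Uⱼ`, `x' ∈ U_{i'}`, `y' ∈ U_{j'}` satisfy
`|dist x y - dist x' y'| > 1/M`. -/
def HasFinePartition (X : Type*) [MetricSpace X] (N M : ℕ) : Prop :=
  ∃ (k : ℕ) (U : Fin k → Set X),
    (∀ i, (U i).Nonempty) ∧ (∀ i, IsClopen (U i)) ∧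
    (∀ i, Metric.diam (U i) < 1 / (N : ℝ)) ∧
    (⋃ i, U i) = Set.univ ∧ Pairwise (Function.onFun Disjoint U) ∧
    ∀ i j i' j' : Fin k, i ≠ j → i' ≠ j' → ({i, j} : Set (Fin k)) ≠ ({i', j'} : Set (Fin k)) →
      ∀ x ∈ U i, ∀ y ∈ U j, ∀ x' ∈ U i', ∀ y' ∈ U j',
        1 / (M : ℝ) < |dist x y - dist x' y'|


private lemma exists_pos_le_forall {ι : Type*} [Finite ι] (f : ι → ℝ) (hf : ∀ i, 0 < f i) :
    ∃ δ, 0 < δ ∧ ∀ i, δ ≤ f i := by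
  cases isEmpty_or_nonempty ι with
  | inl h => exact ⟨1, one_pos, fun i => (h.false i).elim⟩
  | inr h =>
    have : Fintype ι := Fintype.ofFinite ι
    refine ⟨Finset.univ.inf' Finset.univ_nonempty f, ?_,
      fun i => Finset.inf'_le f (Finset.mem_univ i)⟩
    exact (Finset.lt_inf'_iff _).2 fun i _ => hf i

/-- For fixed positive integers `N` and `M`, the set `𝓜_{N,M}` of classes in `M₀` of compact
totally disconnected metric spaces admitting a fine partition as above is open in `M₀` with the
subspace topology inherited from the Gromov–Hausdorff space. -/
theorem isOpen_hasFinePartition (N M : ℕ) (hN : 0 < N) (hM : 0 < M) :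
    IsOpen {p : {q : GromovHausdorff.GHSpace // TotallyDisconnectedSpace q.Rep} |
      HasFinePartition p.val.Rep N M} := by
  rw [Metric.isOpen_iff]
  rintro ⟨p, hpd⟩ hp
  simp only [Set.mem_setOf_eq] at hp
  obtain ⟨k, U, hUne, hUclopen, hUdiam, hUcover, hUdisj, hUgap⟩ := hp
  -- compactness of the pieces
  have hUcpt : ∀ i, IsCompact (U i) := fun i => (hUclopen i).isClosed.isCompact
  have hUbdd : ∀ i, Bornology.IsBounded (U i) := fun i => (hUcpt i).isBounded
  -- constraint (1): diameters
  have h1 : ∃ δ, 0 < δ ∧ ∀ i : Fin k, Metric.diam (U i) + 2*δ < 1/(N:ℝ) := by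
    obtain ⟨δ, hδ, hle⟩ := exists_pos_le_forall
      (fun i : Fin k => (1/(N:ℝ) - Metric.diam (U i))/3)
      (fun i => by have := hUdiam i; linarith)
    exact ⟨δ, hδ, fun i => by have := hle i; have := hUdiam i; linarith⟩
  -- constraint (2): separation between distinct pieces
  have h2 : ∃ δ, 0 < δ ∧ ∀ i j : Fin k, i ≠ j → ∀ x ∈ U i, ∀ y ∈ U j, 2*δ < dist x y := by
    have sep : ∀ s : {s : Fin k × Fin k // s.1 ≠ s.2}, ∃ m, 0 < m ∧
        ∀ x ∈ U s.1.1, ∀ y ∈ U s.1.2, m ≤ dist x y := by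
      rintro ⟨⟨i, j⟩, hij⟩
      have hK : IsCompact ((U i) ×ˢ (U j)) := (hUcpt i).prod (hUcpt j)
      have hne : ((U i) ×ˢ (U j)).Nonempty := (hUne i).prod (hUne j)
      obtain ⟨z, hz, hmin⟩ := hK.exists_isMinOn hne
        (Continuous.continuousOn (by fun_prop : Continuous fun z : _ × _ => dist z.1 z.2))
      refine ⟨dist z.1 z.2, ?_, fun x hx y hy => isMinOn_iff.1 hmin (x, y) ⟨hx, hy⟩⟩
      rw [dist_pos]
      intro hzz
      exact Set.disjoint_left.1 (hUdisj hij) hz.1 (hzz ▸ hz.2)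
    choose m hm hmle using sep
    obtain ⟨δ, hδ, hle⟩ := exists_pos_le_forall (fun s => m s / 3)
      (fun s => by have := hm s; linarith)
    refine ⟨δ, hδ, fun i j hij x hx y hy => ?_⟩
    have h := hle ⟨(i,j), hij⟩
    have h' := hmle ⟨(i,j), hij⟩ x hx y hy
    have := hm ⟨(i,j), hij⟩
    linarith
  -- constraint (3): gaps between distances
  have h3 : ∃ δ, 0 < δ ∧ ∀ i j i' j' : Fin k, i ≠ j → i' ≠ j' →
      ({i, j} : Set (Fin k)) ≠ ({i', j'} : Set (Fin k)) →
      ∀ x ∈ U i, ∀ y ∈ U j, ∀ x' ∈ U i', ∀ y' ∈ U j',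
        1/(M:ℝ) + 4*δ < |dist x y - dist x' y'| := by
    have gap : ∀ t : {t : Fin k × Fin k × Fin k × Fin k //
        t.1 ≠ t.2.1 ∧ t.2.2.1 ≠ t.2.2.2 ∧
        ({t.1, t.2.1} : Set (Fin k)) ≠ ({t.2.2.1, t.2.2.2} : Set (Fin k))},
        ∃ m, 1/(M:ℝ) < m ∧ ∀ x ∈ U t.1.1, ∀ y ∈ U t.1.2.1, ∀ x' ∈ U t.1.2.2.1,
          ∀ y' ∈ U t.1.2.2.2, m ≤ |dist x y - dist x' y'| := by
      rintro ⟨⟨i, j, i', j'⟩, hij, hij', hne'⟩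
      have hK : IsCompact ((U i) ×ˢ ((U j) ×ˢ ((U i') ×ˢ (U j')))) :=
        (hUcpt i).prod ((hUcpt j).prod ((hUcpt i').prod (hUcpt j')))
      have hne : ((U i) ×ˢ ((U j) ×ˢ ((U i') ×ˢ (U j')))).Nonempty :=
        (hUne i).prod ((hUne j).prod ((hUne i').prod (hUne j')))
      obtain ⟨z, hz, hmin⟩ := hK.exists_isMinOn hne
        (Continuous.continuousOn
          (by fun_prop : Continuous fun z : _ × _ × _ × _ =>
            |dist z.1 z.2.1 - dist z.2.2.1 z.2.2.2|))
      refine ⟨_, hUgap i j i' j' hij hij' hne' z.1 hz.1 z.2.1 hz.2.1 z.2.2.1 hz.2.2.1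
        z.2.2.2 hz.2.2.2, fun x hx y hy x' hx' y' hy' => ?_⟩
      exact isMinOn_iff.1 hmin (x, y, x', y') ⟨hx, hy, hx', hy'⟩
    choose m hm hmle using gap
    obtain ⟨δ, hδ, hle⟩ := exists_pos_le_forall (fun t => (m t - 1/(M:ℝ)) / 5)
      (fun t => by have := hm t; linarith)
    refine ⟨δ, hδ, fun i j i' j' hij hij' hne' x hx y hy x' hx' y' hy' => ?_⟩
    have h := hle ⟨(i, j, i', j'), hij, hij', hne'⟩
    have h' := hmle ⟨(i, j, i', j'), hij, hij', hne'⟩ x hx y hy x' hx' y' hy'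
    have := hm ⟨(i, j, i', j'), hij, hij', hne'⟩
    linarith
  obtain ⟨δ₁, hδ₁, hC1⟩ := h1
  obtain ⟨δ₂, hδ₂, hC2⟩ := h2
  obtain ⟨δ₃, hδ₃, hC3⟩ := h3
  set η := min δ₁ (min δ₂ δ₃) with hη
  have hηpos : 0 < η := lt_min hδ₁ (lt_min hδ₂ hδ₃)
  have hη1 : η ≤ δ₁ := min_le_left _ _
  have hη2 : η ≤ δ₂ := le_trans (min_le_right _ _) (min_le_left _ _)
  have hη3 : η ≤ δ₃ := le_trans (min_le_right _ _) (min_le_right _ _)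
  refine ⟨η, hηpos, ?_⟩
  rintro ⟨q, hqd⟩ hq
  rw [Metric.mem_ball, Subtype.dist_eq] at hq
  simp only [Set.mem_setOf_eq]
  -- set up the optimal coupling
  set Φ := optimalGHInjl p.Rep q.Rep with hΦdef
  set Ψ := optimalGHInjr p.Rep q.Rep with hΨdef
  have hΦ : Isometry Φ := isometry_optimalGHInjl p.Rep q.Rep
  have hΨ : Isometry Ψ := isometry_optimalGHInjr p.Rep q.Rep
  have hd : hausdorffDist (Set.range Φ) (Set.range Ψ) < η := by
    rw [hΦdef, hΨdef, hausdorffDist_optimal, ← dist_ghDist, dist_comm]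
    exact hq
  have hTop : EMetric.hausdorffEdist (Set.range Φ) (Set.range Ψ) ≠ ⊤ :=
    hausdorffEdist_ne_top_of_nonempty_of_bounded (range_nonempty _) (range_nonempty _)
      (isCompact_range hΦ.continuous).isBounded (isCompact_range hΨ.continuous).isBounded
  -- the partition of q.Rep
  set V : Fin k → Set q.Rep := fun i => {y | ∃ x ∈ U i, dist (Ψ y) (Φ x) < η} with hV
  -- the pieces cover q.Rep
  have hVcover : ∀ y : q.Rep, ∃ i, y ∈ V i := by
    intro y
    obtain ⟨z, hz, hdz⟩ := exists_dist_lt_of_hausdorffDist_lt' (mem_range_self y) hd hTop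
    obtain ⟨x, rfl⟩ := hz
    have hx : x ∈ ⋃ i, U i := hUcover ▸ Set.mem_univ x
    obtain ⟨i, hi⟩ := Set.mem_iUnion.1 hx
    exact ⟨i, x, hi, by rwa [dist_comm]⟩
  -- the pieces are disjoint
  have hVdisj : Pairwise (Function.onFun Disjoint V) := by
    intro i j hij
    rw [Function.onFun, Set.disjoint_left]
    rintro y ⟨x, hx, hdx⟩ ⟨x', hx', hdx'⟩
    have : dist x x' < 2*η := by
      have := hΦ.dist_eq x x'
      have htri := dist_triangle (Φ x) (Ψ y) (Φ x')
      rw [dist_comm (Φ x) (Ψ y)] at htri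
      linarith
    have h2 := hC2 i j hij x hx x' hx'
    linarith
  -- the pieces are open
  have hVopen : ∀ i, IsOpen (V i) := by
    intro i
    have : V i = ⋃ x ∈ U i, Ψ ⁻¹' Metric.ball (Φ x) η := by
      ext y; simp [hV, Metric.mem_ball]
    rw [this]
    exact isOpen_biUnion fun x _ => Metric.isOpen_ball.preimage hΨ.continuous
  -- the pieces are clopen
  have hVclopen : ∀ i, IsClopen (V i) := by
    intro i
    refine ⟨?_, hVopen i⟩
    rw [← isOpen_compl_iff]
    have : (V i)ᶜ = ⋃ j, ⋃ (_ : j ≠ i), V j := by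
      ext y
      simp only [Set.mem_compl_iff, Set.mem_iUnion]
      constructor
      · intro hy
        obtain ⟨j, hj⟩ := hVcover y
        exact ⟨j, fun h => hy (h ▸ hj), hj⟩
      · rintro ⟨j, hji, hj⟩ hy
        exact Set.disjoint_left.1 (hVdisj hji) hj hy
    rw [this]
    exact isOpen_iUnion fun j => isOpen_iUnion fun _ => hVopen j
  refine ⟨k, V, ?_, hVclopen, ?_, ?_, hVdisj, ?_⟩
  · -- nonempty
    intro i
    obtain ⟨x, hx⟩ := hUne i
    obtain ⟨z, hz, hdz⟩ := exists_dist_lt_of_hausdorffDist_lt (mem_range_self x) hd hTop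
    obtain ⟨y, rfl⟩ := hz
    exact ⟨y, x, hx, by rwa [dist_comm]⟩
  · -- diameters
    intro i
    have hle : Metric.diam (V i) ≤ Metric.diam (U i) + 2*η := by
      apply Metric.diam_le_of_forall_dist_le
        (by have := Metric.diam_nonneg (s := U i); linarith)
      rintro y ⟨x, hx, hdx⟩ y' ⟨x', hx', hdx'⟩
      have h1 : dist y y' = dist (Ψ y) (Ψ y') := (hΨ.dist_eq y y').symm
      have h2 : dist (Ψ y) (Ψ y') ≤ dist (Ψ y) (Φ x) + dist (Φ x) (Φ x') + dist (Φ x') (Ψ y') :=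
        dist_triangle4 _ _ _ _
      have h3 : dist (Φ x) (Φ x') = dist x x' := hΦ.dist_eq x x'
      have h4 : dist x x' ≤ Metric.diam (U i) := Metric.dist_le_diam_of_mem (hUbdd i) hx hx'
      have h5 : dist (Φ x') (Ψ y') = dist (Ψ y') (Φ x') := dist_comm _ _
      linarith
    have := hC1 i
    linarith
  · -- cover
    ext y
    simp only [Set.mem_iUnion, Set.mem_univ, iff_true]
    exact hVcover y
  · -- gaps
    rintro i j i' j' hij hij' hne' y ⟨a, ha, hda⟩ z ⟨b, hb, hdb⟩ y' ⟨a', ha', hda'⟩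
      z' ⟨b', hb', hdb'⟩
    have key : ∀ (y z : q.Rep) (a b : p.Rep), dist (Ψ y) (Φ a) < η → dist (Ψ z) (Φ b) < η →
        |dist y z - dist a b| < 2*η := by
      intro y z a b hya hzb
      have h1 : dist y z = dist (Ψ y) (Ψ z) := (hΨ.dist_eq y z).symm
      have h2 : dist (dist (Ψ y) (Ψ z)) (dist (Φ a) (Φ b)) ≤
          dist (Ψ y) (Φ a) + dist (Ψ z) (Φ b) := dist_dist_dist_le _ _ _ _
      rw [Real.dist_eq] at h2
      rw [h1, ← hΦ.dist_eq a b]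
      calc |dist (Ψ y) (Ψ z) - dist (Φ a) (Φ b)| ≤ dist (Ψ y) (Φ a) + dist (Ψ z) (Φ b) := h2
        _ < 2*η := by linarith
    have k1 := key y z a b hda hdb
    have k2 := key y' z' a' b' hda' hdb'
    have k3 := hC3 i j i' j' hij hij' hne' a ha b hb a' ha' b' hb'
    have t1 : |dist a b - dist a' b'| ≤ |dist a b - dist y z| + |dist y z - dist y' z'|
        + |dist y' z' - dist a' b'| := by
      calc |dist a b - dist a' b'| ≤ |dist a b - dist y z| + |dist y z - dist a' b'| :=
            abs_sub_le _ _ _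
        _ ≤ |dist a b - dist y z| + (|dist y z - dist y' z'| + |dist y' z' - dist a' b'|) := by
            gcongr; exact abs_sub_le _ _ _
        _ = _ := by ring
    rw [abs_sub_comm (dist a b) (dist y z)] at t1
    linarith
end

section
/- Fix a positive integer N. For positive integers M, let 𝓜_{N,M} be the set of isometry classes in M_0 of compact totally disconnected metric spaces (X, d) admitting a finite partition into nonempty clopen subsets U_1, …, U_k such that each U_i has diameter less than 1/N, and such that for any indices with {i, j} ≠ {i', j'} as two-element sets (i ≠ j and i' ≠ j'), every x ∈ U_i, y ∈ U_j, x' ∈ U_{i'}, y' ∈ U_{j'} satisfy |d(x, y) − d(x', y')| > 1/M. Then the union over all positive integers M of the sets 𝓜_{N,M} is dense in M_0. -/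
namespace FineAux

/-- Type synonym for `Fin k` on which we will install a custom metric. -/
def AuxSpace (k : ℕ) : Type := Fin k

instance (k : ℕ) : Finite (AuxSpace k) := inferInstanceAs (Finite (Fin k))

/-- Identity map into the type synonym. -/
def ofFin {k : ℕ} (i : Fin k) : AuxSpace k := i

/-- Identity map out of the type synonym. -/
def toFin {k : ℕ} (i : AuxSpace k) : Fin k := i

@[simp] lemma toFin_ofFin {k : ℕ} (i : Fin k) : toFin (ofFin i) = i := rfl
@[simp] lemma ofFin_toFin {k : ℕ} (i : AuxSpace k) : ofFin (toFin i) = i := rfl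

lemma ofFin_injective {k : ℕ} : Function.Injective (ofFin (k := k)) := fun _ _ h => h

/-- Encoding of an unordered pair of elements of `Fin k` as a natural number `< k^2`. -/
def enc {k : ℕ} (i j : Fin k) : ℕ := (min i j).val * k + (max i j).val

lemma enc_comm {k : ℕ} (i j : Fin k) : enc i j = enc j i := by
  simp [enc, min_comm, max_comm]

lemma enc_lt {k : ℕ} (i j : Fin k) : enc i j < k ^ 2 := by
  have h1 : (min i j).val < k := (min i j).isLt
  have h2 : (max i j).val < k := (max i j).isLt
  calc (min i j).val * k + (max i j).val < (min i j).val * k + k := by omega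
    _ = ((min i j).val + 1) * k := by ring
    _ ≤ k * k := Nat.mul_le_mul_right k (by omega)
    _ = k ^ 2 := (sq k).symm

lemma pair_eq_minmax {k : ℕ} (i j : Fin k) :
    ({i, j} : Set (Fin k)) = {min i j, max i j} := by
  rcases le_total i j with h | h
  · rw [min_eq_left h, max_eq_right h]
  · rw [min_eq_right h, max_eq_left h, Set.pair_comm]

lemma enc_inj {k : ℕ} {i j i' j' : Fin k}
    (hsets : ({i, j} : Set (Fin k)) ≠ ({i', j'} : Set (Fin k))) :
    enc i j ≠ enc i' j' := by
  intro h
  apply hsets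
  have hk : 0 < k := i.pos
  have emod : ∀ a b : Fin k, ((min a b).val * k + (max a b).val) % k = (max a b).val := by
    intro a b
    rw [Nat.add_comm, Nat.add_mul_mod_self_right, Nat.mod_eq_of_lt (max a b).isLt]
  have h1 : (max i j).val = (max i' j').val := by
    rw [← emod i j, ← emod i' j']
    unfold enc at h
    rw [h]
  have h2 : (min i j).val = (min i' j').val := by
    have h3 : (min i j).val * k = (min i' j').val * k := by
      have := h; unfold enc at this; omega
    exact Nat.eq_of_mul_eq_mul_right hk h3
  rw [pair_eq_minmax i j, pair_eq_minmax i' j',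
    Fin.val_injective h2, Fin.val_injective h1]

lemma one_le_abs_natCast_sub {m n : ℕ} (h : m ≠ n) : 1 ≤ |(m : ℝ) - n| := by
  rcases h.lt_or_gt with hlt | hlt
  · have h1 : (m : ℝ) + 1 ≤ n := by exact_mod_cast hlt
    rw [abs_sub_comm, abs_of_nonneg (by linarith)]; linarith
  · have h1 : (n : ℝ) + 1 ≤ m := by exact_mod_cast hlt
    rw [abs_of_nonneg (by linarith)]; linarith

variable {k : ℕ} (δ : ℝ) (e : Fin k → Fin k → ℝ)

/-- The perturbed distance function. -/
noncomputable def fdist (i j : Fin k) : ℝ :=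
  if i = j then 0 else δ * ⌈e i j / δ⌉₊ + δ + δ * (enc i j) / ((k : ℝ) ^ 2)

lemma fdist_self (i : Fin k) : fdist δ e i i = 0 := if_pos rfl

lemma fdist_comm (hsymm : ∀ i j, e i j = e j i) (i j : Fin k) :
    fdist δ e i j = fdist δ e j i := by
  unfold fdist
  rcases eq_or_ne i j with rfl | h
  · rfl
  · rw [if_neg h, if_neg h.symm, hsymm i j, enc_comm]

lemma fdist_of_ne (hδ : 0 < δ) (hnn : ∀ i j, 0 ≤ e i j) {i j : Fin k} (h : i ≠ j) :
    δ ≤ fdist δ e i j := by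
  have hk : 0 < k := i.pos
  have hk2 : (0:ℝ) < (k:ℝ) ^ 2 := by positivity
  have h1 : (0:ℝ) ≤ δ * ⌈e i j / δ⌉₊ := by positivity
  have h2 : (0:ℝ) ≤ δ * (enc i j) / ((k : ℝ) ^ 2) := by positivity
  rw [fdist, if_neg h]
  linarith

lemma fdist_nonneg (hδ : 0 < δ) (hnn : ∀ i j, 0 ≤ e i j) (i j : Fin k) :
    0 ≤ fdist δ e i j := by
  rcases eq_or_ne i j with rfl | h
  · rw [fdist_self]
  · linarith [fdist_of_ne δ e hδ hnn h]

lemma fdist_triangle (hδ : 0 < δ) (hnn : ∀ i j, 0 ≤ e i j)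
    (htri : ∀ i j l, e i l ≤ e i j + e j l) (i j l : Fin k) :
    fdist δ e i l ≤ fdist δ e i j + fdist δ e j l := by
  have hk : 0 < k := i.pos
  have hk2 : (0:ℝ) < (k:ℝ) ^ 2 := by positivity
  rcases eq_or_ne i l with rfl | hil
  · rw [fdist_self]
    exact add_nonneg (fdist_nonneg δ e hδ hnn i j) (fdist_nonneg δ e hδ hnn j i)
  rcases eq_or_ne i j with rfl | hij
  · rw [fdist_self, zero_add]
  rcases eq_or_ne j l with rfl | hjl
  · rw [fdist_self, add_zero]
  rw [fdist, if_neg hil, fdist, if_neg hij, fdist, if_neg hjl]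
  have hstep : e i l / δ ≤ e i j / δ + e j l / δ := by
    rw [← add_div]
    exact (div_le_div_iff_of_pos_right hδ).mpr (htri i j l)
  have hceil : (⌈e i l / δ⌉₊ : ℕ) ≤ ⌈e i j / δ⌉₊ + ⌈e j l / δ⌉₊ :=
    (Nat.ceil_le_ceil hstep).trans (Nat.ceil_add_le _ _)
  have hA : δ * (⌈e i l / δ⌉₊ : ℝ) ≤ δ * ⌈e i j / δ⌉₊ + δ * ⌈e j l / δ⌉₊ := by
    rw [← mul_add]
    exact mul_le_mul_of_nonneg_left (by exact_mod_cast hceil) hδ.le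
  have hc1 : δ * (enc i l : ℝ) / ((k : ℝ) ^ 2) ≤ δ := by
    rw [div_le_iff₀ hk2]
    have : ((enc i l : ℝ)) ≤ (k : ℝ) ^ 2 := by exact_mod_cast (enc_lt i l).le
    nlinarith
  have hc2 : (0:ℝ) ≤ δ * (enc i j : ℝ) / ((k : ℝ) ^ 2) := by positivity
  have hc3 : (0:ℝ) ≤ δ * (enc j l : ℝ) / ((k : ℝ) ^ 2) := by positivity
  linarith

lemma fdist_close (hδ : 0 < δ) (hnn : ∀ i j, 0 ≤ e i j) {i j : Fin k} (h : i ≠ j) :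
    |fdist δ e i j - e i j| ≤ 3 * δ := by
  have hk : 0 < k := i.pos
  have hk2 : (0:ℝ) < (k:ℝ) ^ 2 := by positivity
  rw [fdist, if_neg h]
  have h1 : e i j ≤ δ * ⌈e i j / δ⌉₊ := by
    have := (div_le_iff₀ hδ).mp (Nat.le_ceil (e i j / δ))
    linarith
  have h2 : δ * (⌈e i j / δ⌉₊ : ℝ) ≤ e i j + δ := by
    have hlt := Nat.ceil_lt_add_one (div_nonneg (hnn i j) hδ.le)
    have := mul_le_mul_of_nonneg_left hlt.le hδ.le
    have heq : δ * (e i j / δ + 1) = e i j + δ := by field_simp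
    linarith
  have hc1 : δ * (enc i j : ℝ) / ((k : ℝ) ^ 2) ≤ δ := by
    rw [div_le_iff₀ hk2]
    have : ((enc i j : ℝ)) ≤ (k : ℝ) ^ 2 := by exact_mod_cast (enc_lt i j).le
    nlinarith
  have hc2 : (0:ℝ) ≤ δ * (enc i j : ℝ) / ((k : ℝ) ^ 2) := by positivity
  rw [abs_le]
  constructor <;> linarith

lemma fdist_sep (hδ : 0 < δ) {i j i' j' : Fin k} (hij : i ≠ j) (hij' : i' ≠ j')
    (henc : enc i j ≠ enc i' j') :
    δ / ((k : ℝ) ^ 2) ≤ |fdist δ e i j - fdist δ e i' j'| := by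
  have hk : 0 < k := i.pos
  have hk2 : (0:ℝ) < (k:ℝ) ^ 2 := by positivity
  set a := ⌈e i j / δ⌉₊ with ha
  set a' := ⌈e i' j' / δ⌉₊ with ha'
  have hAB : a * k ^ 2 + enc i j ≠ a' * k ^ 2 + enc i' j' := by
    intro hcontra
    apply henc
    have e1 : (a * k ^ 2 + enc i j) % k ^ 2 = enc i j := by
      rw [Nat.add_comm, Nat.add_mul_mod_self_right, Nat.mod_eq_of_lt (enc_lt i j)]
    have e2 : (a' * k ^ 2 + enc i' j') % k ^ 2 = enc i' j' := by
      rw [Nat.add_comm, Nat.add_mul_mod_self_right, Nat.mod_eq_of_lt (enc_lt i' j')]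
    rw [← e1, ← e2, hcontra]
  have hrepr : fdist δ e i j - fdist δ e i' j' =
      δ / ((k : ℝ) ^ 2) * (((a * k ^ 2 + enc i j : ℕ) : ℝ) - ((a' * k ^ 2 + enc i' j' : ℕ) : ℝ)) := by
    rw [fdist, if_neg hij, fdist, if_neg hij', ← ha, ← ha']
    push_cast
    field_simp
    ring
  rw [hrepr, abs_mul, abs_of_pos (by positivity)]
  calc δ / ((k : ℝ) ^ 2) = δ / ((k : ℝ) ^ 2) * 1 := by ring
    _ ≤ _ := mul_le_mul_of_nonneg_left (one_le_abs_natCast_sub hAB) (by positivity)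

/-- The metric space structure on `AuxSpace k` given by `fdist`. -/
noncomputable def auxMetric (hδ : 0 < δ) (hsymm : ∀ i j, e i j = e j i)
    (hnn : ∀ i j, 0 ≤ e i j) (htri : ∀ i j l, e i l ≤ e i j + e j l) :
    MetricSpace (AuxSpace k) where
  dist i j := fdist δ e i j
  dist_self i := fdist_self δ e i
  dist_comm := fdist_comm δ e hsymm
  dist_triangle := fdist_triangle δ e hδ hnn htri
  eq_of_dist_eq_zero := by
    intro i j h
    by_contra hne
    have h2 := fdist_of_ne δ e hδ hnn hne
    have h3 : fdist δ e i j = 0 := h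
    rw [h3] at h2
    linarith

end FineAux

open FineAux Metric GromovHausdorff Set

/-- For a fixed positive integer `N`, the union over all positive integers `M` of the sets
`𝓜_{N,M}` is dense in `M₀`, the subspace of the Gromov–Hausdorff space consisting of classes
of totally disconnected compact metric spaces. -/
theorem dense_iUnion_hasFinePartition (N : ℕ) (hN : 0 < N) :
    Dense {p : {q : GromovHausdorff.GHSpace // TotallyDisconnectedSpace q.Rep} |
      ∃ M : ℕ, 0 < M ∧ HasFinePartition p.val.Rep N M} := by
  rw [Metric.dense_iff]
  intro p r hr
  set X := p.val.Rep with hX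
  set δ : ℝ := r / 3 with hδdef
  have hδ : 0 < δ := by positivity
  -- a finite δ-net in X
  obtain ⟨t, htfin, htcover⟩ :=
    Metric.totallyBounded_iff.mp (isCompact_univ (X := X)).totallyBounded δ hδ
  haveI := htfin.fintype
  have htne : t.Nonempty := by
    obtain ⟨y⟩ := (inferInstance : Nonempty X)
    obtain ⟨z, hz, -⟩ := Set.mem_iUnion₂.mp (htcover (Set.mem_univ y))
    exact ⟨z, hz⟩
  set k := Fintype.card t with hkdef
  have hk : 0 < k := Fintype.card_pos_iff.mpr htne.to_subtype
  let g : Fin k ≃ t := (Fintype.equivFin t).symm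
  let x : Fin k → X := fun i => (g i : X)
  have hxinj : Function.Injective x := Subtype.coe_injective.comp g.injective
  have hnet : ∀ y : X, ∃ i, dist y (x i) ≤ δ := by
    intro y
    obtain ⟨z, hz, hyz⟩ := Set.mem_iUnion₂.mp (htcover (Set.mem_univ y))
    refine ⟨g.symm ⟨z, hz⟩, ?_⟩
    have : x (g.symm ⟨z, hz⟩) = z := by simp [x]
    rw [this]
    exact (mem_ball.mp hyz).le
  -- the perturbed finite model space
  set e : Fin k → Fin k → ℝ := fun i j => dist (x i) (x j) with hedef
  have hsymm : ∀ i j, e i j = e j i := fun i j => dist_comm _ _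
  have hnn : ∀ i j, 0 ≤ e i j := fun i j => dist_nonneg
  have htri : ∀ i j l, e i l ≤ e i j + e j l := fun i j l => dist_triangle _ _ _
  letI mY : MetricSpace (AuxSpace k) := auxMetric δ e hδ hsymm hnn htri
  haveI : Nonempty (AuxSpace k) := ⟨ofFin ⟨0, hk⟩⟩
  haveI : CompactSpace (AuxSpace k) := Finite.compactSpace
  have hdistY : ∀ a b : AuxSpace k, dist a b = fdist δ e (toFin a) (toFin b) := fun _ _ => rfl
  -- approximation map
  let Φ : Set.range x → AuxSpace k := fun z => ofFin (Classical.choose z.2)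
  have hΦ : ∀ z : Set.range x, x (toFin (Φ z)) = z := fun z => Classical.choose_spec z.2
  have hΦx : ∀ i : Fin k, Φ ⟨x i, Set.mem_range_self i⟩ = ofFin i := by
    intro i
    have := hΦ ⟨x i, Set.mem_range_self i⟩
    have h2 : toFin (Φ ⟨x i, Set.mem_range_self i⟩) = i := hxinj this
    exact (ofFin_toFin _).symm.trans (congrArg ofFin h2)
  have hbound : ghDist X (AuxSpace k) ≤ δ + 3 * δ / 2 + 0 := by
    apply ghDist_le_of_approx_subsets Φ
    · intro y
      obtain ⟨i, hi⟩ := hnet y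
      exact ⟨x i, Set.mem_range_self i, hi⟩
    · intro w
      refine ⟨⟨x (toFin w), Set.mem_range_self _⟩, ?_⟩
      have : Φ ⟨x (toFin w), Set.mem_range_self _⟩ = ofFin (toFin w) := hΦx (toFin w)
      rw [this, ofFin_toFin, dist_self]
    · intro z z'
      have hz : dist z z' = e (toFin (Φ z)) (toFin (Φ z')) := by
        rw [Subtype.dist_eq, ← hΦ z, ← hΦ z']
      rw [hz, hdistY]
      rcases eq_or_ne (toFin (Φ z)) (toFin (Φ z')) with h | h
      · have h0 : e (toFin (Φ z')) (toFin (Φ z')) = 0 := dist_self _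
        rw [h, fdist_self, h0]
        simp only [sub_zero, abs_zero]
        positivity
      · rw [abs_sub_comm]
        exact (fdist_close δ e hδ hnn h).trans (by linarith)
  set q0 := toGHSpace (AuxSpace k) with hq0
  have hdisteq : dist p.val q0 = ghDist X (AuxSpace k) := by
    rw [ghDist, GHSpace.toGHSpace_rep]
  -- the representative is totally disconnected
  obtain ⟨Ψ⟩ : Nonempty (q0.Rep ≃ᵢ AuxSpace k) := by
    rw [← toGHSpace_eq_toGHSpace_iff_isometryEquiv]
    exact GHSpace.toGHSpace_rep q0
  haveI : Finite q0.Rep := Finite.of_equiv (AuxSpace k) Ψ.toEquiv.symm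
  haveI hTD : TotallyDisconnectedSpace q0.Rep := by
    haveI : DiscreteTopology q0.Rep := inferInstance
    infer_instance
  -- choose M
  have hk2 : (0:ℝ) < (k : ℝ) ^ 2 := by positivity
  obtain ⟨M, hM⟩ := exists_nat_gt ((k : ℝ) ^ 2 / δ)
  have hM0 : 0 < M := by
    have h1 : (0:ℝ) < (k : ℝ) ^ 2 / δ := by positivity
    exact_mod_cast Nat.cast_pos.mp (h1.trans hM)
  have hMlt : 1 / (M : ℝ) < δ / (k : ℝ) ^ 2 := by
    have h1 : (0:ℝ) < (k : ℝ) ^ 2 / δ := by positivity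
    have h2 : δ / (k : ℝ) ^ 2 = 1 / ((k : ℝ) ^ 2 / δ) := by
      field_simp
    rw [h2]
    exact one_div_lt_one_div_of_lt h1 hM
  -- the fine partition of the representative
  have hfine : HasFinePartition q0.Rep N M := by
    refine ⟨k, fun i => {Ψ.symm (ofFin i)}, fun i => Set.singleton_nonempty _,
      fun i => isClopen_discrete _, fun i => ?_, ?_, ?_, ?_⟩
    · rw [Metric.diam_singleton]
      positivity
    · ext z
      simp only [Set.mem_iUnion, Set.mem_singleton_iff, Set.mem_univ, iff_true]
      exact ⟨toFin (Ψ z), by simp⟩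
    · intro i j hne
      simp only [Function.onFun, Set.disjoint_singleton]
      exact fun h => hne (ofFin_injective (Ψ.symm.injective h))
    · intro i j i' j' hij hij' hsets a ha b hb a' ha' b' hb'
      rw [Set.mem_singleton_iff] at ha hb ha' hb'
      subst ha; subst hb; subst ha'; subst hb'
      rw [Ψ.symm.dist_eq, Ψ.symm.dist_eq, hdistY, hdistY, toFin_ofFin, toFin_ofFin,
        toFin_ofFin, toFin_ofFin]
      calc 1 / (M : ℝ) < δ / (k : ℝ) ^ 2 := hMlt
        _ ≤ _ := fdist_sep δ e hδ hij hij' (enc_inj hsets)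
  refine ⟨⟨q0, hTD⟩, ?_, M, hM0, hfine⟩
  rw [mem_ball, Subtype.dist_eq, dist_comm, hdisteq]
  calc ghDist X (AuxSpace k) ≤ δ + 3 * δ / 2 + 0 := hbound
    _ < r := by rw [hδdef]; linarith
end

section
/- Let (X, d) be a nonempty compact totally disconnected metric space. Then d is injective if and only if for every positive integer N there exists a positive integer M such that X admits a finite partition into nonempty clopen subsets U_1, …, U_k where each U_i has diameter less than 1/N, and for any indices with {i, j} ≠ {i', j'} as two-element sets (i ≠ j and i' ≠ j'), every x ∈ U_i, y ∈ U_j, x' ∈ U_{i'}, y' ∈ U_{j'} satisfy |d(x, y) − d(x', y')| > 1/M. -/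
open Metric Set


lemma exists_clopen_partition (X : Type*) [MetricSpace X] [CompactSpace X]
    [TotallyDisconnectedSpace X] {ε : ℝ} (hε : 0 < ε) :
    ∃ (k : ℕ) (U : Fin k → Set X), (∀ i, (U i).Nonempty) ∧ (∀ i, IsClopen (U i)) ∧
      (∀ i, Metric.diam (U i) < ε) ∧ (⋃ i, U i) = Set.univ ∧
      Pairwise (Function.onFun Disjoint U) := by
  classical
  have hV : ∀ x : X, ∃ V : Set X, IsClopen V ∧ x ∈ V ∧ V ⊆ ball x (ε / 3) := fun x =>
    compact_exists_isClopen_in_isOpen isOpen_ball (mem_ball_self (by linarith))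
  choose V hVclopen hVmem hVsub using hV
  obtain ⟨t, ht⟩ := isCompact_univ.elim_finite_subcover V (fun x => (hVclopen x).isOpen)
    (fun x _ => mem_iUnion.2 ⟨x, hVmem x⟩)
  set n := Fintype.card t with hn
  set e : Fin n → X := fun i => ((Fintype.equivFin t).symm i : X) with he
  set W : Fin n → Set X := fun i =>
    V (e i) \ ⋃ j ∈ Finset.univ.filter (fun j => j < i), V (e j) with hW
  have hWclopen : ∀ i, IsClopen (W i) :=
    fun i => ((hVclopen _).diff (isClopen_biUnion_finset fun j _ => hVclopen _))
  have hWsub : ∀ i, W i ⊆ V (e i) := fun i => diff_subset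
  have hWdiam : ∀ i, Metric.diam (W i) < ε := by
    intro i
    have h1 : Metric.diam (W i) ≤ Metric.diam (ball (e i) (ε / 3)) :=
      Metric.diam_mono ((hWsub i).trans (hVsub _)) isBounded_ball
    have h2 : Metric.diam (ball (e i) (ε / 3)) ≤ 2 * (ε / 3) := Metric.diam_ball (by linarith)
    linarith
  have hWcover : ∀ x : X, ∃ i, x ∈ W i := by
    intro x
    have : x ∈ ⋃ y ∈ t, V y := ht (mem_univ x)
    obtain ⟨y, hyt, hxy⟩ := mem_iUnion₂.1 this
    have hex : ((Finset.univ.filter (fun i => x ∈ V (e i))) : Finset (Fin n)).Nonempty := by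
      refine ⟨Fintype.equivFin t ⟨y, hyt⟩, ?_⟩
      simp only [Finset.mem_filter, Finset.mem_univ, true_and, he]
      simpa using hxy
    set i₀ := Finset.min' _ hex with hi₀
    refine ⟨i₀, ?_, ?_⟩
    · have := Finset.min'_mem _ hex
      simp only [Finset.mem_filter] at this
      exact this.2
    · intro hmem
      simp only [Finset.mem_filter, Finset.mem_univ, true_and, mem_iUnion] at hmem
      obtain ⟨j, hj, hxj⟩ := hmem
      have : i₀ ≤ j := Finset.min'_le _ _ (by simp [hxj])
      exact absurd hj (not_lt.2 this)
  have hWdisj : Pairwise (Function.onFun Disjoint W) := by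
    intro i j hij
    rcases hij.lt_or_gt with h | h
    · refine Set.disjoint_left.2 fun a hai haj => ?_
      exact haj.2 (mem_iUnion₂.2 ⟨i, by simp [h], hai.1⟩)
    · refine Set.disjoint_left.2 fun a hai haj => ?_
      exact hai.2 (mem_iUnion₂.2 ⟨j, by simp [h], haj.1⟩)
  -- now filter out the empty pieces
  set s : Finset (Fin n) := Finset.univ.filter (fun i => (W i).Nonempty) with hs
  refine ⟨Fintype.card s, fun i => W ((Fintype.equivFin s).symm i : Fin n), ?_, ?_, ?_, ?_, ?_⟩
  · intro i
    have h2 := ((Fintype.equivFin s).symm i).2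
    exact (Finset.mem_filter.1 h2).2
  · intro i; exact hWclopen _
  · intro i; exact hWdiam _
  · apply Set.eq_univ_of_forall
    intro x
    obtain ⟨i, hi⟩ := hWcover x
    have his : i ∈ s := by simp only [hs, Finset.mem_filter, Finset.mem_univ, true_and]; exact ⟨x, hi⟩
    refine mem_iUnion.2 ⟨Fintype.equivFin s ⟨i, his⟩, ?_⟩
    simpa using hi
  · intro i j hij
    apply hWdisj
    intro hcontra
    apply hij
    have := Subtype.ext hcontra
    exact (Fintype.equivFin s).symm.injective this



/-- A nonempty compact totally disconnected metric space has injective distance function if and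
only if for every positive integer `N` there is a positive integer `M` such that the space
admits a fine partition as in the definition of `𝓜_{N,M}`. -/
theorem injectiveDist_iff_hasFinePartition (X : Type*) [MetricSpace X] [CompactSpace X]
    [TotallyDisconnectedSpace X] [Nonempty X] :
    InjectiveDist X ↔ ∀ N : ℕ, 0 < N → ∃ M : ℕ, 0 < M ∧ HasFinePartition X N M := by

  classical
  constructor
  · -- forward direction
    intro hinj N hN
    have hε : (0 : ℝ) < 1 / (N : ℝ) := by positivity
    obtain ⟨k, U, hUne, hUclopen, hUdiam, hUcover, hUdisj⟩ := exists_clopen_partition X hε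
    -- index in same part forces equality
    have hsame : ∀ (i i' : Fin k) (z : X), z ∈ U i → z ∈ U i' → i = i' := by
      intro i i' z hz hz'
      by_contra hne
      exact Set.disjoint_left.1 (hUdisj hne) hz hz'
    -- key: uniform gap for each bad quadruple
    have key : ∀ p : Fin k × Fin k × Fin k × Fin k, ∃ δ : ℝ, 0 < δ ∧
        ((p.1 ≠ p.2.1 ∧ p.2.2.1 ≠ p.2.2.2 ∧
          ({p.1, p.2.1} : Set (Fin k)) ≠ {p.2.2.1, p.2.2.2}) →
        ∀ x ∈ U p.1, ∀ y ∈ U p.2.1, ∀ x' ∈ U p.2.2.1, ∀ y' ∈ U p.2.2.2,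
          δ ≤ |dist x y - dist x' y'|) := by
      rintro ⟨i, j, i', j'⟩
      by_cases hcond : i ≠ j ∧ i' ≠ j' ∧ ({i, j} : Set (Fin k)) ≠ {i', j'}
      swap
      · exact ⟨1, one_pos, fun h => absurd h hcond⟩
      obtain ⟨hij, hij', hsets⟩ := hcond
      -- the quadruple product is compact and nonempty
      set K : Set ((X × X) × X × X) := (U i ×ˢ U j) ×ˢ (U i' ×ˢ U j') with hK
      have hKc : IsCompact K :=
        (((hUclopen i).isClosed.isCompact.prod (hUclopen j).isClosed.isCompact).prod
          ((hUclopen i').isClosed.isCompact.prod (hUclopen j').isClosed.isCompact))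
      have hKne : K.Nonempty :=
        ((hUne i).prod (hUne j)).prod ((hUne i').prod (hUne j'))
      set f : (X × X) × X × X → ℝ := fun q => |dist q.1.1 q.1.2 - dist q.2.1 q.2.2| with hf
      have hfc : Continuous f := by fun_prop
      obtain ⟨z, hzK, hzmin⟩ := hKc.exists_isMinOn hKne hfc.continuousOn
      refine ⟨f z, ?_, ?_⟩
      · rcases hzK with ⟨⟨hz1, hz2⟩, hz3, hz4⟩
        have hxy : z.1.1 ≠ z.1.2 := fun h => hij (hsame i j _ hz1 (h ▸ hz2))
        have hxy' : z.2.1 ≠ z.2.2 := fun h => hij' (hsame i' j' _ hz3 (h ▸ hz4))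
        rcases lt_or_eq_of_le (abs_nonneg (dist z.1.1 z.1.2 - dist z.2.1 z.2.2)) with h | h
        · exact h
        · exfalso
          have hd : dist z.1.1 z.1.2 = dist z.2.1 z.2.2 := by
            have := h.symm
            rw [abs_eq_zero, sub_eq_zero] at this
            exact this
          have hpair := hinj _ _ _ _ hxy hxy' hd
          rw [Set.pair_eq_pair_iff] at hpair
          apply hsets
          rcases hpair with ⟨h1, h2⟩ | ⟨h1, h2⟩
          · rw [hsame i i' _ hz1 (h1 ▸ hz3), hsame j j' _ hz2 (h2 ▸ hz4)]
          · rw [hsame i j' _ hz1 (h1 ▸ hz4), hsame j i' _ hz2 (h2 ▸ hz3), Set.pair_comm]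
      · intro _ x hx y hy x' hx' y' hy'
        exact hzmin (⟨⟨hx, hy⟩, hx', hy'⟩ : ((x, y), x', y') ∈ K)
    choose δ hδpos hδ using key
    -- k is positive
    have hk : 0 < k := by
      obtain ⟨x⟩ := ‹Nonempty X›
      have : x ∈ ⋃ i, U i := hUcover ▸ Set.mem_univ x
      obtain ⟨i, _⟩ := Set.mem_iUnion.1 this
      exact i.pos
    have : Nonempty (Fin k) := Fin.pos_iff_nonempty.1 hk
    have hne : (Finset.univ : Finset (Fin k × Fin k × Fin k × Fin k)).Nonempty :=
      Finset.univ_nonempty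
    set δ₀ := Finset.univ.inf' hne δ with hδ₀
    have hδ₀pos : 0 < δ₀ := by
      rw [hδ₀, Finset.lt_inf'_iff]
      exact fun p _ => hδpos p
    obtain ⟨m, hm⟩ := exists_nat_one_div_lt hδ₀pos
    refine ⟨m + 1, Nat.succ_pos m, k, U, hUne, hUclopen, hUdiam, hUcover, hUdisj, ?_⟩
    intro i j i' j' hij hij' hsets x hx y hy x' hx' y' hy'
    have h1 : δ₀ ≤ δ (i, j, i', j') := Finset.inf'_le _ (Finset.mem_univ _)
    have h2 := hδ (i, j, i', j') ⟨hij, hij', hsets⟩ x hx y hy x' hx' y' hy'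
    have : (1 : ℝ) / ((m : ℝ) + 1) < δ₀ := hm
    push_cast
    linarith
  · -- backward direction
    intro h x y x' y' hxy hx'y' hd
    have hdpos : 0 < dist x y := dist_pos.2 hxy
    -- for any small enough 1/N, one of the two matching branches holds
    have claim : ∀ N : ℕ, 0 < N → (1 : ℝ) / N < dist x y →
        (dist x x' < 1 / N ∧ dist y y' < 1 / N) ∨
        (dist x y' < 1 / N ∧ dist y x' < 1 / N) := by
      intro N hN hNd
      obtain ⟨M, hM, k, U, hUne, hUclopen, hUdiam, hUcover, hUdisj, hgap⟩ := h N hN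
      have hsame : ∀ (i i' : Fin k) (z : X), z ∈ U i → z ∈ U i' → i = i' := by
        intro i i' z hz hz'
        by_contra hne
        exact Set.disjoint_left.1 (hUdisj hne) hz hz'
      have hmem : ∀ z : X, ∃ i, z ∈ U i := fun z =>
        Set.mem_iUnion.1 (hUcover ▸ Set.mem_univ z)
      obtain ⟨i, hi⟩ := hmem x
      obtain ⟨j, hj⟩ := hmem y
      obtain ⟨i', hi'⟩ := hmem x'
      obtain ⟨j', hj'⟩ := hmem y'
      have hbd : ∀ l : Fin k, Bornology.IsBounded (U l) :=
        fun l => (hUclopen l).isClosed.isCompact.isBounded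
      have hsmall : ∀ (l : Fin k) (a b : X), a ∈ U l → b ∈ U l → dist a b < 1 / N :=
        fun l a b ha hb => lt_of_le_of_lt (Metric.dist_le_diam_of_mem (hbd l) ha hb) (hUdiam l)
      have hij : i ≠ j := fun hcontra => by
        have := hsmall i x y hi (hcontra ▸ hj)
        linarith
      have hij' : i' ≠ j' := fun hcontra => by
        have := hsmall i' x' y' hi' (hcontra ▸ hj')
        rw [← hd] at this
        linarith
      have hsets : ({i, j} : Set (Fin k)) = {i', j'} := by
        by_contra hne
        have := hgap i j i' j' hij hij' hne x hi y hj x' hi' y' hj'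
        rw [hd, sub_self, abs_zero] at this
        have : (0:ℝ) < 1 / (M:ℝ) := by positivity
        linarith
      rw [Set.pair_eq_pair_iff] at hsets
      rcases hsets with ⟨h1, h2⟩ | ⟨h1, h2⟩
      · exact Or.inl ⟨hsmall i x x' hi (h1 ▸ hi'), hsmall j y y' hj (h2 ▸ hj')⟩
      · exact Or.inr ⟨hsmall i x y' hi (h1 ▸ hj'), hsmall j y x' hj (h2 ▸ hi')⟩
    -- now conclude
    rw [Set.pair_eq_pair_iff]
    by_contra hne
    push_neg at hne
    obtain ⟨hA, hB⟩ := hne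
    -- from ¬(x = x' ∧ y = y') get a positive distance obstructing branch A
    have hA' : ∃ ε₁ > 0, ∀ r : ℝ, dist x x' < r → dist y y' < r → ε₁ ≤ r := by
      by_cases hxx : x = x'
      · have hyy : y ≠ y' := fun hc => hA hxx hc
        exact ⟨dist y y', dist_pos.2 hyy, fun r _ h2 => le_of_lt h2⟩
      · exact ⟨dist x x', dist_pos.2 hxx, fun r h1 _ => le_of_lt h1⟩
    have hB' : ∃ ε₂ > 0, ∀ r : ℝ, dist x y' < r → dist y x' < r → ε₂ ≤ r := by
      by_cases hxy' : x = y'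
      · have hyx : y ≠ x' := fun hc => hB hxy' hc
        exact ⟨dist y x', dist_pos.2 hyx, fun r _ h2 => le_of_lt h2⟩
      · exact ⟨dist x y', dist_pos.2 hxy', fun r h1 _ => le_of_lt h1⟩
    obtain ⟨ε₁, hε₁, hAr⟩ := hA'
    obtain ⟨ε₂, hε₂, hBr⟩ := hB'
    have hmin : 0 < min (dist x y) (min ε₁ ε₂) := by
      apply lt_min hdpos (lt_min hε₁ hε₂)
    obtain ⟨m, hm⟩ := exists_nat_one_div_lt hmin
    set N := m + 1 with hNdef
    have hNpos : 0 < N := Nat.succ_pos m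
    have hcast : ((N : ℝ)) = (m : ℝ) + 1 := by rw [hNdef, Nat.cast_add, Nat.cast_one]
    have hlt : (1 : ℝ) / N < min (dist x y) (min ε₁ ε₂) := by rw [hcast]; exact hm
    have h1 : (1 : ℝ) / N < dist x y := lt_of_lt_of_le hlt (min_le_left _ _)
    have h2 : (1 : ℝ) / N < ε₁ :=
      lt_of_lt_of_le hlt ((min_le_right _ _).trans (min_le_left _ _))
    have h3 : (1 : ℝ) / N < ε₂ :=
      lt_of_lt_of_le hlt ((min_le_right _ _).trans (min_le_right _ _))
    rcases claim N hNpos h1 with ⟨ha1, ha2⟩ | ⟨hb1, hb2⟩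
    · exact absurd (hAr _ ha1 ha2) (not_le.2 h2)
    · exact absurd (hBr _ hb1 hb2) (not_le.2 h3)
end

section
/- Fix a nonnegative integer n and positive integers N and M. Let 𝓜^N_M be the set of isometry classes in the Gromov–Hausdorff space of nonempty compact metric spaces (X, d) admitting a finite open cover 𝓤 = {U_1, …, U_k} such that every U_i has diameter less than 1/N, and such that for every (n+2)-element subfamily 𝓥 ⊆ 𝓤 and every U ∈ 𝓥, the infimum of d(x, y) over x ∈ U and y ∈ ⋂ (𝓥 \ {U}) is greater than 1/M (in particular this holds vacuously when the intersection is empty only if the stated infimum condition, interpreted as an infimum over an empty set being +∞, is satisfied). Then 𝓜^N_M is an open subset of the Gromov–Hausdorff space. -/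
open scoped ENNReal

open Metric Set GromovHausdorff EMetric

/-- `HasFineCover X n N M` means `X` admits a finite open cover `U_1, …, U_k` of mesh `< 1/N`
such that for every `(n+2)`-element subfamily `𝓥` of the cover and every member `U` of `𝓥`,
the infimum (in `ℝ≥0∞`, so `+∞` over an empty range) of the distances between points of `U`
and points of the intersection of the other members of `𝓥` exceeds `1/M`. -/
def HasFineCover (X : Type*) [MetricSpace X] (n N M : ℕ) : Prop :=
  ∃ (k : ℕ) (U : Fin k → Set X),
    (∀ i, IsOpen (U i)) ∧ (⋃ i, U i) = Set.univ ∧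
    (∀ i, Metric.diam (U i) < 1 / (N : ℝ)) ∧
    ∀ s : Finset (Fin k), s.card = n + 2 → ∀ i ∈ s,
      (M : ℝ≥0∞)⁻¹ <
        ⨅ (x : X) (_ : x ∈ U i) (y : X) (_ : y ∈ ⋂ j ∈ s.erase i, U j), edist x y

lemma aux_thickening_iInter {X : Type*} [MetricSpace X] [CompactSpace X] {ι : Type*}
    (A : ι → Set X) (t : Finset ι) {ε' : ℝ} (hε' : 0 < ε') :
    ∃ ε > 0, (⋂ j ∈ t, Metric.thickening ε (A j)) ⊆
      Metric.thickening ε' (⋂ j ∈ t, closure (A j)) := by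
  by_contra hcon
  push_neg at hcon
  set D := ⋂ j ∈ t, closure (A j) with hD
  set F : ℕ → Set X := fun m =>
    (⋂ j ∈ t, Metric.cthickening (1/(m+1)) (A j)) \ Metric.thickening ε' D with hF
  have Fclosed : ∀ m, IsClosed (F m) := fun m =>
    (isClosed_biInter fun j _ => Metric.isClosed_cthickening).sdiff Metric.isOpen_thickening
  have Fsub : ∀ m, F (m+1) ⊆ F m := by
    intro m
    apply diff_subset_diff_left
    refine iInter₂_mono fun j _ => Metric.cthickening_mono ?_ _
    apply one_div_le_one_div_of_le <;> push_cast <;> linarith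
  have Fne : ∀ m, (F m).Nonempty := by
    intro m
    have hpos : (0:ℝ) < 1/(m+1) := by positivity
    obtain ⟨x, hx1, hx2⟩ := Set.not_subset.1 (hcon (1/(m+1)) hpos)
    refine ⟨x, ?_, hx2⟩
    simp only [Set.mem_iInter] at hx1 ⊢
    exact fun j hj => Metric.thickening_subset_cthickening _ _ (hx1 j hj)
  obtain ⟨p, hp⟩ := IsCompact.nonempty_iInter_of_sequence_nonempty_isCompact_isClosed F
    Fsub Fne (Fclosed 0).isCompact Fclosed
  simp only [Set.mem_iInter, Set.mem_diff] at hp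
  have hpD : p ∈ D := by
    rw [hD]
    refine Set.mem_iInter₂.2 fun j hj => ?_
    rw [EMetric.mem_closure_iff_infEdist_zero]
    refine le_antisymm ?_ zero_le
    have hle : ∀ m : ℕ, EMetric.infEdist p (A j) ≤ ENNReal.ofReal (1/(m+1)) := by
      intro m
      have := (hp m).1
      rw [Set.mem_iInter₂] at this
      exact (Metric.mem_cthickening_iff).1 (this j hj)
    have htend : Filter.Tendsto (fun m : ℕ => ENNReal.ofReal (1/(m+1))) Filter.atTop (nhds 0) := by
      have : Filter.Tendsto (fun m : ℕ => (1:ℝ)/(m+1)) Filter.atTop (nhds 0) :=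
        tendsto_one_div_add_atTop_nhds_zero_nat
      simpa using (ENNReal.tendsto_ofReal this)
    exact ge_of_tendsto' htend hle
  exact (hp 0).2 (Metric.self_subset_thickening hε' _ hpD)

/-- For a fixed nonnegative integer `n` and positive integers `N`, `M`, the set `𝓜^N_M` of
isometry classes of nonempty compact metric spaces admitting a fine cover as above is open in the
Gromov–Hausdorff space. -/
theorem isOpen_hasFineCover (n N M : ℕ) (hN : 0 < N) (hM : 0 < M) :
    IsOpen {p : GromovHausdorff.GHSpace | HasFineCover p.Rep n N M} := by
  rw [Metric.isOpen_iff]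
  rintro p hp
  obtain ⟨k, U, Uopen, Ucov, Udiam, Usep⟩ := hp
  -- Fin k is nonempty
  have hx₀ : (Classical.arbitrary p.Rep) ∈ ⋃ i, U i := by rw [Ucov]; trivial
  obtain ⟨i₀, -⟩ := Set.mem_iUnion.1 hx₀
  have hne1 : Nonempty (Fin k) := ⟨i₀⟩
  have hne2 : Nonempty (Finset (Fin k) × Fin k) := ⟨(∅, i₀)⟩
  -- shrink the cover
  obtain ⟨W, Wcov, Wopen, Wcl⟩ :=
    exists_iUnion_eq_closure_subset Uopen (fun x => Set.toFinite _) Ucov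
  have WsubU : ∀ i, W i ⊆ U i := fun i => subset_closure.trans (Wcl i)
  -- separation constants
  set F : Finset (Fin k) × Fin k → ℝ≥0∞ := fun si =>
    if si.1.card = n+2 ∧ si.2 ∈ si.1 then
      ⨅ (x : p.Rep) (_ : x ∈ U si.2) (y : p.Rep) (_ : y ∈ ⋂ j ∈ si.1.erase si.2, U j), edist x y
    else ⊤ with hFdef
  have hMtop : (M : ℝ≥0∞)⁻¹ < ⊤ := by
    simp [ENNReal.inv_lt_top, Nat.cast_pos.2 hM]
  have hm0 : (M:ℝ≥0∞)⁻¹ < Finset.univ.inf F := by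
    rw [Finset.lt_inf_iff hMtop]
    intro si _
    by_cases h : si.1.card = n+2 ∧ si.2 ∈ si.1
    · simpa [hFdef, h] using Usep si.1 h.1 si.2 h.2
    · simpa [hFdef, h] using hMtop
  have hm0' : (M:ℝ≥0∞)⁻¹ < min (Finset.univ.inf F) ((M:ℝ≥0∞)⁻¹ + 1) :=
    lt_min hm0 (ENNReal.lt_add_right hMtop.ne one_ne_zero)
  obtain ⟨c', hc'1, hc'2⟩ := exists_between hm0'
  obtain ⟨c, hcc'1, hcc'2⟩ := exists_between hc'2
  have hctop : c ≠ ⊤ :=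
    ((hcc'2.trans_le (min_le_right _ _)).trans
      (ENNReal.add_lt_top.2 ⟨hMtop, ENNReal.one_lt_top⟩)).ne
  have hc'top : c' ≠ ⊤ := (hcc'1.trans_le le_top).ne
  set τ : ℝ := (c.toReal - c'.toReal)/2 with hτdef
  have hτpos : 0 < τ := by
    have : c'.toReal < c.toReal := ENNReal.toReal_lt_toReal hc'top hctop |>.2 hcc'1
    simp only [hτdef]; linarith
  -- Lemma A choices
  choose εA hεA using fun (si : Finset (Fin k) × Fin k) =>
      aux_thickening_iInter W (si.1.erase si.2) hτpos
  set εAmin : ℝ := Finset.univ.inf' Finset.univ_nonempty εA with hεAmin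
  have hεAminpos : 0 < εAmin := by
    rw [hεAmin, Finset.lt_inf'_iff]
    exact fun si _ => (hεA si).1
  have hεAminle : ∀ si, εAmin ≤ εA si := fun si => Finset.inf'_le _ (Finset.mem_univ si)
  -- diameter slack
  set δd : ℝ := Finset.univ.inf' Finset.univ_nonempty (fun i => 1/(N:ℝ) - Metric.diam (U i))
    with hδd
  have hδdpos : 0 < δd := by
    rw [hδd, Finset.lt_inf'_iff]
    intro i _
    have := Udiam i
    linarith
  have hδdle : ∀ i, δd ≤ 1/(N:ℝ) - Metric.diam (U i) := fun i =>
    Finset.inf'_le _ (Finset.mem_univ i)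
  -- the radius
  set η : ℝ := (min (min τ εAmin) δd) / 4 with hη
  have hηpos : 0 < η := by
    have := lt_min (lt_min hτpos hεAminpos) hδdpos
    rw [hη]; linarith
  have hη2τ : 2*η ≤ τ := by
    have h1 : min (min τ εAmin) δd ≤ τ := (min_le_left _ _).trans (min_le_left _ _)
    rw [hη]; linarith
  have hη2εA : ∀ si, 2*η ≤ εA si := by
    intro si
    have h1 : min (min τ εAmin) δd ≤ εAmin := (min_le_left _ _).trans (min_le_right _ _)
    have := hεAminle si
    rw [hη]; linarith
  have hη2δd : ∀ i, 2*η < 1/(N:ℝ) - Metric.diam (U i) := by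
    intro i
    have h1 : min (min τ εAmin) δd ≤ δd := min_le_right _ _
    have := hδdle i
    rw [hη]; linarith
  refine ⟨η, hηpos, ?_⟩
  rintro q hq
  rw [Metric.mem_ball] at hq
  -- the coupling
  set Z := OptimalGHCoupling p.Rep q.Rep with hZ
  set Φ : p.Rep → Z := optimalGHInjl p.Rep q.Rep with hΦdef
  set Ψ : q.Rep → Z := optimalGHInjr p.Rep q.Rep with hΨdef
  have hΦ : Isometry Φ := isometry_optimalGHInjl p.Rep q.Rep
  have hΨ : Isometry Ψ := isometry_optimalGHInjr p.Rep q.Rep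
  have hbdd : ∀ s : Set Z, Bornology.IsBounded s := fun s =>
    (isCompact_univ.isBounded).subset (subset_univ _)
  have hHtop : hausdorffEdist (range Φ) (range Ψ) ≠ ⊤ :=
    Metric.hausdorffEdist_ne_top_of_nonempty_of_bounded (range_nonempty _) (range_nonempty _)
      (hbdd _) (hbdd _)
  have hHd : hausdorffDist (range Φ) (range Ψ) < η := by
    rw [hausdorffDist_optimal, ← dist_ghDist]
    rw [dist_comm] at hq
    exact hq
  -- the new cover
  set V : Fin k → Set q.Rep := fun i => Ψ ⁻¹' (Metric.thickening η (Φ '' W i)) with hVdef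
  refine ⟨k, V, fun i => Metric.isOpen_thickening.preimage hΨ.continuous, ?_, ?_, ?_⟩
  · -- covering
    rw [Set.eq_univ_iff_forall]
    intro y
    obtain ⟨z, hz, hdz⟩ := Metric.exists_dist_lt_of_hausdorffDist_lt' (Set.mem_range_self y) hHd hHtop
    obtain ⟨x1, rfl⟩ := hz
    have hx1 : x1 ∈ ⋃ i, W i := by rw [Wcov]; trivial
    obtain ⟨i, hi⟩ := Set.mem_iUnion.1 hx1
    refine Set.mem_iUnion.2 ⟨i, ?_⟩
    rw [hVdef]
    refine Set.mem_preimage.2 (Metric.mem_thickening_iff.2 ⟨Φ x1, ⟨x1, hi, rfl⟩, ?_⟩)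
    rw [dist_comm]; exact hdz
  · -- diameter
    intro i
    have h1 : Metric.diam (V i) = Metric.diam (Ψ '' V i) := (hΨ.diam_image _).symm
    have h2 : Ψ '' V i ⊆ Metric.thickening η (Φ '' W i) := Set.image_preimage_subset _ _
    have h3 : Metric.diam (Ψ '' V i) ≤ Metric.diam (Metric.thickening η (Φ '' W i)) :=
      Metric.diam_mono h2 (hbdd _)
    have h4 : Metric.diam (Metric.thickening η (Φ '' W i)) ≤ Metric.diam (Φ '' W i) + 2*η :=
      Metric.diam_thickening_le _ hηpos.le
    have h5 : Metric.diam (Φ '' W i) = Metric.diam (W i) := hΦ.diam_image _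
    have h6 : Metric.diam (W i) ≤ Metric.diam (U i) := by
      refine Metric.diam_mono (WsubU i) ?_
      exact (isCompact_univ.isBounded).subset (subset_univ _)
    have := hη2δd i
    rw [h1]
    calc Metric.diam (Ψ '' V i) ≤ Metric.diam (Φ '' W i) + 2*η := h3.trans h4
    _ = Metric.diam (W i) + 2*η := by rw [h5]
    _ ≤ Metric.diam (U i) + 2*η := by linarith
    _ < 1/(N:ℝ) := by linarith
  · -- separation
    intro s hs i hi
    refine hc'1.trans_le ?_
    refine le_iInf fun x' => le_iInf fun hx' => le_iInf fun y' => le_iInf fun hy' => ?_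
    -- unpack x'
    rw [hVdef, Set.mem_preimage, Metric.mem_thickening_iff] at hx'
    obtain ⟨_, ⟨x, hxW, rfl⟩, hdx⟩ := hx'
    -- a point near y' in X
    obtain ⟨z0, hz0, hdy⟩ := Metric.exists_dist_lt_of_hausdorffDist_lt' (Set.mem_range_self y') hHd hHtop
    obtain ⟨x0, rfl⟩ := hz0
    -- x0 is in the (2η)-thickening of each W j, j ∈ s.erase i
    have hx0 : x0 ∈ ⋂ j ∈ s.erase i, Metric.thickening (εA (s, i)) (W j) := by
      refine Set.mem_iInter₂.2 fun j hj => ?_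
      have hy'j : Ψ y' ∈ Metric.thickening η (Φ '' W j) := Set.mem_iInter₂.1 hy' j hj
      rw [Metric.mem_thickening_iff_infEdist_lt] at hy'j ⊢
      have step : infEdist (Φ x0) (Φ '' W j) ≤ edist (Φ x0) (Ψ y') + infEdist (Ψ y') (Φ '' W j) :=
        infEdist_le_edist_add_infEdist
      have hlt : edist (Φ x0) (Ψ y') < ENNReal.ofReal η := by
        rw [edist_dist]
        exact (ENNReal.ofReal_lt_ofReal_iff hηpos).2 hdy
      have : infEdist (Φ x0) (Φ '' W j) < ENNReal.ofReal η + ENNReal.ofReal η :=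
        step.trans_lt (ENNReal.add_lt_add hlt hy'j)
      rw [show infEdist (Φ x0) (Φ '' W j) = infEDist x0 (W j) from infEdist_image hΦ] at this
      refine this.trans_le ?_
      rw [← ENNReal.ofReal_add hηpos.le hηpos.le]
      exact ENNReal.ofReal_le_ofReal (by have := hη2εA (s, i); linarith)
    have hx0' := (hεA (s, i)).2 hx0
    obtain ⟨z, hzcl, hdz⟩ := Metric.mem_thickening_iff.1 hx0'
    have hzU : z ∈ ⋂ j ∈ s.erase i, U j :=
      Set.mem_iInter₂.2 fun j hj => Wcl j (Set.mem_iInter₂.1 hzcl j hj)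
    -- lower bound on dist x z
    have hFeq : F (s, i) = ⨅ (x : p.Rep) (_ : x ∈ U i) (y : p.Rep)
        (_ : y ∈ ⋂ j ∈ s.erase i, U j), edist x y :=
      if_pos (⟨hs, hi⟩ : (s, i).1.card = n + 2 ∧ (s, i).2 ∈ (s, i).1)
    have hF : (⨅ (x : p.Rep) (_ : x ∈ U i) (y : p.Rep)
        (_ : y ∈ ⋂ j ∈ s.erase i, U j), edist x y) ≤ edist x z := by
      refine iInf_le_of_le x ?_
      refine iInf_le_of_le (WsubU i hxW) ?_
      refine iInf_le_of_le z ?_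
      exact iInf_le _ hzU
    have hcF : c ≤ edist x z :=
      (((hcc'2.trans_le (min_le_left _ _)).le.trans
        (Finset.inf_le (Finset.mem_univ (s, i)))).trans hFeq.le).trans hF
    have hcR : c.toReal ≤ dist x z := by
      rw [edist_dist] at hcF
      exact (ENNReal.le_ofReal_iff_toReal_le hctop dist_nonneg).1 hcF
    -- triangle inequality
    have htri : dist x z ≤ η + dist x' y' + η + τ := by
      have e1 : dist x z = dist (Φ x) (Φ z) := (hΦ.dist_eq _ _).symm
      have e2 : dist x' y' = dist (Ψ x') (Ψ y') := (hΨ.dist_eq _ _).symm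
      have t1 : dist (Φ x) (Φ z) ≤ dist (Φ x) (Ψ x') + dist (Ψ x') (Ψ y')
          + dist (Ψ y') (Φ x0) + dist (Φ x0) (Φ z) := by
        calc dist (Φ x) (Φ z) ≤ dist (Φ x) (Φ x0) + dist (Φ x0) (Φ z) := dist_triangle _ _ _
        _ ≤ (dist (Φ x) (Ψ x') + dist (Ψ x') (Φ x0)) + dist (Φ x0) (Φ z) := by
            have := dist_triangle (Φ x) (Ψ x') (Φ x0); linarith
        _ ≤ (dist (Φ x) (Ψ x') + (dist (Ψ x') (Ψ y') + dist (Ψ y') (Φ x0))) + dist (Φ x0) (Φ z) := by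
            have := dist_triangle (Ψ x') (Ψ y') (Φ x0); linarith
        _ = _ := by ring
      have b1 : dist (Φ x) (Ψ x') < η := by rw [dist_comm]; exact hdx
      have b2 : dist (Ψ y') (Φ x0) < η := by rw [dist_comm]; exact hdy
      have b3 : dist (Φ x0) (Φ z) < τ := by rw [hΦ.dist_eq]; exact hdz
      rw [e1, e2]
      linarith
    -- conclude
    have hc'R : c'.toReal ≤ dist x' y' := by
      have hττ : 2*τ = c.toReal - c'.toReal := by rw [hτdef]; ring
      have := hη2τ
      linarith
    calc c' = ENNReal.ofReal c'.toReal := (ENNReal.ofReal_toReal hc'top).symm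
    _ ≤ ENNReal.ofReal (dist x' y') := ENNReal.ofReal_le_ofReal hc'R
    _ = edist x' y' := (edist_dist _ _).symm
end

section
/- Let (X, d) be a metric space such that for every natural number n there exist n + 1 distinct points x_0, x_1, …, x_n in X and a real number r > 0 with d(x_i, x_j) = r for all i ≠ j (that is, X contains regular n-simplices for every n). Then for every natural number m there is no loose embedding of X into Euclidean space ℝ^m; in particular, X is not loosely embeddable. -/
open scoped RealInnerProductSpace

/-- An equidistant family of `n + 1` points in Euclidean space gives `n` linearly
independent difference vectors. -/
lemma equidistant_li {m n : ℕ} {s : ℝ} (hs : 0 < s)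
    (y : Fin (n + 1) → EuclideanSpace ℝ (Fin m))
    (hy : ∀ i j, i ≠ j → dist (y i) (y j) = s) :
    LinearIndependent ℝ (fun i : Fin n => y i.succ - y 0) := by
  have hnorm : ∀ i : Fin n, ‖y i.succ - y 0‖ = s := fun i => by
    rw [← dist_eq_norm]; exact hy _ _ (Fin.succ_ne_zero i)
  have hinner : ∀ i j : Fin n,
      ⟪y i.succ - y 0, y j.succ - y 0⟫ = if i = j then s ^ 2 else s ^ 2 / 2 := by
    intro i j
    by_cases hij : i = j
    · subst hij
      rw [real_inner_self_eq_norm_sq, hnorm i]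
      simp
    · have hsub : ‖(y i.succ - y 0) - (y j.succ - y 0)‖ = s := by
        have : (y i.succ - y 0) - (y j.succ - y 0) = y i.succ - y j.succ := by abel
        rw [this, ← dist_eq_norm]
        exact hy _ _ (by simpa [Fin.succ_inj] using hij)
      have hkey := @norm_sub_sq_real (EuclideanSpace ℝ (Fin m)) _ _
        (y i.succ - y 0) (y j.succ - y 0)
      rw [hsub, hnorm i, hnorm j] at hkey
      simp only [hij, if_false]
      linarith
  rw [Fintype.linearIndependent_iff]
  intro c hc
  set C := ∑ i, c i with hC
  have key : ∀ j : Fin n, c j = -C := by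
    intro j
    have h0 : ⟪y j.succ - y 0, ∑ i, c i • (y i.succ - y 0)⟫ = 0 := by
      rw [hc]; exact inner_zero_right _
    rw [inner_sum] at h0
    simp only [real_inner_smul_right, hinner] at h0
    have : ∑ i, c i * (if j = i then s ^ 2 else s ^ 2 / 2)
        = (s ^ 2 / 2) * (c j + C) := by
      have : ∀ i : Fin n, c i * (if j = i then s ^ 2 else s ^ 2 / 2)
          = c i * (s ^ 2 / 2) + (if j = i then c i * (s ^ 2 / 2) else 0) := by
        intro i; by_cases hji : j = i <;> simp [hji] <;> ring
      rw [Finset.sum_congr rfl fun i _ => this i, Finset.sum_add_distrib,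
        Finset.sum_ite_eq (Finset.univ) j (fun i => c i * (s ^ 2 / 2))]
      simp only [Finset.mem_univ, if_true]
      rw [hC, ← Finset.sum_mul]
      ring
    rw [this] at h0
    have hs2 : s ^ 2 / 2 ≠ 0 := by positivity
    have := mul_eq_zero.mp h0
    rcases this with h' | h'
    · exact absurd h' hs2
    · linarith
  have hC0 : C = 0 := by
    have : C = ∑ j : Fin n, (-C) := by
      rw [hC]; exact Finset.sum_congr rfl fun j _ => key j
    simp only [Finset.sum_const, Finset.card_univ, Fintype.card_fin, nsmul_eq_mul,
      mul_neg] at this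
    have h1 : ((n : ℝ) + 1) * C = 0 := by linear_combination this
    rcases mul_eq_zero.mp h1 with h' | h'
    · exact absurd h' (by positivity)
    · exact h'
  intro j
  rw [key j, hC0, neg_zero]

/-- A metric space containing, for every `n`, a regular `n`-simplex (i.e. `n + 1` distinct
equidistant points) admits no loose embedding into any Euclidean space `ℝ^m`; in particular it
is not loosely embeddable. -/
theorem not_looselyEmbeddable_of_forall_regular_simplex {X : Type*} [MetricSpace X]
    (h : ∀ n : ℕ, ∃ (x : Fin (n + 1) → X) (r : ℝ), 0 < r ∧ Function.Injective x ∧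
      ∀ i j, i ≠ j → dist (x i) (x j) = r) :
    ∀ m : ℕ, ¬ ∃ f : X → EuclideanSpace ℝ (Fin m), IsLooseEmbedding f := by
  intro m ⟨f, hfinj, _, hfd⟩
  obtain ⟨x, r, hr, hxinj, hx⟩ := h (m + 1)
  set y : Fin (m + 2) → EuclideanSpace ℝ (Fin m) := fun i => f (x i) with hy
  have h01 : (0 : Fin (m + 2)) ≠ 1 := by simp [Fin.ext_iff]
  set s : ℝ := dist (y 0) (y 1) with hs
  have hspos : 0 < s := by
    rw [hs, dist_pos]
    exact fun he => h01 (hxinj (hfinj he))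
  have hyd : ∀ i j, i ≠ j → dist (y i) (y j) = s := by
    intro i j hij
    rw [hs, hy]
    exact (hfd (x i) (x j) (x 0) (x 1)).mpr (by rw [hx i j hij, hx 0 1 h01])
  have hli := equidistant_li hspos y hyd
  have hcard := hli.fintype_card_le_finrank
  rw [Fintype.card_fin, finrank_euclideanSpace_fin] at hcard
  omega
end
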